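/- arXiv:1407.5649 — 3 statements merged into one kernel-verified Lean document; each statement's English description precedes it below -/
import Mathlib

section
/- Suppose φ is the homothety with center m ∈ Δ(Ω) and ratio λ ∈ [0,1). Then the greedy strategy is optimal when the initial distribution is the invariant distribution m: every bounded function V : Δ(Ω) → ℝ satisfying the dynamic programming equation satisfies V(m) = γ(m), where γ is the greedy payoff. -/
open MeasureTheory Set

noncomputable section

variable {Ω : Type*}

/-- The investment region `I = {p ∈ Δ(Ω) : ⟨p,r⟩ ≥ 0}`. -/
def invest [Fintype Ω] (r : Ω → ℝ) : Set (Ω → ℝ) :=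
  {p | p ∈ stdSimplex ℝ Ω ∧ 0 ≤ ∑ ω, p ω * r ω}

/-- The set `S(p)` of splittings at `p`: Borel probability measures on `ℝ^Ω` carried by the
simplex `Δ(Ω)` with barycenter `p`. -/
def Splittings [Fintype Ω] (p : Ω → ℝ) : Set (Measure (Ω → ℝ)) :=
  {μ | IsProbabilityMeasure μ ∧ μ (stdSimplex ℝ Ω) = 1 ∧ ∫ q, q ∂μ = p}

/-- The payoff `(1−δ)·μ(I) + δ·∫ V(φ(q)) dμ(q)` appearing in the dynamic programming
equation. -/
def dppPayoff [Fintype Ω] (r : Ω → ℝ) (δ : ℝ) (φ : (Ω → ℝ) → Ω → ℝ)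
    (V : (Ω → ℝ) → ℝ) (μ : Measure (Ω → ℝ)) : ℝ :=
  (1 - δ) * (μ (invest r)).toReal + δ * ∫ q in stdSimplex ℝ Ω, V (φ q) ∂μ

/-- `V` satisfies the dynamic programming equation
`V(p) = sup_{μ ∈ S(p)} [(1−δ)·μ(I) + δ·∫ V(φ(q)) dμ(q)]` on the simplex. -/
def SatisfiesDPP [Fintype Ω] (r : Ω → ℝ) (δ : ℝ) (φ : (Ω → ℝ) → Ω → ℝ)
    (V : (Ω → ℝ) → ℝ) : Prop :=
  ∀ p ∈ stdSimplex ℝ Ω, V p = sSup (dppPayoff r δ φ V '' Splittings p)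

/-- `L_k(p) = Σ_{ω∈Ω⁺} p(ω)r(ω) + Σ_{i≤k} p(ω_i)r(ω_i)`, where `ω_{i+1} = e i` enumerates
`Ω⁻` by decreasing payoff. -/
def Lfun [Fintype Ω] (r : Ω → ℝ) {K : ℕ} (e : Fin K → Ω) (k : ℕ) (p : Ω → ℝ) : ℝ :=
  ∑ ω ∈ Finset.univ.filter (fun ω => 0 ≤ r ω), p ω * r ω
    + ∑ i ∈ Finset.univ.filter (fun i : Fin K => (i : ℕ) + 1 ≤ k), p (e i) * r (e i)

/-- `k*(p) = min {k ≥ 1 : L_k(p) ≤ 0}`. -/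
def kstar [Fintype Ω] (r : Ω → ℝ) {K : ℕ} (e : Fin K → Ω) (p : Ω → ℝ) : ℕ :=
  sInf {k : ℕ | 1 ≤ k ∧ Lfun r e k p ≤ 0}

/-- The optimal solution `π*(p)` of the program (LP'): it agrees with `p` on `Ω⁺` and on
`ω_i` for `i < k*(p)`, vanishes on `ω_i` for `i > k*(p)`, and equals
`−L_{k*(p)−1}(p)/r(ω_{k*(p)})` at `ω_{k*(p)}`. -/
def piStar [Fintype Ω] [DecidableEq Ω] (r : Ω → ℝ) {K : ℕ} (e : Fin K → Ω) (p : Ω → ℝ) :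
    Ω → ℝ :=
  (fun ω => if 0 ≤ r ω then p ω else 0)
    + ∑ i : Fin K,
        (if (i : ℕ) + 1 < kstar r e p then p (e i)
         else if (i : ℕ) + 1 = kstar r e p then -(Lfun r e (kstar r e p - 1) p) / r (e i)
         else 0) • (Pi.single (e i) 1 : Ω → ℝ)

/-- The weight `a_I` of the greedy splitting: the total mass of `π*(p)`. -/
def aI [Fintype Ω] [DecidableEq Ω] (r : Ω → ℝ) {K : ℕ} (e : Fin K → Ω) (p : Ω → ℝ) : ℝ :=
  ∑ ω, piStar r e p ω

/-- The posterior `q_I` of the greedy splitting: the normalization of `π*(p)`. -/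
def qI [Fintype Ω] [DecidableEq Ω] (r : Ω → ℝ) {K : ℕ} (e : Fin K → Ω) (p : Ω → ℝ) :
    Ω → ℝ :=
  (aI r e p)⁻¹ • piStar r e p

/-- The posterior `q_J` of the greedy splitting: the normalization of `p − π*(p)`. -/
def qJ [Fintype Ω] [DecidableEq Ω] (r : Ω → ℝ) {K : ℕ} (e : Fin K → Ω) (p : Ω → ℝ) :
    Ω → ℝ :=
  (1 - aI r e p)⁻¹ • (p - piStar r e p)
set_option linter.unusedSectionVars false
namespace RSV

variable [Fintype Ω] [DecidableEq Ω] {K : ℕ}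

/-- inner product `⟨p, y⟩ = ∑ p ω * y ω`. -/
def inr (y p : Ω → ℝ) : ℝ := ∑ ω, p ω * y ω

lemma sum_split (r : Ω → ℝ) (e : Fin K → Ω) (he_inj : Function.Injective e)
    (he_range : ∀ ω, r ω < 0 ↔ ω ∈ Set.range e) (f : Ω → ℝ) :
    ∑ ω, f ω = ∑ ω ∈ Finset.univ.filter (fun ω => 0 ≤ r ω), f ω + ∑ i : Fin K, f (e i) := by
  rw [← Finset.sum_filter_add_sum_filter_not Finset.univ (fun ω => 0 ≤ r ω) f]
  congr 1
  refine (Finset.sum_bij (fun (i : Fin K) _ => e i) ?_ ?_ ?_ ?_).symm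
  · intro i _
    simp only [Finset.mem_filter, Finset.mem_univ, true_and, not_le]
    exact (he_range (e i)).2 ⟨i, rfl⟩
  · intro i _ i' _ h; exact he_inj h
  · intro ω hω
    simp only [Finset.mem_filter, Finset.mem_univ, true_and, not_le] at hω
    obtain ⟨i, rfl⟩ := (he_range ω).1 hω
    exact ⟨i, Finset.mem_univ i, rfl⟩
  · intro i _; rfl

lemma Lfun_K (r : Ω → ℝ) (e : Fin K → Ω) (he_inj : Function.Injective e)
    (he_range : ∀ ω, r ω < 0 ↔ ω ∈ Set.range e) (p : Ω → ℝ) :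
    Lfun r e K p = ∑ ω, p ω * r ω := by
  rw [sum_split r e he_inj he_range (fun ω => p ω * r ω)]
  unfold Lfun
  congr 1
  refine Finset.sum_congr ?_ fun _ _ => rfl
  ext i
  simp [Nat.succ_le_of_lt i.isLt]

lemma Lfun_succ (r : Ω → ℝ) (e : Fin K → Ω) (p : Ω → ℝ) (j : Fin K) :
    Lfun r e ((j : ℕ) + 1) p = Lfun r e j p + p (e j) * r (e j) := by
  unfold Lfun
  have h : (Finset.univ.filter (fun i : Fin K => (i : ℕ) + 1 ≤ (j : ℕ) + 1))
      = insert j (Finset.univ.filter (fun i : Fin K => (i : ℕ) + 1 ≤ (j : ℕ))) := by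
    ext i
    simp only [Finset.mem_filter, Finset.mem_univ, true_and, Finset.mem_insert, Fin.ext_iff]
    omega
  rw [h, Finset.sum_insert (by simp)]
  ring

/-- If the extra terms vanish, `Lfun` doesn't change when the cutoff grows. -/
lemma Lfun_congr (r : Ω → ℝ) (e : Fin K → Ω) (x : Ω → ℝ) {k k' : ℕ} (hkk : k ≤ k')
    (h : ∀ i : Fin K, k < (i : ℕ) + 1 → (i : ℕ) + 1 ≤ k' → x (e i) * r (e i) = 0) :
    Lfun r e k' x = Lfun r e k x := by
  unfold Lfun
  congr 1
  refine (Finset.sum_subset ?_ ?_).symm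
  · intro i hi
    simp only [Finset.mem_filter, Finset.mem_univ, true_and] at hi ⊢
    omega
  · intro i hi hni
    simp only [Finset.mem_filter, Finset.mem_univ, true_and, not_le] at hi hni
    exact h i hni hi

lemma Lfun_le_of_le (r : Ω → ℝ) (e : Fin K → Ω)
    (he_range : ∀ ω, r ω < 0 ↔ ω ∈ Set.range e) (p : Ω → ℝ) (hp : ∀ ω, 0 ≤ p ω)
    {k k' : ℕ} (h : k ≤ k') : Lfun r e k' p ≤ Lfun r e k p := by
  unfold Lfun
  have hsub : (Finset.univ.filter (fun i : Fin K => (i : ℕ) + 1 ≤ k))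
      ⊆ (Finset.univ.filter (fun i : Fin K => (i : ℕ) + 1 ≤ k')) := by
    intro i hi
    simp only [Finset.mem_filter, Finset.mem_univ, true_and] at hi ⊢
    omega
  have := Finset.sum_sdiff (f := fun i : Fin K => p (e i) * r (e i)) hsub
  have hterm : ∀ i ∈ (Finset.univ.filter (fun i : Fin K => (i : ℕ) + 1 ≤ k')) \
      (Finset.univ.filter (fun i : Fin K => (i : ℕ) + 1 ≤ k)),
      p (e i) * r (e i) ≤ 0 := by
    intro i _
    exact mul_nonpos_of_nonneg_of_nonpos (hp _) (le_of_lt ((he_range (e i)).2 ⟨i, rfl⟩))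
  nlinarith [Finset.sum_nonpos hterm]

lemma Lfun_zero_nonneg (r : Ω → ℝ) (e : Fin K → Ω) (p : Ω → ℝ) (hp : ∀ ω, 0 ≤ p ω) :
    0 ≤ Lfun r e 0 p := by
  unfold Lfun
  have h2 : (Finset.univ.filter (fun i : Fin K => (i : ℕ) + 1 ≤ 0)) = ∅ := by
    ext i; simp
  rw [h2]
  simp only [Finset.sum_empty, add_zero]
  refine Finset.sum_nonneg fun ω hω => ?_
  simp only [Finset.mem_filter] at hω
  exact mul_nonneg (hp ω) hω.2

lemma Lfun_comb (r : Ω → ℝ) (e : Fin K → Ω) (k : ℕ) (a b : ℝ) (x z : Ω → ℝ) :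
    Lfun r e k (fun ω => a * x ω + b * z ω) = a * Lfun r e k x + b * Lfun r e k z := by
  unfold Lfun
  rw [mul_add, mul_add]
  rw [Finset.mul_sum, Finset.mul_sum, Finset.mul_sum, Finset.mul_sum]
  simp only [add_mul]
  rw [Finset.sum_add_distrib, Finset.sum_add_distrib]
  simp only [mul_assoc]
  ring

lemma Lfun_sub (r : Ω → ℝ) (e : Fin K → Ω) (k : ℕ) (x z : Ω → ℝ) :
    Lfun r e k (x - z) = Lfun r e k x - Lfun r e k z := by
  unfold Lfun
  simp only [Pi.sub_apply, sub_mul, Finset.sum_sub_distrib]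
  ring

lemma Lfun_smul (r : Ω → ℝ) (e : Fin K → Ω) (k : ℕ) (c : ℝ) (x : Ω → ℝ) :
    Lfun r e k (c • x) = c * Lfun r e k x := by
  unfold Lfun
  simp only [Pi.smul_apply, smul_eq_mul, mul_add, Finset.mul_sum]
  simp only [mul_assoc]

end RSV
namespace RSV

variable [Fintype Ω] [DecidableEq Ω] {K : ℕ}

/-- The invariant region `T`. -/
def Tset (r : Ω → ℝ) (e : Fin K → Ω) (j : Fin K) : Set (Ω → ℝ) :=
  {p | p ∈ stdSimplex ℝ Ω ∧ (∀ k : ℕ, 1 ≤ k → k ≤ (j : ℕ) → 0 < Lfun r e k p)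
      ∧ Lfun r e ((j : ℕ) + 1) p ≤ 0}

/-- The dual optimal vector `y*`. -/
def yfun (r : Ω → ℝ) (e : Fin K → Ω) (j : Fin K) : Ω → ℝ :=
  fun ω => max (1 - r ω / r (e j)) 0

variable {r : Ω → ℝ} {e : Fin K → Ω} {j : Fin K}

lemma rej_neg (he_range : ∀ ω, r ω < 0 ↔ ω ∈ Set.range e) (i : Fin K) : r (e i) < 0 :=
  (he_range (e i)).2 ⟨i, rfl⟩

lemma yfun_nonneg : ∀ ω, 0 ≤ yfun r e j ω := fun ω => le_max_right _ _

lemma yfun_of_ge (he_range : ∀ ω, r ω < 0 ↔ ω ∈ Set.range e) {ω : Ω}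
    (h : r (e j) ≤ r ω) : yfun r e j ω = 1 - r ω / r (e j) := by
  have hrj := rej_neg he_range j
  apply max_eq_left
  have : r ω / r (e j) ≤ 1 := by
    rw [div_le_iff_of_neg hrj]; linarith
  linarith

lemma yfun_of_le (he_range : ∀ ω, r ω < 0 ↔ ω ∈ Set.range e) {ω : Ω}
    (h : r ω ≤ r (e j)) : yfun r e j ω = 0 := by
  have hrj := rej_neg he_range j
  apply max_eq_right
  have : 1 ≤ r ω / r (e j) := by
    rw [le_div_iff_of_neg hrj]; linarith
  linarith

lemma yfun_ge (he_range : ∀ ω, r ω < 0 ↔ ω ∈ Set.range e) (ω : Ω) :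
    1 - r ω / r (e j) ≤ yfun r e j ω := le_max_left _ _

lemma Tset_inr_nonpos (he_inj : Function.Injective e)
    (he_range : ∀ ω, r ω < 0 ↔ ω ∈ Set.range e) {p : Ω → ℝ} (hp : p ∈ Tset r e j) :
    inr r p ≤ 0 := by
  have h1 : Lfun r e K p ≤ Lfun r e ((j : ℕ) + 1) p :=
    Lfun_le_of_le r e he_range p (fun ω => hp.1.1 ω) (Nat.succ_le_of_lt j.isLt)
  have h2 := hp.2.2
  have h3 := Lfun_K r e he_inj he_range p
  unfold inr
  linarith [h3 ▸ h1]

lemma kstar_eq {p : Ω → ℝ} (hp : p ∈ Tset r e j) : kstar r e p = (j : ℕ) + 1 := by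
  have hmem : (j : ℕ) + 1 ∈ {k : ℕ | 1 ≤ k ∧ Lfun r e k p ≤ 0} := ⟨by omega, hp.2.2⟩
  refine le_antisymm (Nat.sInf_le hmem) ?_
  by_contra h
  push_neg at h
  have hin := Nat.sInf_mem (Set.nonempty_of_mem hmem)
  have h1 := hin.1
  have h2 := hin.2
  have := hp.2.1 (sInf {k : ℕ | 1 ≤ k ∧ Lfun r e k p ≤ 0}) h1 (by unfold kstar at h; omega)
  unfold kstar at h
  linarith

lemma piStar_apply_pos (he_range : ∀ ω, r ω < 0 ↔ ω ∈ Set.range e) (p : Ω → ℝ) {ω : Ω}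
    (hw : 0 ≤ r ω) : piStar r e p ω = p ω := by
  unfold piStar
  simp only [Pi.add_apply, Finset.sum_apply, Pi.smul_apply, smul_eq_mul]
  rw [if_pos hw]
  rw [Finset.sum_eq_zero, add_zero]
  intro i _
  have hne : ω ≠ e i := by
    intro hEq
    exact absurd (hEq ▸ hw) (not_le.2 (rej_neg he_range i))
  rw [Pi.single_eq_of_ne hne, mul_zero]

lemma piStar_apply_e (he_inj : Function.Injective e)
    (he_range : ∀ ω, r ω < 0 ↔ ω ∈ Set.range e) {p : Ω → ℝ} (hp : p ∈ Tset r e j)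
    (i : Fin K) :
    piStar r e p (e i) = if (i : ℕ) < (j : ℕ) then p (e i)
      else if i = j then -(Lfun r e (j : ℕ) p) / r (e j) else 0 := by
  unfold piStar
  simp only [Pi.add_apply, Finset.sum_apply, Pi.smul_apply, smul_eq_mul]
  rw [if_neg (not_le.2 (rej_neg he_range i)), zero_add]
  rw [Finset.sum_eq_single i]
  · rw [Pi.single_eq_same, mul_one, kstar_eq hp]
    simp only [Nat.add_sub_cancel]
    by_cases h1 : (i : ℕ) < (j : ℕ)
    · rw [if_pos (by omega), if_pos h1]
    · rw [if_neg (by omega)]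
      by_cases h2 : i = j
      · rw [if_pos (by omega : (i:ℕ) + 1 = (j:ℕ) + 1), if_neg h1, if_pos h2, h2]
      · have : (i : ℕ) ≠ (j : ℕ) := fun hc => h2 (Fin.ext hc)
        rw [if_neg (by omega), if_neg h1, if_neg h2]
  · intro b _ hbi
    have hne : e i ≠ e b := fun hEq => hbi (he_inj hEq.symm)
    rw [Pi.single_eq_of_ne hne, mul_zero]
  · intro h; exact absurd (Finset.mem_univ i) h

lemma Lj_nonneg (he_inj : Function.Injective e)
    (he_range : ∀ ω, r ω < 0 ↔ ω ∈ Set.range e) {p : Ω → ℝ} (hp : p ∈ Tset r e j) :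
    0 ≤ Lfun r e (j : ℕ) p := by
  rcases Nat.eq_zero_or_pos (j : ℕ) with h | h
  · rw [h]; exact Lfun_zero_nonneg r e p (fun ω => hp.1.1 ω)
  · exact le_of_lt (hp.2.1 _ h le_rfl)

lemma beta_nonneg (he_inj : Function.Injective e)
    (he_range : ∀ ω, r ω < 0 ↔ ω ∈ Set.range e) {p : Ω → ℝ} (hp : p ∈ Tset r e j) :
    0 ≤ -(Lfun r e (j : ℕ) p) / r (e j) := by
  have h1 := Lj_nonneg he_inj he_range hp
  have h2 := rej_neg he_range j
  apply div_nonneg_of_nonpos <;> linarith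

lemma beta_le (he_inj : Function.Injective e)
    (he_range : ∀ ω, r ω < 0 ↔ ω ∈ Set.range e) {p : Ω → ℝ} (hp : p ∈ Tset r e j) :
    -(Lfun r e (j : ℕ) p) / r (e j) ≤ p (e j) := by
  have h2 := rej_neg he_range j
  have h3 := hp.2.2
  rw [Lfun_succ] at h3
  rw [div_le_iff_of_neg h2]
  linarith

lemma piStar_nonneg (he_inj : Function.Injective e)
    (he_range : ∀ ω, r ω < 0 ↔ ω ∈ Set.range e) {p : Ω → ℝ} (hp : p ∈ Tset r e j)
    (ω : Ω) : 0 ≤ piStar r e p ω := by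
  by_cases hw : 0 ≤ r ω
  · rw [piStar_apply_pos he_range p hw]; exact hp.1.1 ω
  · obtain ⟨i, rfl⟩ := (he_range ω).1 (not_le.1 hw)
    rw [piStar_apply_e he_inj he_range hp i]
    by_cases h1 : (i : ℕ) < (j : ℕ)
    · rw [if_pos h1]; exact hp.1.1 _
    · rw [if_neg h1]
      by_cases h2 : i = j
      · rw [if_pos h2]; exact beta_nonneg he_inj he_range hp
      · rw [if_neg h2]

lemma piStar_le (he_inj : Function.Injective e)
    (he_range : ∀ ω, r ω < 0 ↔ ω ∈ Set.range e) {p : Ω → ℝ} (hp : p ∈ Tset r e j)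
    (ω : Ω) : piStar r e p ω ≤ p ω := by
  by_cases hw : 0 ≤ r ω
  · rw [piStar_apply_pos he_range p hw]
  · obtain ⟨i, rfl⟩ := (he_range ω).1 (not_le.1 hw)
    rw [piStar_apply_e he_inj he_range hp i]
    by_cases h1 : (i : ℕ) < (j : ℕ)
    · rw [if_pos h1]
    · rw [if_neg h1]
      by_cases h2 : i = j
      · rw [if_pos h2, h2]; exact beta_le he_inj he_range hp
      · rw [if_neg h2]; exact hp.1.1 _

lemma Lfun_piStar (he_inj : Function.Injective e)
    (he_range : ∀ ω, r ω < 0 ↔ ω ∈ Set.range e) {p : Ω → ℝ} (hp : p ∈ Tset r e j)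
    {k : ℕ} (hk : k ≤ (j : ℕ)) : Lfun r e k (piStar r e p) = Lfun r e k p := by
  unfold Lfun
  congr 1
  · refine Finset.sum_congr rfl fun ω hω => ?_
    simp only [Finset.mem_filter] at hω
    rw [piStar_apply_pos he_range p hω.2]
  · refine Finset.sum_congr rfl fun i hi => ?_
    simp only [Finset.mem_filter] at hi
    rw [piStar_apply_e he_inj he_range hp i, if_pos (by omega)]

lemma Lfun_piStar_succ (he_inj : Function.Injective e)
    (he_range : ∀ ω, r ω < 0 ↔ ω ∈ Set.range e) {p : Ω → ℝ} (hp : p ∈ Tset r e j) :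
    Lfun r e ((j : ℕ) + 1) (piStar r e p) = 0 := by
  rw [Lfun_succ, Lfun_piStar he_inj he_range hp le_rfl,
    piStar_apply_e he_inj he_range hp j, if_neg (lt_irrefl _), if_pos rfl,
    div_mul_cancel₀ _ (ne_of_lt (rej_neg he_range j))]
  ring

lemma inr_r_piStar (he_inj : Function.Injective e)
    (he_range : ∀ ω, r ω < 0 ↔ ω ∈ Set.range e) {p : Ω → ℝ} (hp : p ∈ Tset r e j) :
    inr r (piStar r e p) = 0 := by
  have h1 : Lfun r e K (piStar r e p) = Lfun r e ((j : ℕ) + 1) (piStar r e p) := by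
    refine Lfun_congr r e _ (Nat.succ_le_of_lt j.isLt) fun i h1 h2 => ?_
    rw [piStar_apply_e he_inj he_range hp i, if_neg (by omega), if_neg (by
      intro hc; rw [hc] at h1; omega)]
    ring
  have h2 := Lfun_K r e he_inj he_range (piStar r e p)
  have h3 := Lfun_piStar_succ he_inj he_range hp
  unfold inr
  rw [← h2, h1, h3]

end RSV
namespace RSV

variable [Fintype Ω] [DecidableEq Ω] {K : ℕ}
variable {r : Ω → ℝ} {e : Fin K → Ω} {j : Fin K}

/-- On the support of `π*`, the dual vector is affine: `y = 1 - r/r_j`. -/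
lemma piStar_mul_y (he_inj : Function.Injective e)
    (he_range : ∀ ω, r ω < 0 ↔ ω ∈ Set.range e) (he_anti : Antitone fun i => r (e i))
    {p : Ω → ℝ} (hp : p ∈ Tset r e j) (ω : Ω) :
    piStar r e p ω * yfun r e j ω = piStar r e p ω * (1 - r ω / r (e j)) := by
  by_cases hw : 0 ≤ r ω
  · rw [yfun_of_ge he_range (le_trans (le_of_lt (rej_neg he_range j)) hw)]
  · obtain ⟨i, rfl⟩ := (he_range ω).1 (not_le.1 hw)
    by_cases h1 : (i : ℕ) ≤ (j : ℕ)
    · rw [yfun_of_ge he_range (he_anti (show i ≤ j from h1))]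
    · rw [piStar_apply_e he_inj he_range hp i, if_neg (by omega),
        if_neg (fun hc => h1 (by rw [hc]))]
      ring

/-- `p` and `π*` have the same inner product with `y`. -/
lemma inr_y_piStar_eq (he_inj : Function.Injective e)
    (he_range : ∀ ω, r ω < 0 ↔ ω ∈ Set.range e) (he_anti : Antitone fun i => r (e i))
    {p : Ω → ℝ} (hp : p ∈ Tset r e j) :
    inr (yfun r e j) p = inr (yfun r e j) (piStar r e p) := by
  unfold inr
  refine Finset.sum_congr rfl fun ω _ => ?_
  by_cases hw : 0 ≤ r ω
  · rw [piStar_apply_pos he_range p hw]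
  · obtain ⟨i, rfl⟩ := (he_range ω).1 (not_le.1 hw)
    by_cases h1 : (i : ℕ) < (j : ℕ)
    · rw [piStar_apply_e he_inj he_range hp i, if_pos h1]
    · rw [yfun_of_le he_range (he_anti (show j ≤ i from by omega)), mul_zero, mul_zero]

/-- `⟨π*, y⟩ = a_I`. -/
lemma inr_y_piStar (he_inj : Function.Injective e)
    (he_range : ∀ ω, r ω < 0 ↔ ω ∈ Set.range e) (he_anti : Antitone fun i => r (e i))
    {p : Ω → ℝ} (hp : p ∈ Tset r e j) :
    inr (yfun r e j) (piStar r e p) = aI r e p := by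
  unfold inr aI
  rw [Finset.sum_congr rfl fun ω _ => piStar_mul_y he_inj he_range he_anti hp ω]
  have hrj := rej_neg he_range j
  have h0 := inr_r_piStar he_inj he_range hp
  unfold inr at h0
  have : ∀ ω, piStar r e p ω * (1 - r ω / r (e j))
      = piStar r e p ω - (piStar r e p ω * r ω) / r (e j) := by
    intro ω; ring
  rw [Finset.sum_congr rfl fun ω _ => this ω, Finset.sum_sub_distrib,
    ← Finset.sum_div, h0]
  simp

/-- `⟨p, y⟩ = a_I` on `T`. -/
lemma inr_y_eq_aI (he_inj : Function.Injective e)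
    (he_range : ∀ ω, r ω < 0 ↔ ω ∈ Set.range e) (he_anti : Antitone fun i => r (e i))
    {p : Ω → ℝ} (hp : p ∈ Tset r e j) :
    inr (yfun r e j) p = aI r e p := by
  rw [inr_y_piStar_eq he_inj he_range he_anti hp,
    inr_y_piStar he_inj he_range he_anti hp]

lemma aI_nonneg (he_inj : Function.Injective e)
    (he_range : ∀ ω, r ω < 0 ↔ ω ∈ Set.range e) {p : Ω → ℝ} (hp : p ∈ Tset r e j) :
    0 ≤ aI r e p :=
  Finset.sum_nonneg fun ω _ => piStar_nonneg he_inj he_range hp ω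

lemma aI_le_one (he_inj : Function.Injective e)
    (he_range : ∀ ω, r ω < 0 ↔ ω ∈ Set.range e) {p : Ω → ℝ} (hp : p ∈ Tset r e j) :
    aI r e p ≤ 1 := by
  have h1 : aI r e p ≤ ∑ ω, p ω :=
    Finset.sum_le_sum fun ω _ => piStar_le he_inj he_range hp ω
  rw [hp.1.2] at h1
  exact h1

/-- If `a_I = 1` then `π* = p`; contrapositive pieces. -/
lemma piStar_eq_self (he_inj : Function.Injective e)
    (he_range : ∀ ω, r ω < 0 ↔ ω ∈ Set.range e) {p : Ω → ℝ} (hp : p ∈ Tset r e j)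
    (ha : aI r e p = 1) : piStar r e p = p := by
  have hsum : ∑ ω, (p ω - piStar r e p ω) = 0 := by
    rw [Finset.sum_sub_distrib, hp.1.2]
    unfold aI at ha
    rw [ha]; ring
  funext ω
  have := (Finset.sum_eq_zero_iff_of_nonneg
    (fun ω _ => sub_nonneg.2 (piStar_le he_inj he_range hp ω))).1 hsum ω (Finset.mem_univ ω)
  linarith

lemma aI_lt_one (he_inj : Function.Injective e)
    (he_range : ∀ ω, r ω < 0 ↔ ω ∈ Set.range e) {p : Ω → ℝ} (hp : p ∈ Tset r e j)
    (hneg : inr r p < 0) : aI r e p < 1 := by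
  rcases lt_or_eq_of_le (aI_le_one he_inj he_range hp) with h | h
  · exact h
  · exfalso
    have := inr_r_piStar he_inj he_range hp
    rw [piStar_eq_self he_inj he_range hp h] at this
    linarith

lemma aI_eq_one (he_inj : Function.Injective e)
    (he_range : ∀ ω, r ω < 0 ↔ ω ∈ Set.range e) {p : Ω → ℝ} (hp : p ∈ Tset r e j)
    (heq : inr r p = 0) : aI r e p = 1 := by
  have hterm : ∀ ω ∈ Finset.univ, (p ω - piStar r e p ω) * r ω ≤ 0 := by
    intro ω _
    by_cases hw : 0 ≤ r ω
    · rw [piStar_apply_pos he_range p hw]; simp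
    · have h1 := sub_nonneg.2 (piStar_le he_inj he_range hp ω)
      exact mul_nonpos_of_nonneg_of_nonpos h1 (le_of_not_ge hw)
  have hsum : ∑ ω, (p ω - piStar r e p ω) * r ω = 0 := by
    have h0 := inr_r_piStar he_inj he_range hp
    unfold inr at heq h0
    simp only [sub_mul, Finset.sum_sub_distrib]
    rw [heq, h0]; ring
  have hzero := (Finset.sum_eq_zero_iff_of_nonpos hterm).1 hsum
  have hps : ∀ ω, piStar r e p ω = p ω := by
    intro ω
    by_cases hw : 0 ≤ r ω
    · exact piStar_apply_pos he_range p hw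
    · have := hzero ω (Finset.mem_univ ω)
      have hrw : r ω ≠ 0 := fun hc => hw (le_of_eq hc.symm)
      have := mul_eq_zero.1 this
      rcases this with h | h
      · linarith [sub_eq_zero.1 (by linarith : p ω - piStar r e p ω = 0)]
      · exact absurd h hrw
  unfold aI
  rw [Finset.sum_congr rfl fun ω _ => hps ω, hp.1.2]

lemma piStar_zero_of_aI_zero (he_inj : Function.Injective e)
    (he_range : ∀ ω, r ω < 0 ↔ ω ∈ Set.range e) {p : Ω → ℝ} (hp : p ∈ Tset r e j)
    (ha : aI r e p = 0) : piStar r e p = 0 ∧ qJ r e p = p := by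
  have h1 : piStar r e p = 0 := by
    funext ω
    exact (Finset.sum_eq_zero_iff_of_nonneg
      (fun ω _ => piStar_nonneg he_inj he_range hp ω)).1 ha ω (Finset.mem_univ ω)
  refine ⟨h1, ?_⟩
  unfold qJ
  rw [ha, h1]
  funext ω
  simp

end RSV
namespace RSV

variable [Fintype Ω] [DecidableEq Ω] {K : ℕ}
variable {r : Ω → ℝ} {e : Fin K → Ω} {j : Fin K}

lemma qI_mem (he_inj : Function.Injective e)
    (he_range : ∀ ω, r ω < 0 ↔ ω ∈ Set.range e) {p : Ω → ℝ} (hp : p ∈ Tset r e j)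
    (ha : 0 < aI r e p) : qI r e p ∈ stdSimplex ℝ Ω := by
  constructor
  · intro ω
    exact mul_nonneg (inv_nonneg.2 (le_of_lt ha)) (piStar_nonneg he_inj he_range hp ω)
  · unfold qI
    simp only [Pi.smul_apply, smul_eq_mul]
    rw [← Finset.mul_sum]
    exact inv_mul_cancel₀ (ne_of_gt ha)

lemma inr_r_qI (he_inj : Function.Injective e)
    (he_range : ∀ ω, r ω < 0 ↔ ω ∈ Set.range e) {p : Ω → ℝ} (hp : p ∈ Tset r e j) :
    inr r (qI r e p) = 0 := by
  unfold inr qI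
  simp only [Pi.smul_apply, smul_eq_mul, mul_assoc]
  rw [← Finset.mul_sum]
  have := inr_r_piStar he_inj he_range hp
  unfold inr at this
  rw [this, mul_zero]

lemma inr_y_qI (he_inj : Function.Injective e)
    (he_range : ∀ ω, r ω < 0 ↔ ω ∈ Set.range e) (he_anti : Antitone fun i => r (e i))
    {p : Ω → ℝ} (hp : p ∈ Tset r e j) (ha : 0 < aI r e p) :
    inr (yfun r e j) (qI r e p) = 1 := by
  unfold inr qI
  simp only [Pi.smul_apply, smul_eq_mul, mul_assoc]
  rw [← Finset.mul_sum]
  have := inr_y_piStar he_inj he_range he_anti hp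
  unfold inr at this
  rw [this]
  exact inv_mul_cancel₀ (ne_of_gt ha)

lemma Lfun_qI_nonneg (he_inj : Function.Injective e)
    (he_range : ∀ ω, r ω < 0 ↔ ω ∈ Set.range e) {p : Ω → ℝ} (hp : p ∈ Tset r e j)
    (ha : 0 < aI r e p) {k : ℕ} (hk : k ≤ (j : ℕ)) : 0 ≤ Lfun r e k (qI r e p) := by
  unfold qI
  rw [Lfun_smul, Lfun_piStar he_inj he_range hp hk]
  rcases Nat.eq_zero_or_pos k with h | h
  · subst h
    exact mul_nonneg (inv_nonneg.2 (le_of_lt ha))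
      (Lfun_zero_nonneg r e p fun ω => hp.1.1 ω)
  · exact mul_nonneg (inv_nonneg.2 (le_of_lt ha)) (le_of_lt (hp.2.1 k h hk))

lemma Lfun_qI_succ (he_inj : Function.Injective e)
    (he_range : ∀ ω, r ω < 0 ↔ ω ∈ Set.range e) {p : Ω → ℝ} (hp : p ∈ Tset r e j) :
    Lfun r e ((j : ℕ) + 1) (qI r e p) = 0 := by
  unfold qI
  rw [Lfun_smul, Lfun_piStar_succ he_inj he_range hp, mul_zero]

lemma qJ_mem (he_inj : Function.Injective e)
    (he_range : ∀ ω, r ω < 0 ↔ ω ∈ Set.range e) {p : Ω → ℝ} (hp : p ∈ Tset r e j)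
    (ha : aI r e p < 1) : qJ r e p ∈ stdSimplex ℝ Ω := by
  have h1 : (0:ℝ) < 1 - aI r e p := by linarith
  constructor
  · intro ω
    exact mul_nonneg (inv_nonneg.2 (le_of_lt h1))
      (sub_nonneg.2 (piStar_le he_inj he_range hp ω))
  · unfold qJ
    simp only [Pi.smul_apply, smul_eq_mul, Pi.sub_apply]
    rw [← Finset.mul_sum, Finset.sum_sub_distrib, hp.1.2]
    have : ∑ ω, piStar r e p ω = aI r e p := rfl
    rw [this]
    exact inv_mul_cancel₀ (ne_of_gt h1)

lemma inr_y_qJ (he_inj : Function.Injective e)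
    (he_range : ∀ ω, r ω < 0 ↔ ω ∈ Set.range e) (he_anti : Antitone fun i => r (e i))
    {p : Ω → ℝ} (hp : p ∈ Tset r e j) :
    inr (yfun r e j) (qJ r e p) = 0 := by
  unfold inr qJ
  simp only [Pi.smul_apply, smul_eq_mul, Pi.sub_apply, mul_assoc]
  rw [← Finset.mul_sum]
  have heq := inr_y_piStar_eq he_inj he_range he_anti hp
  unfold inr at heq
  have : ∑ ω, (p ω - piStar r e p ω) * yfun r e j ω = 0 := by
    simp only [sub_mul, Finset.sum_sub_distrib]
    rw [heq]; ring
  rw [this, mul_zero]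

lemma Lfun_qJ_eq_zero (he_inj : Function.Injective e)
    (he_range : ∀ ω, r ω < 0 ↔ ω ∈ Set.range e) {p : Ω → ℝ} (hp : p ∈ Tset r e j)
    {k : ℕ} (hk : k ≤ (j : ℕ)) : Lfun r e k (qJ r e p) = 0 := by
  unfold qJ
  rw [Lfun_smul, Lfun_sub, Lfun_piStar he_inj he_range hp hk]
  ring

lemma Lfun_qJ_succ (he_inj : Function.Injective e)
    (he_range : ∀ ω, r ω < 0 ↔ ω ∈ Set.range e) {p : Ω → ℝ} (hp : p ∈ Tset r e j)
    (ha : aI r e p < 1) : Lfun r e ((j : ℕ) + 1) (qJ r e p) ≤ 0 := by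
  unfold qJ
  rw [Lfun_smul, Lfun_sub, Lfun_piStar_succ he_inj he_range hp]
  have h1 : (0:ℝ) < 1 - aI r e p := by linarith
  have := hp.2.2
  have h2 : Lfun r e ((j:ℕ)+1) p - 0 ≤ 0 := by linarith
  exact mul_nonpos_of_nonneg_of_nonpos (inv_nonneg.2 (le_of_lt h1)) h2

lemma decomp {p : Ω → ℝ} (ha : 0 < aI r e p) (ha1 : aI r e p < 1) (ω : Ω) :
    p ω = aI r e p * qI r e p ω + (1 - aI r e p) * qJ r e p ω := by
  unfold qI qJ
  simp only [Pi.smul_apply, smul_eq_mul, Pi.sub_apply]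
  have h1 : aI r e p ≠ 0 := ne_of_gt ha
  have h2 : (1:ℝ) - aI r e p ≠ 0 := ne_of_gt (by linarith)
  field_simp
  ring

lemma memT_phi (he_range : ∀ ω, r ω < 0 ↔ ω ∈ Set.range e) {m : Ω → ℝ}
    (hmT : m ∈ Tset r e j) {lam : ℝ} (hlam : 0 ≤ lam) (hlam1 : lam < 1)
    {x : Ω → ℝ} (hx : x ∈ stdSimplex ℝ Ω)
    (h1 : ∀ k : ℕ, 1 ≤ k → k ≤ (j : ℕ) → 0 ≤ Lfun r e k x)
    (h2 : Lfun r e ((j : ℕ) + 1) x ≤ 0) :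
    (fun ω => (1 - lam) * m ω + lam * x ω) ∈ Tset r e j := by
  refine ⟨⟨fun ω => add_nonneg (mul_nonneg (by linarith) (hmT.1.1 ω))
      (mul_nonneg hlam (hx.1 ω)), ?_⟩, ?_, ?_⟩
  · rw [Finset.sum_add_distrib, ← Finset.mul_sum, ← Finset.mul_sum, hmT.1.2, hx.2]
    ring
  · intro k hk1 hk2
    rw [Lfun_comb]
    have ha := hmT.2.1 k hk1 hk2
    have hb := h1 k hk1 hk2
    have hc : 0 < (1 - lam) * Lfun r e k m := mul_pos (by linarith) ha
    have hd : 0 ≤ lam * Lfun r e k x := mul_nonneg hlam hb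
    linarith
  · rw [Lfun_comb]
    have hc : (1 - lam) * Lfun r e ((j:ℕ)+1) m ≤ 0 :=
      mul_nonpos_of_nonneg_of_nonpos (by linarith) hmT.2.2
    have hd : lam * Lfun r e ((j:ℕ)+1) x ≤ 0 := mul_nonpos_of_nonneg_of_nonpos hlam h2
    linarith

lemma m_mem_T (he_inj : Function.Injective e)
    (he_range : ∀ ω, r ω < 0 ↔ ω ∈ Set.range e) (hK : 0 < K) {m : Ω → ℝ}
    (hm : m ∈ stdSimplex ℝ Ω) (hneg : ∑ ω, m ω * r ω < 0) :
    ∃ j : Fin K, m ∈ Tset r e j := by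
  have hKmem : K ∈ {k : ℕ | 1 ≤ k ∧ Lfun r e k m ≤ 0} :=
    ⟨hK, by rw [Lfun_K r e he_inj he_range]; linarith⟩
  have hmem := Nat.sInf_mem (Set.nonempty_of_mem hKmem)
  have hle : sInf {k : ℕ | 1 ≤ k ∧ Lfun r e k m ≤ 0} ≤ K := Nat.sInf_le hKmem
  have h1 : 1 ≤ sInf {k : ℕ | 1 ≤ k ∧ Lfun r e k m ≤ 0} := hmem.1
  refine ⟨⟨sInf {k : ℕ | 1 ≤ k ∧ Lfun r e k m ≤ 0} - 1, by omega⟩, hm, ?_, ?_⟩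
  · intro k hk1 hk2
    simp only [Fin.val_mk] at hk2
    by_contra hcon
    push_neg at hcon
    have hmem2 : k ∈ {k : ℕ | 1 ≤ k ∧ Lfun r e k m ≤ 0} := ⟨hk1, hcon⟩
    have := Nat.sInf_le hmem2
    omega
  · simp only [Fin.val_mk]
    have heq : sInf {k : ℕ | 1 ≤ k ∧ Lfun r e k m ≤ 0} - 1 + 1
        = sInf {k : ℕ | 1 ≤ k ∧ Lfun r e k m ≤ 0} := by omega
    rw [heq]
    exact hmem.2

lemma Wkey {δ lam Lm : ℝ} (hδ0 : 0 ≤ δ) (hδ1 : δ < 1) (hlam0 : 0 ≤ lam)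
    (hlam1 : lam < 1) (x : ℝ) :
    (1 - δ) * x + δ * (δ * (1 - lam) * Lm / (1 - δ * lam)
      + (1 - δ) / (1 - δ * lam) * ((1 - lam) * Lm + lam * x))
    = δ * (1 - lam) * Lm / (1 - δ * lam) + (1 - δ) / (1 - δ * lam) * x := by
  have h : 1 - δ * lam ≠ 0 := by nlinarith
  field_simp
  ring

lemma contract {δ A : ℝ} (hδ0 : 0 ≤ δ) (hδ1 : δ < 1) (h : A ≤ δ * max A 0) : A ≤ 0 := by
  by_contra hc
  push_neg at hc
  rw [max_eq_left (le_of_lt hc)] at h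
  nlinarith

end RSV
namespace RSV

variable [Fintype Ω] [DecidableEq Ω]

lemma measurable_S : MeasurableSet (stdSimplex ℝ Ω) := (isClosed_stdSimplex ℝ Ω).measurableSet

lemma measurable_invest (r : Ω → ℝ) : MeasurableSet (invest r) :=
  (IsClosed.inter (isClosed_stdSimplex ℝ Ω) (isClosed_le continuous_const
    (continuous_finset_sum _ fun ω _ => (continuous_apply ω).mul continuous_const))).measurableSet

lemma coord_le_one {q : Ω → ℝ} (hq : q ∈ stdSimplex ℝ Ω) (ω : Ω) : q ω ≤ 1 :=
  hq.2 ▸ Finset.single_le_sum (fun ω _ => hq.1 ω) (Finset.mem_univ ω)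

lemma inr_cont (y : Ω → ℝ) : Continuous (inr y) :=
  continuous_finset_sum _ fun ω _ => (continuous_apply ω).mul continuous_const

lemma inr_bdd (y : Ω → ℝ) {q : Ω → ℝ} (hq : q ∈ stdSimplex ℝ Ω) :
    |inr y q| ≤ ∑ ω, |y ω| := by
  refine le_trans (Finset.abs_sum_le_sum_abs _ _) (Finset.sum_le_sum fun ω _ => ?_)
  rw [abs_mul]
  have h1 : |q ω| ≤ 1 := abs_le.2 ⟨by linarith [hq.1 ω], coord_le_one hq ω⟩
  nlinarith [abs_nonneg (y ω)]

lemma inr_nonneg {y : Ω → ℝ} (hy0 : ∀ ω, 0 ≤ y ω) {q : Ω → ℝ}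
    (hq : q ∈ stdSimplex ℝ Ω) : 0 ≤ inr y q :=
  Finset.sum_nonneg fun ω _ => mul_nonneg (hq.1 ω) (hy0 ω)

lemma ae_memS {μ : Measure (Ω → ℝ)} [IsProbabilityMeasure μ]
    (hμS : μ (stdSimplex ℝ Ω) = 1) : ∀ᵐ q ∂μ, q ∈ stdSimplex ℝ Ω := by
  have hc : μ (stdSimplex ℝ Ω)ᶜ = 0 := by
    rw [measure_compl measurable_S (by rw [hμS]; exact ENNReal.one_ne_top), hμS,
      measure_univ, tsub_self]
  exact ae_iff.2 hc

lemma restrict_eq {μ : Measure (Ω → ℝ)} [IsProbabilityMeasure μ]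
    (hμS : μ (stdSimplex ℝ Ω) = 1) : μ.restrict (stdSimplex ℝ Ω) = μ :=
  Measure.restrict_eq_self_of_ae_mem (ae_memS hμS)

lemma integrable_of_bdd {μ : Measure (Ω → ℝ)} [IsFiniteMeasure μ]
    (hae : ∀ᵐ q ∂μ, q ∈ stdSimplex ℝ Ω) {f : (Ω → ℝ) → ℝ} (hf : Continuous f)
    {C : ℝ} (hC : ∀ q ∈ stdSimplex ℝ Ω, |f q| ≤ C) : Integrable f μ :=
  ⟨hf.aestronglyMeasurable, HasFiniteIntegral.of_bounded (C := C) (hae.mono fun q hq => by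
    rw [Real.norm_eq_abs]; exact hC q hq)⟩

lemma bary_coord {μ : Measure (Ω → ℝ)} [IsProbabilityMeasure μ]
    (hμS : μ (stdSimplex ℝ Ω) = 1) {p : Ω → ℝ} (hbar : ∫ q, q ∂μ = p) (ω : Ω) :
    ∫ q, q ω ∂μ = p ω := by
  have hid : Integrable (fun q : Ω → ℝ => q) μ := by
    refine ⟨continuous_id.aestronglyMeasurable, HasFiniteIntegral.of_bounded (C := 1) ?_⟩
    filter_upwards [ae_memS hμS] with q hq
    rw [pi_norm_le_iff_of_nonneg zero_le_one]
    intro ω'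
    rw [Real.norm_eq_abs, abs_le]
    exact ⟨by linarith [hq.1 ω'], coord_le_one hq ω'⟩
  have h := (ContinuousLinearMap.proj (R := ℝ) (φ := fun _ : Ω => ℝ) ω).integral_comp_comm hid
  simp only [ContinuousLinearMap.proj_apply] at h
  rw [h, hbar]

lemma integral_inr {μ : Measure (Ω → ℝ)} [IsProbabilityMeasure μ]
    (hμS : μ (stdSimplex ℝ Ω) = 1) {p : Ω → ℝ} (hbar : ∫ q, q ∂μ = p) (y : Ω → ℝ) :
    ∫ q, inr y q ∂μ = inr y p := by
  unfold inr
  rw [integral_finset_sum]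
  · exact Finset.sum_congr rfl fun ω _ => by
      rw [integral_mul_const, bary_coord hμS hbar ω]
  · intro ω _
    refine integrable_of_bdd (ae_memS hμS) ((continuous_apply ω).mul continuous_const)
      (C := |y ω|) fun q hq => ?_
    rw [abs_mul]
    have h1 : |q ω| ≤ 1 := abs_le.2 ⟨by linarith [hq.1 ω], coord_le_one hq ω⟩
    nlinarith [abs_nonneg (y ω)]

lemma integrable_inr {μ : Measure (Ω → ℝ)} [IsProbabilityMeasure μ]
    (hμS : μ (stdSimplex ℝ Ω) = 1) (y : Ω → ℝ) : Integrable (inr y) μ :=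
  integrable_of_bdd (ae_memS hμS) (inr_cont y) fun q hq => inr_bdd y hq

lemma measure_invest_le {μ : Measure (Ω → ℝ)} [IsProbabilityMeasure μ]
    (hμS : μ (stdSimplex ℝ Ω) = 1) {p : Ω → ℝ} (hbar : ∫ q, q ∂μ = p)
    (r y : Ω → ℝ) (hy0 : ∀ ω, 0 ≤ y ω)
    (hyI : ∀ q ∈ stdSimplex ℝ Ω, 0 ≤ ∑ ω, q ω * r ω → 1 ≤ inr y q) :
    (μ (invest r)).toReal ≤ inr y p := by
  have hind : ∫ q, (invest r).indicator (fun _ => (1:ℝ)) q ∂μ = (μ (invest r)).toReal := by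
    rw [integral_indicator_const (1:ℝ) (measurable_invest r)]
    simp
    rfl
  rw [← integral_inr hμS hbar y, ← hind]
  refine integral_mono_ae ((integrable_const (1:ℝ)).indicator (measurable_invest r))
    (integrable_inr hμS y) ?_
  filter_upwards [ae_memS hμS] with q hq
  by_cases h : q ∈ invest r
  · rw [Set.indicator_of_mem h]
    exact hyI q hq h.2
  · rw [Set.indicator_of_notMem h]
    exact inr_nonneg hy0 hq

lemma dirac_splitting {p : Ω → ℝ} (hp : p ∈ stdSimplex ℝ Ω) :
    Measure.dirac p ∈ Splittings p :=
  ⟨inferInstance, Measure.dirac_apply_of_mem hp, integral_dirac _ p⟩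

lemma integrable_wrt_dirac {E : Type*} [NormedAddCommGroup E]
    (f : (Ω → ℝ) → E) (x : Ω → ℝ) : Integrable f (Measure.dirac x) := by
  have h : f =ᵐ[Measure.dirac x] (fun _ => f x) := by
    rw [Filter.EventuallyEq, ae_dirac_eq]
    simp
  exact (integrable_const (f x)).congr h.symm

lemma integral_twoPoint {E : Type*} [NormedAddCommGroup E] [NormedSpace ℝ E] [CompleteSpace E]
    (x z : Ω → ℝ) {a : ℝ} (ha : 0 ≤ a) (hb : 0 ≤ 1 - a) (f : (Ω → ℝ) → E) :
    ∫ q, f q ∂((ENNReal.ofReal a) • Measure.dirac x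
      + (ENNReal.ofReal (1 - a)) • Measure.dirac z) = a • f x + (1 - a) • f z := by
  rw [integral_add_measure ((integrable_wrt_dirac f x).smul_measure ENNReal.ofReal_ne_top)
    ((integrable_wrt_dirac f z).smul_measure ENNReal.ofReal_ne_top),
    integral_smul_measure, integral_smul_measure, integral_dirac, integral_dirac,
    ENNReal.toReal_ofReal ha, ENNReal.toReal_ofReal hb]

lemma twoPoint_prob (x z : Ω → ℝ) {a : ℝ} (ha : 0 ≤ a) (hb : a ≤ 1) :
    IsProbabilityMeasure ((ENNReal.ofReal a) • Measure.dirac x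
      + (ENNReal.ofReal (1 - a)) • Measure.dirac z) := by
  constructor
  rw [Measure.add_apply, Measure.smul_apply, Measure.smul_apply, measure_univ, measure_univ,
    smul_eq_mul, smul_eq_mul, mul_one, mul_one, ← ENNReal.ofReal_add ha (by linarith)]
  norm_num

lemma twoPoint_S {x z : Ω → ℝ} (hx : x ∈ stdSimplex ℝ Ω) (hz : z ∈ stdSimplex ℝ Ω)
    {a : ℝ} (ha : 0 ≤ a) (hb : a ≤ 1) :
    ((ENNReal.ofReal a) • Measure.dirac x + (ENNReal.ofReal (1 - a)) • Measure.dirac z)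
      (stdSimplex ℝ Ω) = 1 := by
  rw [Measure.add_apply, Measure.smul_apply, Measure.smul_apply,
    Measure.dirac_apply_of_mem hx, Measure.dirac_apply_of_mem hz,
    smul_eq_mul, smul_eq_mul, mul_one, mul_one, ← ENNReal.ofReal_add ha (by linarith)]
  norm_num

lemma twoPoint_splitting {p x z : Ω → ℝ} (hx : x ∈ stdSimplex ℝ Ω)
    (hz : z ∈ stdSimplex ℝ Ω) {a : ℝ} (ha : 0 ≤ a) (hb : a ≤ 1)
    (hdec : ∀ ω, p ω = a * x ω + (1 - a) * z ω) :
    ((ENNReal.ofReal a) • Measure.dirac x + (ENNReal.ofReal (1 - a)) • Measure.dirac z)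
      ∈ Splittings p := by
  refine ⟨twoPoint_prob x z ha hb, twoPoint_S hx hz ha hb, ?_⟩
  rw [integral_twoPoint x z ha (by linarith) (fun q => q)]
  funext ω
  simp only [Pi.add_apply, Pi.smul_apply, smul_eq_mul]
  exact (hdec ω).symm

lemma twoPoint_invest_ge (r : Ω → ℝ) {x : Ω → ℝ} (hx : x ∈ invest r) (z : Ω → ℝ)
    {a : ℝ} (ha : 0 ≤ a) (hb : a ≤ 1) :
    a ≤ (((ENNReal.ofReal a) • Measure.dirac x
      + (ENNReal.ofReal (1 - a)) • Measure.dirac z) (invest r)).toReal := by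
  haveI := twoPoint_prob x z ha hb
  set μ := (ENNReal.ofReal a) • Measure.dirac x + (ENNReal.ofReal (1 - a)) • Measure.dirac z
  have h1 : ENNReal.ofReal a ≤ μ (invest r) := by
    have : ENNReal.ofReal a * Measure.dirac x (invest r) ≤ μ (invest r) := by
      rw [Measure.add_apply, Measure.smul_apply, smul_eq_mul]
      exact le_add_of_nonneg_right zero_le
    rwa [Measure.dirac_apply_of_mem hx, mul_one] at this
  have h2 : μ (invest r) ≠ ⊤ := measure_ne_top μ _
  calc a = (ENNReal.ofReal a).toReal := (ENNReal.toReal_ofReal ha).symm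
    _ ≤ (μ (invest r)).toReal := ENNReal.toReal_mono h2 h1

end RSV
namespace RSV

variable [Fintype Ω] [DecidableEq Ω]

lemma phi_pt {m : Ω → ℝ} {lam : ℝ} {φ : (Ω → ℝ) → Ω → ℝ}
    (hφ : ∀ p, φ p = m + lam • (p - m)) (x : Ω → ℝ) (ω : Ω) :
    φ x ω = (1 - lam) * m ω + lam * x ω := by
  rw [hφ]
  simp only [Pi.add_apply, Pi.smul_apply, Pi.sub_apply, smul_eq_mul]
  ring

lemma phi_memS {m : Ω → ℝ} (hm : m ∈ stdSimplex ℝ Ω) {lam : ℝ} (hlam0 : 0 ≤ lam)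
    (hlam1 : lam < 1) {φ : (Ω → ℝ) → Ω → ℝ} (hφ : ∀ p, φ p = m + lam • (p - m))
    {x : Ω → ℝ} (hx : x ∈ stdSimplex ℝ Ω) : φ x ∈ stdSimplex ℝ Ω := by
  constructor
  · intro ω
    rw [phi_pt hφ]
    exact add_nonneg (mul_nonneg (by linarith) (hm.1 ω)) (mul_nonneg hlam0 (hx.1 ω))
  · rw [Finset.sum_congr rfl fun ω _ => phi_pt hφ x ω, Finset.sum_add_distrib,
      ← Finset.mul_sum, ← Finset.mul_sum, hm.2, hx.2]
    ring

lemma inr_phi (y : Ω → ℝ) {m : Ω → ℝ} {lam : ℝ} {φ : (Ω → ℝ) → Ω → ℝ}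
    (hφ : ∀ p, φ p = m + lam • (p - m)) (x : Ω → ℝ) :
    inr y (φ x) = (1 - lam) * inr y m + lam * inr y x := by
  unfold inr
  have h : ∀ ω, φ x ω * y ω = (1 - lam) * (m ω * y ω) + lam * (x ω * y ω) := fun ω => by
    rw [phi_pt hφ]; ring
  rw [Finset.sum_congr rfl fun ω _ => h ω, Finset.sum_add_distrib,
    ← Finset.mul_sum, ← Finset.mul_sum]

lemma aux_upper [Nonempty Ω] (r : Ω → ℝ) {δ : ℝ} (hδ0 : 0 ≤ δ) (hδ1 : δ < 1)
    {m : Ω → ℝ} (hm : m ∈ stdSimplex ℝ Ω) {lam : ℝ} (hlam0 : 0 ≤ lam) (hlam1 : lam < 1)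
    {φ : (Ω → ℝ) → Ω → ℝ} (hφ : ∀ p, φ p = m + lam • (p - m))
    (y : Ω → ℝ) (hy0 : ∀ ω, 0 ≤ y ω)
    (hyI : ∀ q ∈ stdSimplex ℝ Ω, 0 ≤ ∑ ω, q ω * r ω → 1 ≤ inr y q)
    (V : (Ω → ℝ) → ℝ) {CV : ℝ} (hV : ∀ p ∈ stdSimplex ℝ Ω, |V p| ≤ CV)
    (hDPP : SatisfiesDPP r δ φ V) : V m ≤ inr y m := by
  have hdl : 0 < 1 - δ * lam := by nlinarith
  set Lm := inr y m with hLm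
  set Wb := (1 - δ) / (1 - δ * lam) with hWb
  set Wc := δ * (1 - lam) * Lm / (1 - δ * lam) with hWc
  have hLm0 : 0 ≤ Lm := inr_nonneg hy0 hm
  have hWb0 : 0 ≤ Wb := by
    rw [hWb]; apply div_nonneg <;> linarith
  have hWc0 : 0 ≤ Wc := by
    rw [hWc]; apply div_nonneg ?_ (by linarith)
    apply mul_nonneg (mul_nonneg hδ0 (by linarith)) hLm0
  have hkey : ∀ x : ℝ, (1 - δ) * x + δ * (Wc + Wb * ((1 - lam) * Lm + lam * x))
      = Wc + Wb * x := fun x => Wkey hδ0 hδ1 hlam0 hlam1 x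
  have hW0 : ∀ p ∈ stdSimplex ℝ Ω, 0 ≤ Wc + Wb * inr y p := fun p hp =>
    add_nonneg hWc0 (mul_nonneg hWb0 (inr_nonneg hy0 hp))
  set A := sSup ((fun p => V p - (Wc + Wb * inr y p)) '' stdSimplex ℝ Ω) with hA_def
  have hAub : BddAbove ((fun p => V p - (Wc + Wb * inr y p)) '' stdSimplex ℝ Ω) := by
    refine ⟨CV, ?_⟩
    rintro x ⟨p, hp, rfl⟩
    have h1 := (abs_le.1 (hV p hp)).2
    have h2 := hW0 p hp
    simp only
    linarith
  have hAne : ((fun p => V p - (Wc + Wb * inr y p)) '' stdSimplex ℝ Ω).Nonempty :=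
    ⟨_, ⟨m, hm, rfl⟩⟩
  have hA : ∀ p ∈ stdSimplex ℝ Ω, V p - (Wc + Wb * inr y p) ≤ A := fun p hp =>
    le_csSup hAub ⟨p, hp, rfl⟩
  have hclaim : ∀ p ∈ stdSimplex ℝ Ω, V p ≤ Wc + Wb * inr y p + δ * max A 0 := by
    intro p hp
    rw [hDPP p hp]
    apply Real.sSup_le
    · rintro x ⟨μ, hμ, rfl⟩
      obtain ⟨hprob, hμS, hbar⟩ := hμ
      haveI := hprob
      unfold dppPayoff
      rw [restrict_eq hμS]
      have h1 : (μ (invest r)).toReal ≤ inr y p := measure_invest_le hμS hbar r y hy0 hyI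
      have hgint : Integrable
          (fun q => Wc + Wb * (1 - lam) * Lm + max A 0 + Wb * lam * inr y q) μ :=
        (integrable_const _).add (((integrable_inr hμS y).const_mul _))
      have hg : ∫ q, (Wc + Wb * (1 - lam) * Lm + max A 0 + Wb * lam * inr y q) ∂μ
          = Wc + Wb * (1 - lam) * Lm + max A 0 + Wb * lam * inr y p := by
        rw [integral_add (integrable_const _) ((integrable_inr hμS y).const_mul _),
          integral_const, integral_const_mul, integral_inr hμS hbar y]
        simp
      have h2 : ∫ q, V (φ q) ∂μ
          ≤ Wc + Wb * ((1 - lam) * Lm + lam * inr y p) + max A 0 := by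
        have hRHS : Wc + Wb * (1 - lam) * Lm + max A 0 + Wb * lam * inr y p
            = Wc + Wb * ((1 - lam) * Lm + lam * inr y p) + max A 0 := by ring
        by_cases hint : Integrable (fun q => V (φ q)) μ
        · have hpt : ∀ᵐ q ∂μ, V (φ q)
              ≤ Wc + Wb * (1 - lam) * Lm + max A 0 + Wb * lam * inr y q := by
            filter_upwards [ae_memS hμS] with q hq
            have h3 := hA (φ q) (phi_memS hm hlam0 hlam1 hφ hq)
            rw [inr_phi y hφ q] at h3
            have h4 := le_max_left A 0
            nlinarith
          have h5 := integral_mono_ae hint hgint hpt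
          rw [hg, hRHS] at h5
          exact h5
        · rw [integral_undef hint, ← hRHS]
          have h6 : 0 ≤ Wb * lam * inr y p :=
            mul_nonneg (mul_nonneg hWb0 hlam0) (inr_nonneg hy0 hp)
          have h7 : 0 ≤ Wb * (1 - lam) * Lm :=
            mul_nonneg (mul_nonneg hWb0 (by linarith)) hLm0
          have h8 := le_max_right A 0
          linarith
      have hkp := hkey (inr y p)
      have hstep1 : (1 - δ) * (μ (invest r)).toReal + δ * ∫ q, V (φ q) ∂μ
          ≤ (1 - δ) * inr y p
            + δ * (Wc + Wb * ((1 - lam) * Lm + lam * inr y p) + max A 0) :=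
        add_le_add (mul_le_mul_of_nonneg_left h1 (by linarith))
          (mul_le_mul_of_nonneg_left h2 hδ0)
      nlinarith
    · have h8 := le_max_right A 0
      have := hW0 p hp
      nlinarith
  have hAle : A ≤ δ * max A 0 := by
    apply csSup_le hAne
    rintro x ⟨p, hp, rfl⟩
    have := hclaim p hp
    simp only
    linarith
  have hA0 : A ≤ 0 := contract hδ0 hδ1 hAle
  have hm1 := hA m hm
  have hWm : Wc + Wb * Lm = Lm := by
    rw [hWc, hWb]
    field_simp
    ring
  linarith [hm1, hWm, hA0]

end RSV
namespace RSV

variable [Fintype Ω] [DecidableEq Ω] {K : ℕ}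
variable {r : Ω → ℝ} {e : Fin K → Ω} {j : Fin K}

lemma phi_memT (he_range : ∀ ω, r ω < 0 ↔ ω ∈ Set.range e) {m : Ω → ℝ}
    (hmT : m ∈ Tset r e j) {lam : ℝ} (hlam0 : 0 ≤ lam) (hlam1 : lam < 1)
    {φ : (Ω → ℝ) → Ω → ℝ} (hφ : ∀ p, φ p = m + lam • (p - m))
    {x : Ω → ℝ} (hx : x ∈ stdSimplex ℝ Ω)
    (h1 : ∀ k : ℕ, 1 ≤ k → k ≤ (j : ℕ) → 0 ≤ Lfun r e k x)
    (h2 : Lfun r e ((j : ℕ) + 1) x ≤ 0) : φ x ∈ Tset r e j := by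
  have hfe : φ x = fun ω => (1 - lam) * m ω + lam * x ω := funext fun ω => phi_pt hφ x ω
  rw [hfe]
  exact memT_phi he_range hmT hlam0 hlam1 hx h1 h2

lemma phi_memT_self (he_range : ∀ ω, r ω < 0 ↔ ω ∈ Set.range e) {m : Ω → ℝ}
    (hmT : m ∈ Tset r e j) {lam : ℝ} (hlam0 : 0 ≤ lam) (hlam1 : lam < 1)
    {φ : (Ω → ℝ) → Ω → ℝ} (hφ : ∀ p, φ p = m + lam • (p - m))
    {p : Ω → ℝ} (hp : p ∈ Tset r e j) : φ p ∈ Tset r e j :=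
  phi_memT he_range hmT hlam0 hlam1 hφ hp.1
    (fun k hk1 hk2 => le_of_lt (hp.2.1 k hk1 hk2)) hp.2.2

/-- The three possible shapes of the greedy step at a point of `T`. -/
lemma greedy_step (he_inj : Function.Injective e)
    (he_range : ∀ ω, r ω < 0 ↔ ω ∈ Set.range e) (he_anti : Antitone fun i => r (e i))
    {m : Ω → ℝ} (hmT : m ∈ Tset r e j) {lam : ℝ} (hlam0 : 0 ≤ lam) (hlam1 : lam < 1)
    {φ : (Ω → ℝ) → Ω → ℝ} (hφ : ∀ p, φ p = m + lam • (p - m))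
    {p : Ω → ℝ} (hp : p ∈ Tset r e j) :
    (p ∈ invest r ∧ inr (yfun r e j) p = 1 ∧ φ p ∈ Tset r e j)
    ∨ (inr r p < 0 ∧ aI r e p = 0 ∧ inr (yfun r e j) p = 0 ∧ qJ r e p = p
        ∧ φ p ∈ Tset r e j)
    ∨ (inr r p < 0 ∧ 0 < aI r e p ∧ aI r e p < 1
        ∧ inr (yfun r e j) p = aI r e p
        ∧ qI r e p ∈ stdSimplex ℝ Ω ∧ qJ r e p ∈ stdSimplex ℝ Ω
        ∧ qI r e p ∈ invest r
        ∧ inr (yfun r e j) (qI r e p) = 1 ∧ inr (yfun r e j) (qJ r e p) = 0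
        ∧ (∀ ω, p ω = aI r e p * qI r e p ω + (1 - aI r e p) * qJ r e p ω)
        ∧ φ (qI r e p) ∈ Tset r e j ∧ φ (qJ r e p) ∈ Tset r e j) := by
  have hTphi := phi_memT_self he_range hmT hlam0 hlam1 hφ hp
  rcases lt_or_eq_of_le (Tset_inr_nonpos he_inj he_range hp) with hlt | heq0
  · rcases eq_or_lt_of_le (aI_nonneg he_inj he_range hp) with ha0 | ha0
    · obtain ⟨hπ0, hqJ⟩ := piStar_zero_of_aI_zero he_inj he_range hp ha0.symm
      refine Or.inr (Or.inl ⟨hlt, ha0.symm, ?_, hqJ, hTphi⟩)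
      rw [inr_y_eq_aI he_inj he_range he_anti hp, ← ha0]
    · have ha1 := aI_lt_one he_inj he_range hp hlt
      have hqIS := qI_mem he_inj he_range hp ha0
      have hqJS := qJ_mem he_inj he_range hp ha1
      refine Or.inr (Or.inr ⟨hlt, ha0, ha1,
        inr_y_eq_aI he_inj he_range he_anti hp, hqIS, hqJS,
        ⟨hqIS, le_of_eq (inr_r_qI he_inj he_range hp).symm⟩,
        inr_y_qI he_inj he_range he_anti hp ha0,
        inr_y_qJ he_inj he_range he_anti hp,
        decomp ha0 ha1, ?_, ?_⟩)
      · exact phi_memT he_range hmT hlam0 hlam1 hφ hqIS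
          (fun k _ hk2 => Lfun_qI_nonneg he_inj he_range hp ha0 hk2)
          (le_of_eq (Lfun_qI_succ he_inj he_range hp))
      · exact phi_memT he_range hmT hlam0 hlam1 hφ hqJS
          (fun k _ hk2 => le_of_eq (Lfun_qJ_eq_zero he_inj he_range hp hk2).symm)
          (Lfun_qJ_succ he_inj he_range hp ha1)
  · refine Or.inl ⟨⟨hp.1, le_of_eq heq0.symm⟩, ?_, hTphi⟩
    rw [inr_y_eq_aI he_inj he_range he_anti hp,
      aI_eq_one he_inj he_range hp heq0]

end RSV
namespace RSV

variable [Fintype Ω] [DecidableEq Ω] {K : ℕ}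
variable {r : Ω → ℝ} {e : Fin K → Ω} {j : Fin K}

lemma aux_gamma (he_inj : Function.Injective e)
    (he_range : ∀ ω, r ω < 0 ↔ ω ∈ Set.range e) (he_anti : Antitone fun i => r (e i))
    {δ : ℝ} (hδ0 : 0 ≤ δ) (hδ1 : δ < 1)
    {m : Ω → ℝ} (hmT : m ∈ Tset r e j) {lam : ℝ} (hlam0 : 0 ≤ lam) (hlam1 : lam < 1)
    {φ : (Ω → ℝ) → Ω → ℝ} (hφ : ∀ p, φ p = m + lam • (p - m))
    (γ : (Ω → ℝ) → ℝ) {Cg : ℝ} (hγb : ∀ p ∈ stdSimplex ℝ Ω, |γ p| ≤ Cg)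
    (hγI : ∀ p ∈ invest r, γ p = (1 - δ) + δ * γ (φ p))
    (hγJ : ∀ p ∈ stdSimplex ℝ Ω, ∑ ω, p ω * r ω < 0 →
      γ p = aI r e p * ((1 - δ) + δ * γ (φ (qI r e p)))
        + (1 - aI r e p) * (δ * γ (φ (qJ r e p)))) :
    γ m = inr (yfun r e j) m := by
  set y := yfun r e j with hy_def
  have hy0 : ∀ ω, 0 ≤ y ω := yfun_nonneg
  have hdl : 0 < 1 - δ * lam := by nlinarith
  set Lm := inr y m with hLm
  set Wb := (1 - δ) / (1 - δ * lam) with hWb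
  set Wc := δ * (1 - lam) * Lm / (1 - δ * lam) with hWc
  have hkey : ∀ x : ℝ, (1 - δ) * x + δ * (Wc + Wb * ((1 - lam) * Lm + lam * x))
      = Wc + Wb * x := fun x => Wkey hδ0 hδ1 hlam0 hlam1 x
  have hWbd : ∀ p ∈ stdSimplex ℝ Ω, |γ p - (Wc + Wb * inr y p)|
      ≤ Cg + |Wc| + |Wb| * ∑ ω, |y ω| := by
    intro p hp
    have h1 := hγb p hp
    have h2 := inr_bdd y (q := p) hp
    have h3 : |Wb * inr y p| ≤ |Wb| * ∑ ω, |y ω| := by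
      rw [abs_mul]
      exact mul_le_mul_of_nonneg_left h2 (abs_nonneg _)
    calc |γ p - (Wc + Wb * inr y p)| ≤ |γ p| + |Wc + Wb * inr y p| := abs_sub _ _
      _ ≤ |γ p| + (|Wc| + |Wb * inr y p|) := by linarith [abs_add_le Wc (Wb * inr y p)]
      _ ≤ Cg + |Wc| + |Wb| * ∑ ω, |y ω| := by linarith
  set D := sSup ((fun p => |γ p - (Wc + Wb * inr y p)|) '' Tset r e j) with hD_def
  have hDub : BddAbove ((fun p => |γ p - (Wc + Wb * inr y p)|) '' Tset r e j) := by
    refine ⟨Cg + |Wc| + |Wb| * ∑ ω, |y ω|, ?_⟩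
    rintro x ⟨p, hp, rfl⟩
    exact hWbd p hp.1
  have hD : ∀ p ∈ Tset r e j, |γ p - (Wc + Wb * inr y p)| ≤ D := fun p hp =>
    le_csSup hDub ⟨p, hp, rfl⟩
  have hD0 : 0 ≤ D := le_trans (abs_nonneg _) (hD m hmT)
  have hclaim : ∀ p ∈ Tset r e j, |γ p - (Wc + Wb * inr y p)| ≤ δ * D := by
    intro p hp
    rcases greedy_step he_inj he_range he_anti hmT hlam0 hlam1 hφ hp
      with ⟨hinv, hl1, hfT⟩ | ⟨hlt, ha0, hl0, hqJ, hfT⟩ |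
        ⟨hlt, ha0, ha1, hlp, hqIS, hqJS, hqIinv, hlqI, hlqJ, hdec, hTI, hTJ⟩
    · have hID : γ p - (Wc + Wb * inr y p)
          = δ * (γ (φ p) - (Wc + Wb * inr y (φ p))) := by
        rw [hγI p hinv, inr_phi y hφ p, hl1]
        linear_combination hkey 1
      rw [hID, abs_mul, abs_of_nonneg hδ0]
      exact mul_le_mul_of_nonneg_left (hD _ hfT) hδ0
    · have hg2 : γ p = δ * γ (φ p) := by
        rw [hγJ p hp.1 hlt, ha0, hqJ]
        ring
      have hID : γ p - (Wc + Wb * inr y p)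
          = δ * (γ (φ p) - (Wc + Wb * inr y (φ p))) := by
        rw [hg2, inr_phi y hφ p, hl0]
        linear_combination hkey 0
      rw [hID, abs_mul, abs_of_nonneg hδ0]
      exact mul_le_mul_of_nonneg_left (hD _ hfT) hδ0
    · have hID : γ p - (Wc + Wb * inr y p)
          = δ * (aI r e p * (γ (φ (qI r e p)) - (Wc + Wb * inr y (φ (qI r e p))))
            + (1 - aI r e p) * (γ (φ (qJ r e p)) - (Wc + Wb * inr y (φ (qJ r e p))))) := by
        rw [hγJ p hp.1 hlt, inr_phi y hφ (qI r e p), inr_phi y hφ (qJ r e p),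
          hlqI, hlqJ, hlp]
        linear_combination hkey (aI r e p)
      rw [hID, abs_mul, abs_of_nonneg hδ0]
      refine mul_le_mul_of_nonneg_left ?_ hδ0
      have hb0 : (0:ℝ) ≤ 1 - aI r e p := by linarith
      calc |aI r e p * (γ (φ (qI r e p)) - (Wc + Wb * inr y (φ (qI r e p))))
            + (1 - aI r e p) * (γ (φ (qJ r e p)) - (Wc + Wb * inr y (φ (qJ r e p))))|
          ≤ |aI r e p * (γ (φ (qI r e p)) - (Wc + Wb * inr y (φ (qI r e p))))|
            + |(1 - aI r e p) * (γ (φ (qJ r e p)) - (Wc + Wb * inr y (φ (qJ r e p))))| :=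
            abs_add_le _ _
        _ = aI r e p * |γ (φ (qI r e p)) - (Wc + Wb * inr y (φ (qI r e p)))|
            + (1 - aI r e p) * |γ (φ (qJ r e p)) - (Wc + Wb * inr y (φ (qJ r e p)))| := by
            rw [abs_mul, abs_mul, abs_of_nonneg (le_of_lt ha0), abs_of_nonneg hb0]
        _ ≤ aI r e p * D + (1 - aI r e p) * D :=
            add_le_add (mul_le_mul_of_nonneg_left (hD _ hTI) (le_of_lt ha0))
              (mul_le_mul_of_nonneg_left (hD _ hTJ) hb0)
        _ = D := by ring
  have hDle : D ≤ δ * D := by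
    refine csSup_le ⟨_, Set.mem_image_of_mem _ hmT⟩ ?_
    rintro x ⟨p, hp, rfl⟩
    exact hclaim p hp
  have hDz : D ≤ 0 := by nlinarith
  have hm1 := hD m hmT
  have hWm : Wc + Wb * Lm = Lm := by
    rw [hWc, hWb]
    field_simp
    ring
  have habs : |γ m - (Wc + Wb * Lm)| = 0 := le_antisymm (le_trans hm1 hDz) (abs_nonneg _)
  have := abs_eq_zero.1 habs
  linarith [hWm, this]

end RSV
namespace RSV

variable [Fintype Ω] [DecidableEq Ω]

lemma payoff_le (r : Ω → ℝ) {δ : ℝ} (hδ0 : 0 ≤ δ) (hδ1 : δ < 1)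
    {m : Ω → ℝ} (hm : m ∈ stdSimplex ℝ Ω) {lam : ℝ} (hlam0 : 0 ≤ lam) (hlam1 : lam < 1)
    {φ : (Ω → ℝ) → Ω → ℝ} (hφ : ∀ p, φ p = m + lam • (p - m))
    (V : (Ω → ℝ) → ℝ) {CV : ℝ} (hCV0 : 0 ≤ CV) (hV : ∀ p ∈ stdSimplex ℝ Ω, |V p| ≤ CV)
    {p : Ω → ℝ} {μ : Measure (Ω → ℝ)} (hμ : μ ∈ Splittings p) :
    dppPayoff r δ φ V μ ≤ (1 - δ) + δ * CV := by
  obtain ⟨hprob, hμS, hbar⟩ := hμ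
  haveI := hprob
  unfold dppPayoff
  have h1 : (μ (invest r)).toReal ≤ 1 := by
    have h : μ (invest r) ≤ 1 := le_trans (measure_mono (Set.subset_univ _))
      (le_of_eq measure_univ)
    simpa using ENNReal.toReal_mono ENNReal.one_ne_top h
  have h2 : ∫ q in stdSimplex ℝ Ω, V (φ q) ∂μ ≤ CV := by
    have hb : ‖∫ q in stdSimplex ℝ Ω, V (φ q) ∂μ‖
        ≤ CV * (μ.restrict (stdSimplex ℝ Ω) Set.univ).toReal := by
      apply norm_integral_le_of_norm_le_const
      filter_upwards [ae_restrict_mem measurable_S] with q hq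
      rw [Real.norm_eq_abs]
      exact hV _ (phi_memS hm hlam0 hlam1 hφ hq)
    rw [Measure.restrict_apply_univ, hμS] at hb
    simp only [ENNReal.toReal_one, mul_one] at hb
    exact le_trans (le_abs_self _) (by simpa using hb)
  have h3 : (0:ℝ) ≤ (μ (invest r)).toReal := ENNReal.toReal_nonneg
  nlinarith

lemma V_ge (r : Ω → ℝ) {δ : ℝ} (hδ0 : 0 ≤ δ) (hδ1 : δ < 1)
    {m : Ω → ℝ} (hm : m ∈ stdSimplex ℝ Ω) {lam : ℝ} (hlam0 : 0 ≤ lam) (hlam1 : lam < 1)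
    {φ : (Ω → ℝ) → Ω → ℝ} (hφ : ∀ p, φ p = m + lam • (p - m))
    (V : (Ω → ℝ) → ℝ) {CV : ℝ} (hCV0 : 0 ≤ CV) (hV : ∀ p ∈ stdSimplex ℝ Ω, |V p| ≤ CV)
    (hDPP : SatisfiesDPP r δ φ V)
    {p : Ω → ℝ} (hp : p ∈ stdSimplex ℝ Ω) {μ : Measure (Ω → ℝ)}
    (hμ : μ ∈ Splittings p) : dppPayoff r δ φ V μ ≤ V p := by
  rw [hDPP p hp]
  refine le_csSup ⟨(1 - δ) + δ * CV, ?_⟩ (Set.mem_image_of_mem _ hμ)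
  rintro x ⟨ν, hν, rfl⟩
  exact payoff_le r hδ0 hδ1 hm hlam0 hlam1 hφ V hCV0 hV hν

lemma dpp_dirac (r : Ω → ℝ) (δ : ℝ) (φ : (Ω → ℝ) → Ω → ℝ) (V : (Ω → ℝ) → ℝ)
    {p : Ω → ℝ} (hp : p ∈ stdSimplex ℝ Ω) :
    dppPayoff r δ φ V (Measure.dirac p)
      = (1 - δ) * ((Measure.dirac p) (invest r)).toReal + δ * V (φ p) := by
  unfold dppPayoff
  congr 1
  rw [restrict_eq (Measure.dirac_apply_of_mem hp), integral_dirac]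

lemma dpp_two (r : Ω → ℝ) (δ : ℝ) (φ : (Ω → ℝ) → Ω → ℝ) (V : (Ω → ℝ) → ℝ)
    {x z : Ω → ℝ} (hx : x ∈ stdSimplex ℝ Ω) (hz : z ∈ stdSimplex ℝ Ω)
    {a : ℝ} (ha : 0 ≤ a) (hb : a ≤ 1) :
    dppPayoff r δ φ V ((ENNReal.ofReal a) • Measure.dirac x
        + (ENNReal.ofReal (1 - a)) • Measure.dirac z)
      = (1 - δ) * (((ENNReal.ofReal a) • Measure.dirac x
          + (ENNReal.ofReal (1 - a)) • Measure.dirac z) (invest r)).toReal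
        + δ * (a * V (φ x) + (1 - a) * V (φ z)) := by
  unfold dppPayoff
  haveI := twoPoint_prob x z ha hb
  congr 1
  rw [restrict_eq (twoPoint_S hx hz ha hb),
    integral_twoPoint x z ha (by linarith) (fun q => V (φ q))]
  simp [smul_eq_mul]

variable {K : ℕ} {r : Ω → ℝ} {e : Fin K → Ω} {j : Fin K}

lemma aux_lower (he_inj : Function.Injective e)
    (he_range : ∀ ω, r ω < 0 ↔ ω ∈ Set.range e) (he_anti : Antitone fun i => r (e i))
    {δ : ℝ} (hδ0 : 0 ≤ δ) (hδ1 : δ < 1)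
    {m : Ω → ℝ} (hmT : m ∈ Tset r e j) {lam : ℝ} (hlam0 : 0 ≤ lam) (hlam1 : lam < 1)
    {φ : (Ω → ℝ) → Ω → ℝ} (hφ : ∀ p, φ p = m + lam • (p - m))
    (V : (Ω → ℝ) → ℝ) {CV : ℝ} (hV : ∀ p ∈ stdSimplex ℝ Ω, |V p| ≤ CV)
    (hDPP : SatisfiesDPP r δ φ V) : inr (yfun r e j) m ≤ V m := by
  have hm := hmT.1
  have hCV0 : 0 ≤ CV := le_trans (abs_nonneg _) (hV m hm)
  set y := yfun r e j with hy_def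
  have hy0 : ∀ ω, 0 ≤ y ω := yfun_nonneg
  have hdl : 0 < 1 - δ * lam := by nlinarith
  set Lm := inr y m with hLm
  set Wb := (1 - δ) / (1 - δ * lam) with hWb
  set Wc := δ * (1 - lam) * Lm / (1 - δ * lam) with hWc
  have hkey : ∀ x : ℝ, (1 - δ) * x + δ * (Wc + Wb * ((1 - lam) * Lm + lam * x))
      = Wc + Wb * x := fun x => Wkey hδ0 hδ1 hlam0 hlam1 x
  set E := sSup ((fun p => (Wc + Wb * inr y p) - V p) '' Tset r e j) with hE_def
  have hEub : BddAbove ((fun p => (Wc + Wb * inr y p) - V p) '' Tset r e j) := by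
    refine ⟨|Wc| + |Wb| * ∑ ω, |y ω| + CV, ?_⟩
    rintro x ⟨p, hp, rfl⟩
    have h1 := (abs_le.1 (hV p hp.1)).1
    have h2 := inr_bdd y (q := p) hp.1
    have h3 : Wb * inr y p ≤ |Wb| * ∑ ω, |y ω| := by
      refine le_trans (le_abs_self _) ?_
      rw [abs_mul]
      exact mul_le_mul_of_nonneg_left h2 (abs_nonneg _)
    have h4 : Wc ≤ |Wc| := le_abs_self _
    show Wc + Wb * inr y p - V p ≤ _
    linarith
  have hE : ∀ p ∈ Tset r e j, (Wc + Wb * inr y p) - V p ≤ E := fun p hp =>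
    le_csSup hEub ⟨p, hp, rfl⟩
  set M := max E 0 with hM
  have hM0 : 0 ≤ M := le_max_right _ _
  have hEM : E ≤ M := le_max_left _ _
  have hclaim : ∀ p ∈ Tset r e j, (Wc + Wb * inr y p) - V p ≤ δ * M := by
    intro p hp
    rcases greedy_step he_inj he_range he_anti hmT hlam0 hlam1 hφ hp
      with ⟨hinv, hl1, hfT⟩ | ⟨hlt, ha0, hl0, hqJp, hfT⟩ |
        ⟨hlt, ha0, ha1, hlp, hqIS, hqJS, hqIinv, hlqI, hlqJ, hdec, hTI, hTJ⟩
    · have hsp := dirac_splitting hp.1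
      have hval := V_ge r hδ0 hδ1 hm hlam0 hlam1 hφ V hCV0 hV hDPP hp.1 hsp
      rw [dpp_dirac r δ φ V hp.1, Measure.dirac_apply_of_mem hinv] at hval
      simp only [ENNReal.toReal_one, mul_one] at hval
      have hWφ : (Wc + Wb * inr y (φ p)) - V (φ p) ≤ M := le_trans (hE _ hfT) hEM
      have heq : Wc + Wb * inr y p
          = (1 - δ) * 1 + δ * (Wc + Wb * inr y (φ p)) := by
        rw [inr_phi y hφ p, hl1]
        linear_combination -hkey 1
      have hmul := mul_le_mul_of_nonneg_left hWφ hδ0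
      linarith
    · have hsp := dirac_splitting hp.1
      have hval := V_ge r hδ0 hδ1 hm hlam0 hlam1 hφ V hCV0 hV hDPP hp.1 hsp
      have hnotin : p ∉ invest r := by
        intro hc
        have := hc.2
        unfold inr at hlt
        linarith
      rw [dpp_dirac r δ φ V hp.1, Measure.dirac_apply' _ (measurable_invest r),
        Set.indicator_of_notMem hnotin] at hval
      simp only [ENNReal.toReal_zero, mul_zero, zero_add] at hval
      have hWφ : (Wc + Wb * inr y (φ p)) - V (φ p) ≤ M := le_trans (hE _ hfT) hEM
      have heq : Wc + Wb * inr y p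
          = (1 - δ) * 0 + δ * (Wc + Wb * inr y (φ p)) := by
        rw [inr_phi y hφ p, hl0]
        linear_combination -hkey 0
      have hmul := mul_le_mul_of_nonneg_left hWφ hδ0
      linarith
    · have hb0 : (0:ℝ) ≤ 1 - aI r e p := by linarith
      have hsp := twoPoint_splitting hqIS hqJS (le_of_lt ha0) (le_of_lt ha1) hdec
      have hval := V_ge r hδ0 hδ1 hm hlam0 hlam1 hφ V hCV0 hV hDPP hp.1 hsp
      rw [dpp_two r δ φ V hqIS hqJS (le_of_lt ha0) (le_of_lt ha1)] at hval
      have hmeas := twoPoint_invest_ge r hqIinv (qJ r e p) (le_of_lt ha0) (le_of_lt ha1)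
      have hWI : (Wc + Wb * inr y (φ (qI r e p))) - V (φ (qI r e p)) ≤ M :=
        le_trans (hE _ hTI) hEM
      have hWJ : (Wc + Wb * inr y (φ (qJ r e p))) - V (φ (qJ r e p)) ≤ M :=
        le_trans (hE _ hTJ) hEM
      have heq : Wc + Wb * inr y p
          = (1 - δ) * aI r e p
            + δ * (aI r e p * (Wc + Wb * inr y (φ (qI r e p)))
              + (1 - aI r e p) * (Wc + Wb * inr y (φ (qJ r e p)))) := by
        rw [inr_phi y hφ (qI r e p), inr_phi y hφ (qJ r e p), hlqI, hlqJ, hlp]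
        linear_combination -hkey (aI r e p)
      have hmulI := mul_le_mul_of_nonneg_left
        (mul_le_mul_of_nonneg_left hWI (le_of_lt ha0)) hδ0
      have hmulJ := mul_le_mul_of_nonneg_left
        (mul_le_mul_of_nonneg_left hWJ hb0) hδ0
      have hmeas' := mul_le_mul_of_nonneg_left hmeas (by linarith : (0:ℝ) ≤ 1 - δ)
      linarith
  have hEle : E ≤ δ * M := by
    refine csSup_le ⟨_, Set.mem_image_of_mem _ hmT⟩ ?_
    rintro x ⟨p, hp, rfl⟩
    exact hclaim p hp
  have hE0 : E ≤ 0 := contract hδ0 hδ1 hEle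
  have hm1 := hE m hmT
  have hWm : Wc + Wb * Lm = Lm := by
    rw [hWc, hWb]
    field_simp
    ring
  linarith [hm1, hWm, hE0]

end RSV

/-- when `φ` is the homothety with center the invariant distribution `m` and
ratio `λ ∈ [0,1)`, the greedy strategy is optimal for the initial distribution `m`: every
bounded solution `V` of the dynamic programming equation satisfies `V(m) = γ(m)`, where `γ`
is the greedy payoff. -/
theorem greedy_optimal_at_invariant [Fintype Ω] [DecidableEq Ω] [Nonempty Ω] {K : ℕ}
    (r : Ω → ℝ) (e : Fin K → Ω)
    (hK : 0 < K) (hplus : ∃ ω, 0 ≤ r ω)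
    (he_inj : Function.Injective e)
    (he_range : ∀ ω, r ω < 0 ↔ ω ∈ Set.range e)
    (he_anti : Antitone fun i => r (e i))
    (δ : ℝ) (hδ : δ ∈ Ico (0 : ℝ) 1)
    (m : Ω → ℝ) (hm : m ∈ stdSimplex ℝ Ω)
    (lam : ℝ) (hlam : lam ∈ Ico (0 : ℝ) 1)
    (φ : (Ω → ℝ) → Ω → ℝ) (hφ : ∀ p, φ p = m + lam • (p - m))
    (γ : (Ω → ℝ) → ℝ)
    (hγb : ∃ C, ∀ p ∈ stdSimplex ℝ Ω, |γ p| ≤ C)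
    (hγI : ∀ p ∈ invest r, γ p = (1 - δ) + δ * γ (φ p))
    (hγJ : ∀ p ∈ stdSimplex ℝ Ω, ∑ ω, p ω * r ω < 0 →
      γ p = aI r e p * ((1 - δ) + δ * γ (φ (qI r e p)))
        + (1 - aI r e p) * (δ * γ (φ (qJ r e p)))) :
    ∀ V : (Ω → ℝ) → ℝ, (∃ C, ∀ p ∈ stdSimplex ℝ Ω, |V p| ≤ C) →
      SatisfiesDPP r δ φ V → V m = γ m := by
  intro V hVb hDPP
  obtain ⟨CV, hV⟩ := hVb
  obtain ⟨Cg, hγ⟩ := hγb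
  obtain ⟨hδ0, hδ1⟩ := hδ
  obtain ⟨hlam0, hlam1⟩ := hlam
  have hCV0 : 0 ≤ CV := le_trans (abs_nonneg _) (hV m hm)
  have hφm : φ m = m := by rw [hφ m]; simp
  by_cases hc : 0 ≤ ∑ ω, m ω * r ω
  · -- the invariant distribution lies in the investment region
    have hminv : m ∈ invest r := ⟨hm, hc⟩
    have hg : γ m = (1 - δ) + δ * γ m := by
      have := hγI m hminv
      rwa [hφm] at this
    have hγm : γ m = 1 := by
      have h2 : (1 - δ) * γ m = (1 - δ) * 1 := by linarith
      exact mul_left_cancel₀ (by linarith : (1:ℝ) - δ ≠ 0) h2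
    have hyI : ∀ q ∈ stdSimplex ℝ Ω, 0 ≤ ∑ ω, q ω * r ω →
        1 ≤ RSV.inr (fun _ => (1:ℝ)) q := by
      intro q hq _
      unfold RSV.inr
      simp only [mul_one]
      rw [hq.2]
    have hup := RSV.aux_upper r hδ0 hδ1 hm hlam0 hlam1 hφ (fun _ => (1:ℝ))
      (fun _ => zero_le_one) hyI V hV hDPP
    have h1 : RSV.inr (fun _ => (1:ℝ)) m = 1 := by
      unfold RSV.inr
      simp only [mul_one]
      exact hm.2
    rw [h1] at hup
    have hsp := RSV.dirac_splitting hm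
    have hval := RSV.V_ge r hδ0 hδ1 hm hlam0 hlam1 hφ V hCV0 hV hDPP hm hsp
    rw [RSV.dpp_dirac r δ φ V hm, Measure.dirac_apply_of_mem hminv, hφm] at hval
    simp only [ENNReal.toReal_one, mul_one] at hval
    have hVlo : 1 ≤ V m := by nlinarith
    rw [hγm]
    linarith
  · push_neg at hc
    obtain ⟨j, hmT⟩ := RSV.m_mem_T he_inj he_range hK hm hc
    have hrj := RSV.rej_neg (r := r) he_range j
    have hyI : ∀ q ∈ stdSimplex ℝ Ω, 0 ≤ ∑ ω, q ω * r ω →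
        1 ≤ RSV.inr (RSV.yfun r e j) q := by
      intro q hq hqr
      have h2 : ∑ ω, q ω * (1 - r ω / r (e j)) ≤ RSV.inr (RSV.yfun r e j) q :=
        Finset.sum_le_sum fun ω _ =>
          mul_le_mul_of_nonneg_left (RSV.yfun_ge he_range ω) (hq.1 ω)
      have h3 : ∑ ω, q ω * (1 - r ω / r (e j)) = 1 - (∑ ω, q ω * r ω) / r (e j) := by
        have hpt : ∀ ω, q ω * (1 - r ω / r (e j)) = q ω - (q ω * r ω) / r (e j) := by
          intro ω; ring
        rw [Finset.sum_congr rfl fun ω _ => hpt ω, Finset.sum_sub_distrib,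
          ← Finset.sum_div, hq.2]
      have h5 : (∑ ω, q ω * r ω) / r (e j) ≤ 0 := by
        rcases eq_or_lt_of_le hqr with h | h
        · rw [← h]; simp
        · exact le_of_lt (div_neg_of_pos_of_neg h hrj)
      rw [h3] at h2
      linarith
    have hup := RSV.aux_upper r hδ0 hδ1 hm hlam0 hlam1 hφ (RSV.yfun r e j)
      RSV.yfun_nonneg hyI V hV hDPP
    have hlo := RSV.aux_lower he_inj he_range he_anti hδ0 hδ1 hmT hlam0 hlam1 hφ
      V hV hDPP
    have hgm := RSV.aux_gamma he_inj he_range he_anti hδ0 hδ1 hmT hlam0 hlam1 hφ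
      γ hγ hγI hγJ
    rw [hgm]
    exact le_antisymm hup hlo


end
end

section
/- Suppose φ is the homothety with center m ∈ Δ(Ω) and ratio λ ∈ [0,1), and suppose m ∈ Ō(k) for some 1 ≤ k ≤ K. Then for every p ∈ Ō(k), the greedy payoff achieves the first-best upper bound: γ(p) = γ*(p) := (1−δ)·Σ_{n=0}^∞ δ^n · r̂(φ^{(n)}(p)). Consequently, every bounded function V satisfying the dynamic programming equation satisfies V(p) = γ(p) for every p ∈ Ō(k); in particular the greedy strategy is optimal whenever the initial distribution belongs to Ō(k). -/
open MeasureTheory Set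

noncomputable section

variable {Ω : Type*}

/-- `r̂(p) = sup_{μ ∈ S(p)} μ(I)`, the best current payoff at belief `p`. -/
def rhat [Fintype Ω] (r : Ω → ℝ) (p : Ω → ℝ) : ℝ :=
  sSup ((fun μ : Measure (Ω → ℝ) => (μ (invest r)).toReal) '' Splittings p)

/-- The set `Ō(k) = {p ∈ Δ(Ω) : L_{k−1}(p) ≥ 0 ≥ L_k(p)}`. -/
def Obar [Fintype Ω] (r : Ω → ℝ) {K : ℕ} (e : Fin K → Ω) (k : ℕ) : Set (Ω → ℝ) :=
  {p | p ∈ stdSimplex ℝ Ω ∧ 0 ≤ Lfun r e (k - 1) p ∧ Lfun r e k p ≤ 0}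



def cvec (r : Ω → ℝ) (ρ : ℝ) (ω : Ω) : ℝ := max 0 (1 - r ω / ρ)

def fbar [Fintype Ω] (r : Ω → ℝ) (ρ : ℝ) (p : Ω → ℝ) : ℝ := ∑ ω, p ω * cvec r ρ ω

section Comb
set_option linter.unusedSectionVars false
variable [Fintype Ω] [DecidableEq Ω] {K : ℕ} (r : Ω → ℝ) (e : Fin K → Ω)


lemma Lfun_succ (j : ℕ) (hj : j < K) (p : Ω → ℝ) :
    Lfun r e (j+1) p = Lfun r e j p + p (e ⟨j, hj⟩) * r (e ⟨j, hj⟩) := by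
  unfold Lfun
  have : (Finset.univ.filter (fun i : Fin K => (i : ℕ) + 1 ≤ j + 1))
      = insert ⟨j, hj⟩ (Finset.univ.filter (fun i : Fin K => (i : ℕ) + 1 ≤ j)) := by
    ext i
    simp only [Finset.mem_filter, Finset.mem_insert, Finset.mem_univ, true_and,
      Fin.ext_iff]
    omega
  rw [this, Finset.sum_insert (by simp)]
  ring

lemma Lfun_add (j : ℕ) (x y : Ω → ℝ) :
    Lfun r e j (x + y) = Lfun r e j x + Lfun r e j y := by
  unfold Lfun
  simp only [Pi.add_apply, add_mul, Finset.sum_add_distrib]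
  ring

lemma Lfun_sub (j : ℕ) (x y : Ω → ℝ) :
    Lfun r e j (x - y) = Lfun r e j x - Lfun r e j y := by
  unfold Lfun
  simp only [Pi.sub_apply, sub_mul, Finset.sum_sub_distrib]
  ring

lemma Lfun_smul (j : ℕ) (a : ℝ) (x : Ω → ℝ) :
    Lfun r e j (a • x) = a * Lfun r e j x := by
  unfold Lfun
  simp only [Pi.smul_apply, smul_eq_mul, Finset.mul_sum, mul_add]
  ring_nf

lemma Lfun_zero_nonneg (p : Ω → ℝ) (hp : ∀ ω, 0 ≤ p ω) : 0 ≤ Lfun r e 0 p := by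
  unfold Lfun
  have : (Finset.univ.filter (fun i : Fin K => (i : ℕ) + 1 ≤ 0)) = ∅ := by
    ext i; simp
  rw [this]
  simp only [Finset.sum_empty, add_zero]
  exact Finset.sum_nonneg fun ω hω => mul_nonneg (hp ω) (Finset.mem_filter.mp hω).2

lemma Lfun_anti (he_range : ∀ ω, r ω < 0 ↔ ω ∈ Set.range e)
    (p : Ω → ℝ) (hp : ∀ ω, 0 ≤ p ω) {j j' : ℕ} (h : j ≤ j') :
    Lfun r e j' p ≤ Lfun r e j p := by
  unfold Lfun
  have hsub : (Finset.univ.filter (fun i : Fin K => (i : ℕ) + 1 ≤ j))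
      ⊆ (Finset.univ.filter (fun i : Fin K => (i : ℕ) + 1 ≤ j')) := by
    intro i hi
    simp only [Finset.mem_filter, Finset.mem_univ, true_and] at *
    omega
  have h2 := Finset.sum_le_sum_of_subset_of_nonneg (f := fun i => -(p (e i) * r (e i))) hsub
    (fun i _ _ => neg_nonneg.mpr
      (mul_nonpos_of_nonneg_of_nonpos (hp _) (le_of_lt ((he_range (e i)).mpr ⟨i, rfl⟩))))
  simp only [Finset.sum_neg_distrib] at h2
  linarith

lemma Lfun_K_eq (he_inj : Function.Injective e)
    (he_range : ∀ ω, r ω < 0 ↔ ω ∈ Set.range e) (p : Ω → ℝ) :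
    Lfun r e K p = ∑ ω, p ω * r ω := by
  unfold Lfun
  have h1 : (Finset.univ.filter (fun i : Fin K => (i : ℕ) + 1 ≤ K)) = Finset.univ := by
    ext i; simp only [Finset.mem_filter, Finset.mem_univ, true_and, iff_true]; exact i.isLt
  rw [h1]
  have h2 : ∑ i : Fin K, p (e i) * r (e i)
      = ∑ ω ∈ Finset.univ.filter (fun ω => ¬ 0 ≤ r ω), p ω * r ω := by
    have him : Finset.univ.image e = Finset.univ.filter (fun ω => ¬ 0 ≤ r ω) := by
      ext ω
      simp only [Finset.mem_image, Finset.mem_univ, true_and, Finset.mem_filter, not_le]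
      constructor
      · rintro ⟨i, rfl⟩; exact (he_range (e i)).mpr ⟨i, rfl⟩
      · intro h; rcases (he_range ω).mp h with ⟨i, rfl⟩; exact ⟨i, rfl⟩
    rw [← him, Finset.sum_image (fun i _ j _ h => he_inj h)]
  rw [h2, Finset.sum_filter_add_sum_filter_not]

-- kstar facts
lemma kstar_spec {k : ℕ} (hk1 : 1 ≤ k) (p : Ω → ℝ) (hL2 : Lfun r e k p ≤ 0) :
    1 ≤ kstar r e p ∧ kstar r e p ≤ k ∧ Lfun r e (kstar r e p) p ≤ 0 := by
  have hne : k ∈ {j : ℕ | 1 ≤ j ∧ Lfun r e j p ≤ 0} := ⟨hk1, hL2⟩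
  have hmem := Nat.sInf_mem (Set.nonempty_of_mem hne)
  exact ⟨hmem.1, Nat.sInf_le hne, hmem.2⟩

lemma kstar_lt_nonneg {k : ℕ} (hk1 : 1 ≤ k) (p : Ω → ℝ) (hp : ∀ ω, 0 ≤ p ω)
    (hL2 : Lfun r e k p ≤ 0) {j : ℕ} (hj : j < kstar r e p) : 0 ≤ Lfun r e j p := by
  rcases Nat.eq_zero_or_pos j with rfl | hj0
  · exact Lfun_zero_nonneg r e p hp
  · by_contra h
    have hmem : j ∈ {j : ℕ | 1 ≤ j ∧ Lfun r e j p ≤ 0} := ⟨hj0, le_of_not_ge h⟩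
    have := Nat.sInf_le hmem
    unfold kstar at hj
    omega

lemma Lfun_zero_on {k : ℕ} (hk1 : 1 ≤ k)
    (he_range : ∀ ω, r ω < 0 ↔ ω ∈ Set.range e)
    (p : Ω → ℝ) (hp : ∀ ω, 0 ≤ p ω) (hL2 : Lfun r e k p ≤ 0)
    {j J : ℕ} (hks : kstar r e p ≤ j) (hjJ : j ≤ J) (hJ : 0 ≤ Lfun r e J p) :
    Lfun r e j p = 0 := by
  obtain ⟨h1, h2, h3⟩ := kstar_spec r e hk1 p hL2
  have hup := Lfun_anti r e he_range p hp hks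
  have hdn := Lfun_anti r e he_range p hp hjJ
  linarith

lemma Lfun_eq_of_zero (v : Ω → ℝ) {j j' : ℕ} (h : j ≤ j')
    (hz : ∀ i : Fin K, j < (i : ℕ) + 1 → (i : ℕ) + 1 ≤ j' → v (e i) = 0) :
    Lfun r e j' v = Lfun r e j v := by
  unfold Lfun
  congr 1
  refine (Finset.sum_subset ?_ ?_).symm
  · intro i hi
    simp only [Finset.mem_filter, Finset.mem_univ, true_and] at *
    omega
  · intro i hi hni
    simp only [Finset.mem_filter, Finset.mem_univ, true_and] at hi hni
    rw [hz i (by omega) hi]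
    ring

lemma piStar_apply_pos (he_range : ∀ ω, r ω < 0 ↔ ω ∈ Set.range e)
    (p : Ω → ℝ) {ω : Ω} (hw : 0 ≤ r ω) : piStar r e p ω = p ω := by
  unfold piStar
  have : ∀ i : Fin K, ω ≠ e i := by
    intro i h
    have := (he_range (e i)).mpr ⟨i, rfl⟩
    rw [← h] at this
    linarith
  rw [Pi.add_apply, Finset.sum_apply]
  rw [Finset.sum_eq_zero (fun i _ => by
    rw [Pi.smul_apply, Pi.single_eq_of_ne (this i), smul_zero])]
  simp [hw]

lemma piStar_apply_e (he_inj : Function.Injective e)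
    (he_range : ∀ ω, r ω < 0 ↔ ω ∈ Set.range e) (p : Ω → ℝ) (i : Fin K) :
    piStar r e p (e i) =
      (if (i : ℕ) + 1 < kstar r e p then p (e i)
       else if (i : ℕ) + 1 = kstar r e p then -(Lfun r e (kstar r e p - 1) p) / r (e i)
       else 0) := by
  unfold piStar
  rw [Pi.add_apply, Finset.sum_apply]
  have h0 : ¬ (0 ≤ r (e i)) := not_le.mpr ((he_range (e i)).mpr ⟨i, rfl⟩)
  rw [Finset.sum_eq_single i]
  · simp [h0]
  · intro j _ hj
    rw [Pi.smul_apply, Pi.single_eq_of_ne (show e i ≠ e j from fun h => hj (he_inj h).symm), smul_zero]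
  · intro h
    exact absurd (Finset.mem_univ i) h


lemma Lfun_succ_fin (i : Fin K) (j : ℕ) (hij : (i : ℕ) = j) (p : Ω → ℝ) :
    Lfun r e (j+1) p = Lfun r e j p + p (e i) * r (e i) := by
  have hj : j < K := hij ▸ i.isLt
  have : e ⟨j, hj⟩ = e i := by congr 1; exact Fin.ext hij.symm
  rw [Lfun_succ r e j hj p, this]

section ObarFacts
variable {k : ℕ} (hk1 : 1 ≤ k) (hkK : k ≤ K)
  (he_inj : Function.Injective e)
  (he_range : ∀ ω, r ω < 0 ↔ ω ∈ Set.range e)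
  (p : Ω → ℝ) (hp0 : ∀ ω, 0 ≤ p ω)
  (hL2 : Lfun r e k p ≤ 0)

include hk1 he_inj he_range hp0 hL2

lemma piStar_nonneg (ω : Ω) : 0 ≤ piStar r e p ω := by
  by_cases hw : 0 ≤ r ω
  · rw [piStar_apply_pos r e he_range p hw]; exact hp0 ω
  · obtain ⟨i, rfl⟩ := (he_range ω).mp (not_le.mp hw)
    rw [piStar_apply_e r e he_inj he_range p i]
    obtain ⟨h1, h2, h3⟩ := kstar_spec r e hk1 p hL2
    have hLpred : 0 ≤ Lfun r e (kstar r e p - 1) p :=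
      kstar_lt_nonneg r e hk1 p hp0 hL2 (by omega)
    have hri : r (e i) < 0 := (he_range (e i)).mpr ⟨i, rfl⟩
    split_ifs with c1 c2
    · exact hp0 _
    · rw [neg_div, neg_nonneg, div_nonpos_iff]
      exact Or.inl ⟨hLpred, hri.le⟩
    · exact le_refl 0

lemma piStar_le (ω : Ω) : piStar r e p ω ≤ p ω := by
  by_cases hw : 0 ≤ r ω
  · rw [piStar_apply_pos r e he_range p hw]
  · obtain ⟨i, rfl⟩ := (he_range ω).mp (not_le.mp hw)
    rw [piStar_apply_e r e he_inj he_range p i]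
    obtain ⟨h1, h2, h3⟩ := kstar_spec r e hk1 p hL2
    have hri : r (e i) < 0 := (he_range (e i)).mpr ⟨i, rfl⟩
    split_ifs with c1 c2
    · exact le_refl _
    · -- -(L_{ks-1})/r(e i) ≤ p (e i)
      have hsucc : Lfun r e (kstar r e p) p
          = Lfun r e (kstar r e p - 1) p + p (e i) * r (e i) := by
        have := Lfun_succ_fin r e i (kstar r e p - 1) (by omega) p
        rw [show kstar r e p - 1 + 1 = kstar r e p by omega] at this
        exact this
      rw [div_le_iff_of_neg hri]
      linarith
    · exact hp0 _


lemma piStar_late (i : Fin K) (hik : kstar r e p < (i : ℕ) + 1) :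
    piStar r e p (e i) = 0 := by
  rw [piStar_apply_e r e he_inj he_range p i]
  split_ifs with c1 c2
  · omega
  · omega
  · rfl

omit hk1 he_inj he_range hp0 hL2 in
lemma Lfun_K_univ (v : Ω → ℝ) :
    Lfun r e K v = ∑ ω ∈ Finset.univ.filter (fun ω => 0 ≤ r ω), v ω * r ω
      + ∑ i : Fin K, v (e i) * r (e i) := by
  unfold Lfun
  congr 1
  apply Finset.sum_congr _ (fun _ _ => rfl)
  ext i
  simp only [Finset.mem_filter, Finset.mem_univ, true_and, iff_true]
  exact i.isLt

lemma piStar_sum_r (hkK : k ≤ K) : ∑ ω, piStar r e p ω * r ω = 0 := by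
  obtain ⟨h1, h2, h3⟩ := kstar_spec r e hk1 p hL2
  have hks1 : kstar r e p - 1 < K := by omega
  rw [← Lfun_K_eq r e he_inj he_range (piStar r e p), Lfun_K_univ r e]
  have hfirst : ∑ ω ∈ Finset.univ.filter (fun ω => 0 ≤ r ω), piStar r e p ω * r ω
      = ∑ ω ∈ Finset.univ.filter (fun ω => 0 ≤ r ω), p ω * r ω :=
    Finset.sum_congr rfl fun ω hω => by
      rw [piStar_apply_pos r e he_range p (Finset.mem_filter.mp hω).2]
  have hpt : ∀ i : Fin K, piStar r e p (e i) * r (e i)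
      = (if (i : ℕ) + 1 ≤ kstar r e p - 1 then p (e i) * r (e i) else 0)
        + (if i = (⟨kstar r e p - 1, hks1⟩ : Fin K)
            then -(Lfun r e (kstar r e p - 1) p) else 0) := by
    intro i
    have hri : r (e i) ≠ 0 := ne_of_lt ((he_range (e i)).mpr ⟨i, rfl⟩)
    rw [piStar_apply_e r e he_inj he_range p i]
    by_cases c1 : (i : ℕ) + 1 < kstar r e p
    · rw [if_pos c1, if_pos (by omega), if_neg (by simp only [Fin.ext_iff, Fin.val_mk]; omega)]
      ring
    · rw [if_neg c1]
      by_cases c2 : (i : ℕ) + 1 = kstar r e p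
      · rw [if_pos c2, if_neg (by omega), if_pos (by simp only [Fin.ext_iff, Fin.val_mk]; omega)]
        field_simp
        ring
      · rw [if_neg c2, if_neg (by omega), if_neg (by simp only [Fin.ext_iff, Fin.val_mk]; omega)]
        ring
  rw [hfirst, Finset.sum_congr rfl (fun i _ => hpt i), Finset.sum_add_distrib,
    ← Finset.sum_filter]
  simp only [Finset.sum_ite_eq', Finset.mem_univ, if_true]
  have : Lfun r e (kstar r e p - 1) p
      = ∑ ω ∈ Finset.univ.filter (fun ω => 0 ≤ r ω), p ω * r ω
        + ∑ i ∈ Finset.univ.filter (fun i : Fin K => (i : ℕ) + 1 ≤ kstar r e p - 1),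
            p (e i) * r (e i) := rfl
  linarith

lemma piStar_early (hL1 : 0 ≤ Lfun r e (k-1) p) (i : Fin K) (hik : (i : ℕ) + 1 ≤ k - 1) :
    piStar r e p (e i) = p (e i) := by
  obtain ⟨h1, h2, h3⟩ := kstar_spec r e hk1 p hL2
  have hri : r (e i) < 0 := (he_range (e i)).mpr ⟨i, rfl⟩
  rw [piStar_apply_e r e he_inj he_range p i]
  by_cases c1 : (i : ℕ) + 1 < kstar r e p
  · rw [if_pos c1]
  · rw [if_neg c1]
    by_cases c2 : (i : ℕ) + 1 = kstar r e p
    · rw [if_pos c2]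
      have hz : Lfun r e (kstar r e p) p = 0 :=
        Lfun_zero_on r e hk1 he_range p hp0 hL2 (le_refl _) (by omega) hL1
      have hsucc : Lfun r e (kstar r e p) p
          = Lfun r e (kstar r e p - 1) p + p (e i) * r (e i) := by
        have := Lfun_succ_fin r e i (kstar r e p - 1) (by omega) p
        rw [show kstar r e p - 1 + 1 = kstar r e p by omega] at this
        exact this
      rw [div_eq_iff (ne_of_lt hri)]
      linarith
    · rw [if_neg c2]
      have hz1 : Lfun r e ((i : ℕ)) p = 0 :=
        Lfun_zero_on r e hk1 he_range p hp0 hL2 (by omega) (by omega) hL1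
      have hz2 : Lfun r e ((i : ℕ) + 1) p = 0 :=
        Lfun_zero_on r e hk1 he_range p hp0 hL2 (by omega) (by omega) hL1
      have hsucc := Lfun_succ_fin r e i (i : ℕ) rfl p
      have : p (e i) * r (e i) = 0 := by linarith
      rcases mul_eq_zero.mp this with h | h
      · exact h.symm
      · exact absurd h (ne_of_lt hri)


lemma piStar_eq_p_of (hkK : k ≤ K) {J : ℕ} (hLJ : 0 ≤ Lfun r e J p)
    (i : Fin K) (hik : (i : ℕ) + 1 ≤ J) : piStar r e p (e i) = p (e i) := by
  obtain ⟨h1, h2, h3⟩ := kstar_spec r e hk1 p hL2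
  have hri : r (e i) < 0 := (he_range (e i)).mpr ⟨i, rfl⟩
  rw [piStar_apply_e r e he_inj he_range p i]
  by_cases c1 : (i : ℕ) + 1 < kstar r e p
  · rw [if_pos c1]
  · rw [if_neg c1]
    by_cases c2 : (i : ℕ) + 1 = kstar r e p
    · rw [if_pos c2]
      have hz : Lfun r e (kstar r e p) p = 0 :=
        Lfun_zero_on r e hk1 he_range p hp0 hL2 (le_refl _) (by omega) hLJ
      have hsucc : Lfun r e (kstar r e p) p
          = Lfun r e (kstar r e p - 1) p + p (e i) * r (e i) := by
        have := Lfun_succ_fin r e i (kstar r e p - 1) (by omega) p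
        rw [show kstar r e p - 1 + 1 = kstar r e p by omega] at this
        exact this
      rw [div_eq_iff (ne_of_lt hri)]
      linarith
    · rw [if_neg c2]
      have hz1 : Lfun r e ((i : ℕ)) p = 0 :=
        Lfun_zero_on r e hk1 he_range p hp0 hL2 (by omega) (by omega) hLJ
      have hz2 : Lfun r e ((i : ℕ) + 1) p = 0 :=
        Lfun_zero_on r e hk1 he_range p hp0 hL2 (by omega) (by omega) hLJ
      have hsucc := Lfun_succ_fin r e i (i : ℕ) rfl p
      have : p (e i) * r (e i) = 0 := by linarith
      rcases mul_eq_zero.mp this with h | h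
      · exact h.symm
      · exact absurd h (ne_of_lt hri)

lemma piStar_eq_self (hkK : k ≤ K) (hpr : ∑ ω, p ω * r ω = 0) :
    piStar r e p = p := by
  have hLK : Lfun r e K p = 0 := by rw [Lfun_K_eq r e he_inj he_range]; exact hpr
  funext ω
  by_cases hw : 0 ≤ r ω
  · exact piStar_apply_pos r e he_range p hw
  · obtain ⟨i, rfl⟩ := (he_range ω).mp (not_le.mp hw)
    exact piStar_eq_p_of r e hk1 he_inj he_range p hp0 hL2 hkK (le_of_eq hLK.symm) i i.isLt

lemma aI_nonneg' : 0 ≤ aI r e p :=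
  Finset.sum_nonneg fun ω _ => piStar_nonneg r e hk1 he_inj he_range p hp0 hL2 ω

lemma aI_le_one' (hpsum : ∑ ω, p ω = 1) : aI r e p ≤ 1 := by
  rw [← hpsum]
  exact Finset.sum_le_sum fun ω _ => piStar_le r e hk1 he_inj he_range p hp0 hL2 ω

end ObarFacts



section Fbar
set_option linter.unusedSectionVars false
variable {k : ℕ} (hk1 : 1 ≤ k) (hkK : k ≤ K)
  (he_inj : Function.Injective e)
  (he_range : ∀ ω, r ω < 0 ↔ ω ∈ Set.range e)
  (he_anti : Antitone fun i => r (e i))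
  (i0 : Fin K) (hi0 : (i0 : ℕ) = k - 1)
  (p : Ω → ℝ) (hp0 : ∀ ω, 0 ≤ p ω)
  (hL2 : Lfun r e k p ≤ 0)

lemma fbar_add (ρ : ℝ) (x y : Ω → ℝ) : fbar r ρ (x + y) = fbar r ρ x + fbar r ρ y := by
  unfold fbar
  simp only [Pi.add_apply, add_mul, Finset.sum_add_distrib]

lemma fbar_smul (ρ : ℝ) (a : ℝ) (x : Ω → ℝ) : fbar r ρ (a • x) = a * fbar r ρ x := by
  unfold fbar
  rw [Finset.mul_sum]
  exact Finset.sum_congr rfl fun ω _ => by simp [mul_assoc]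

lemma cvec_nonneg (ρ : ℝ) (ω : Ω) : 0 ≤ cvec r ρ ω := le_max_left _ _

lemma fbar_nonneg (ρ : ℝ) (x : Ω → ℝ) (hx : ∀ ω, 0 ≤ x ω) : 0 ≤ fbar r ρ x :=
  Finset.sum_nonneg fun ω _ => mul_nonneg (hx ω) (cvec_nonneg r ρ ω)

lemma cvec_full {ρ : ℝ} (hρ : ρ < 0) {ω : Ω} (h : ρ ≤ r ω) :
    cvec r ρ ω = 1 - r ω / ρ := by
  unfold cvec
  rw [max_eq_right]
  rw [sub_nonneg, div_le_iff_of_neg hρ]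
  linarith

lemma cvec_null {ρ : ℝ} (hρ : ρ < 0) {ω : Ω} (h : r ω ≤ ρ) :
    cvec r ρ ω = 0 := by
  unfold cvec
  rw [max_eq_left]
  rw [sub_nonpos, le_div_iff_of_neg hρ]
  linarith

include hk1 hkK he_inj he_range he_anti hi0 hp0 hL2

lemma fbar_piStar : fbar r (r (e i0)) (piStar r e p) = aI r e p := by
  obtain ⟨h1, h2, h3⟩ := kstar_spec r e hk1 p hL2
  have hρ : r (e i0) < 0 := (he_range (e i0)).mpr ⟨i0, rfl⟩
  have hpt : ∀ ω, piStar r e p ω * cvec r (r (e i0)) ω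
      = piStar r e p ω * (1 - r ω / r (e i0)) := by
    intro ω
    by_cases hπ : piStar r e p ω = 0
    · rw [hπ, zero_mul, zero_mul]
    · have hωge : r (e i0) ≤ r ω := by
        by_cases hw : 0 ≤ r ω
        · linarith
        · obtain ⟨i, rfl⟩ := (he_range ω).mp (not_le.mp hw)
          have : (i : ℕ) + 1 ≤ kstar r e p := by
            by_contra hc
            exact hπ (piStar_late r e hk1 he_inj he_range p hp0 hL2 i (by omega))
          exact he_anti (show i ≤ i0 from by rw [Fin.le_def]; omega)
      rw [cvec_full r hρ hωge]
  unfold fbar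
  rw [Finset.sum_congr rfl fun ω _ => hpt ω]
  have : ∀ ω, piStar r e p ω * (1 - r ω / r (e i0))
      = piStar r e p ω - (piStar r e p ω * r ω) / r (e i0) := fun ω => by ring
  rw [Finset.sum_congr rfl fun ω _ => this ω, Finset.sum_sub_distrib, ← Finset.sum_div,
    piStar_sum_r r e hk1 he_inj he_range p hp0 hL2 hkK]
  simp [aI]

lemma fbar_sub_piStar (hL1 : 0 ≤ Lfun r e (k-1) p) :
    fbar r (r (e i0)) (p - piStar r e p) = 0 := by
  have hρ : r (e i0) < 0 := (he_range (e i0)).mpr ⟨i0, rfl⟩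
  apply Finset.sum_eq_zero
  intro ω _
  rw [Pi.sub_apply]
  by_cases hw : 0 ≤ r ω
  · rw [piStar_apply_pos r e he_range p hw, sub_self, zero_mul]
  · obtain ⟨i, rfl⟩ := (he_range ω).mp (not_le.mp hw)
    by_cases hik : (i : ℕ) + 1 ≤ k - 1
    · rw [piStar_eq_p_of r e hk1 he_inj he_range p hp0 hL2 hkK hL1 i hik, sub_self, zero_mul]
    · rw [cvec_null r hρ (he_anti (show i0 ≤ i from by rw [Fin.le_def]; omega)), mul_zero]

lemma fbar_eq_aI (hL1 : 0 ≤ Lfun r e (k-1) p) : fbar r (r (e i0)) p = aI r e p := by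
  have h := fbar_add r (r (e i0)) (piStar r e p) (p - piStar r e p)
  rw [add_sub_cancel] at h
  rw [h, fbar_piStar r e hk1 hkK he_inj he_range he_anti i0 hi0 p hp0 hL2,
    fbar_sub_piStar r e hk1 hkK he_inj he_range he_anti i0 hi0 p hp0 hL2 hL1]
  ring

-- L facts for piStar
lemma Lfun_k_piStar : Lfun r e k (piStar r e p) = 0 := by
  obtain ⟨h1, h2, h3⟩ := kstar_spec r e hk1 p hL2
  have h := Lfun_eq_of_zero r e (piStar r e p) (hkK)
    (fun i hik _ => piStar_late r e hk1 he_inj he_range p hp0 hL2 i (by omega))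
  rw [← h, Lfun_K_eq r e he_inj he_range,
    piStar_sum_r r e hk1 he_inj he_range p hp0 hL2 hkK]

lemma Lfun_km1_piStar : 0 ≤ Lfun r e (k-1) (piStar r e p) := by
  have hρ : r (e i0) < 0 := (he_range (e i0)).mpr ⟨i0, rfl⟩
  have hsucc := Lfun_succ_fin r e i0 (k-1) hi0 (piStar r e p)
  rw [show k - 1 + 1 = k by omega, Lfun_k_piStar r e hk1 hkK he_inj he_range he_anti i0 hi0
    p hp0 hL2] at hsucc
  nlinarith [piStar_nonneg r e hk1 he_inj he_range p hp0 hL2 (e i0)]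

lemma Lfun_km1_sub (hL1 : 0 ≤ Lfun r e (k-1) p) :
    Lfun r e (k-1) (p - piStar r e p) = 0 := by
  unfold Lfun
  rw [Finset.sum_eq_zero, Finset.sum_eq_zero, add_zero]
  · intro i hi
    simp only [Finset.mem_filter, Finset.mem_univ, true_and] at hi
    rw [Pi.sub_apply, piStar_eq_p_of r e hk1 he_inj he_range p hp0 hL2 hkK hL1 i hi,
      sub_self, zero_mul]
  · intro ω hω
    rw [Pi.sub_apply,
      piStar_apply_pos r e he_range p (Finset.mem_filter.mp hω).2, sub_self, zero_mul]

lemma Lfun_k_sub (hL1 : 0 ≤ Lfun r e (k-1) p) :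
    Lfun r e k (p - piStar r e p) ≤ 0 := by
  have hρ : r (e i0) < 0 := (he_range (e i0)).mpr ⟨i0, rfl⟩
  have hsucc := Lfun_succ_fin r e i0 (k-1) hi0 (p - piStar r e p)
  rw [show k - 1 + 1 = k by omega,
    Lfun_km1_sub r e hk1 hkK he_inj he_range he_anti i0 hi0 p hp0 hL2 hL1] at hsucc
  have h1 : 0 ≤ p (e i0) - piStar r e p (e i0) :=
    sub_nonneg.mpr (piStar_le r e hk1 he_inj he_range p hp0 hL2 (e i0))
  rw [hsucc, Pi.sub_apply, zero_add]
  exact mul_nonpos_of_nonneg_of_nonpos h1 hρ.le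
end Fbar


end Comb

def gbar [Fintype Ω] (r : Ω → ℝ) (ρ δ lam : ℝ) (m : Ω → ℝ) (q : Ω → ℝ) : ℝ :=
  fbar r ρ m + (1 - δ)/(1 - δ*lam) * (fbar r ρ q - fbar r ρ m)

section Alg
lemma alg_id_A {δ lam A : ℝ} (h : 1 - δ*lam ≠ 0) :
    A + (1-δ)/(1-δ*lam)*(1 - A)
      = (1-δ) + δ*(A + (1-δ)/(1-δ*lam)*((A + lam*(1-A)) - A)) := by
  field_simp
  ring

lemma alg_id_0 {δ lam A : ℝ} (h : 1 - δ*lam ≠ 0) :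
    A + (1-δ)/(1-δ*lam)*(0 - A)
      = δ*(A + (1-δ)/(1-δ*lam)*((A + lam*(0-A)) - A)) := by
  field_simp
  ring

lemma alg_id_sup {δ lam A x : ℝ} (h : 1 - δ*lam ≠ 0) :
    (1-δ)*x + δ*(A + (1-δ)/(1-δ*lam)*((A + lam*(x-A)) - A))
      = A + (1-δ)/(1-δ*lam)*(x - A) := by
  field_simp
  ring

lemma alg_id_B {δ lam A a : ℝ} (h : 1 - δ*lam ≠ 0) :
    A + (1-δ)/(1-δ*lam)*(a - A)
      = a*((1-δ) + δ*(A + (1-δ)/(1-δ*lam)*((A + lam*(1-A)) - A)))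
        + (1-a)*(δ*(A + (1-δ)/(1-δ*lam)*((A + lam*(0-A)) - A))) := by
  field_simp
  ring
end Alg

section Homothety
variable [Fintype Ω] [DecidableEq Ω] {K : ℕ} (r : Ω → ℝ) (e : Fin K → Ω)
  {m : Ω → ℝ} {lam : ℝ} {φ : (Ω → ℝ) → Ω → ℝ}
  (hφ : ∀ p, φ p = m + lam • (p - m)) (hlam0 : 0 ≤ lam) (hlam1 : lam < 1)
set_option linter.unusedSectionVars false

include hφ in
lemma phi_eq (q : Ω → ℝ) : φ q = (1 - lam) • m + lam • q := by
  rw [hφ]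
  funext ω
  simp only [Pi.add_apply, Pi.smul_apply, Pi.sub_apply, smul_eq_mul]
  ring

include hφ hlam0 hlam1 in
lemma phi_mem_simplex (hm : m ∈ stdSimplex ℝ Ω) {q : Ω → ℝ} (hq : q ∈ stdSimplex ℝ Ω) :
    φ q ∈ stdSimplex ℝ Ω := by
  rw [phi_eq hφ q]
  exact (convex_stdSimplex ℝ Ω) hm hq (by linarith) hlam0 (by ring)

include hφ in
lemma Lfun_phi (j : ℕ) (q : Ω → ℝ) :
    Lfun r e j (φ q) = (1 - lam) * Lfun r e j m + lam * Lfun r e j q := by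
  rw [phi_eq hφ q, Lfun_add, Lfun_smul, Lfun_smul]

include hφ hlam0 hlam1 in
lemma phi_mem_Obar {k : ℕ} (hm : m ∈ Obar r e k) {q : Ω → ℝ} (hq : q ∈ Obar r e k) :
    φ q ∈ Obar r e k := by
  obtain ⟨hm1, hm2, hm3⟩ := hm
  obtain ⟨hq1, hq2, hq3⟩ := hq
  refine ⟨phi_mem_simplex hφ hlam0 hlam1 hm1 hq1, ?_, ?_⟩
  · rw [Lfun_phi r e hφ]
    have h1 : 0 ≤ (1 - lam) * Lfun r e (k-1) m := mul_nonneg (by linarith) hm2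
    nlinarith
  · rw [Lfun_phi r e hφ]
    nlinarith

include hφ in
lemma fbar_phi (ρ : ℝ) (q : Ω → ℝ) :
    fbar r ρ (φ q) = fbar r ρ m + lam * (fbar r ρ q - fbar r ρ m) := by
  rw [phi_eq hφ q, fbar_add, fbar_smul, fbar_smul]
  ring

include hφ in
lemma gbar_phi (ρ δ : ℝ) (q : Ω → ℝ) :
    gbar r ρ δ lam m (φ q)
      = fbar r ρ m + (1-δ)/(1-δ*lam) * ((fbar r ρ m + lam * (fbar r ρ q - fbar r ρ m)) - fbar r ρ m) := by
  unfold gbar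
  rw [fbar_phi r hφ]

end Homothety
section Meas
variable [Fintype Ω] [DecidableEq Ω]
set_option linter.unusedSectionVars false

lemma measurableSet_simplex : MeasurableSet (stdSimplex ℝ Ω) :=
  (isClosed_stdSimplex ℝ Ω).measurableSet

lemma measurableSet_invest (r : Ω → ℝ) : MeasurableSet (invest r) := by
  have h1 : invest r = stdSimplex ℝ Ω ∩ {p : Ω → ℝ | 0 ≤ ∑ ω, p ω * r ω} := rfl
  rw [h1]
  refine measurableSet_simplex.inter ?_
  have hc : Continuous (fun p : Ω → ℝ => ∑ ω, p ω * r ω) := by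
    continuity
  exact (isClosed_le continuous_const hc).measurableSet

lemma simplex_coord_le_one {q : Ω → ℝ} (hq : q ∈ stdSimplex ℝ Ω) (ω : Ω) : q ω ≤ 1 := by
  have := Finset.single_le_sum (f := fun ω => q ω) (fun i _ => hq.1 i) (Finset.mem_univ ω)
  rw [hq.2] at this
  exact this

variable {p : Ω → ℝ} {μ : Measure (Ω → ℝ)}

lemma splittings_ae (hμ : μ ∈ Splittings p) : ∀ᵐ x ∂μ, x ∈ stdSimplex ℝ Ω := by
  have hpm : IsProbabilityMeasure μ := hμ.1
  have : μ (stdSimplex ℝ Ω)ᶜ = 0 := by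
    have h := measure_compl measurableSet_simplex (measure_ne_top μ _)
    rw [hμ.2.1] at h
    rw [h, measure_univ]
    simp
  exact (MeasureTheory.ae_iff (p := fun x => x ∈ stdSimplex ℝ Ω)).mpr this

lemma splittings_integrable_coord (hμ : μ ∈ Splittings p) (ω : Ω) :
    Integrable (fun x : Ω → ℝ => x ω) μ := by
  have hpm : IsProbabilityMeasure μ := hμ.1
  refine Integrable.mono' (integrable_const 1) (measurable_pi_apply ω).aestronglyMeasurable ?_
  filter_upwards [splittings_ae hμ] with x hx
  rw [Real.norm_eq_abs, abs_of_nonneg (hx.1 ω)]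
  exact simplex_coord_le_one hx ω

lemma splittings_integrable_id (hμ : μ ∈ Splittings p) :
    Integrable (fun x : Ω → ℝ => x) μ := by
  have hpm : IsProbabilityMeasure μ := hμ.1
  refine Integrable.mono' (integrable_const 1) aestronglyMeasurable_id ?_
  filter_upwards [splittings_ae hμ] with x hx
  rw [pi_norm_le_iff_of_nonneg (by norm_num)]
  intro ω
  rw [Real.norm_eq_abs, abs_of_nonneg (hx.1 ω)]
  exact simplex_coord_le_one hx ω

lemma splittings_integral_coord (hμ : μ ∈ Splittings p) (ω : Ω) :
    ∫ x, x ω ∂μ = p ω := by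
  have h := (ContinuousLinearMap.proj (R := ℝ) (φ := fun _ : Ω => ℝ) ω).integral_comp_comm
    (splittings_integrable_id hμ)
  simp only [ContinuousLinearMap.proj_apply] at h
  rw [h, hμ.2.2]

lemma splittings_integrable_fbar (r : Ω → ℝ) (ρ : ℝ) (hμ : μ ∈ Splittings p) :
    Integrable (fun x : Ω → ℝ => fbar r ρ x) μ := by
  unfold fbar
  exact integrable_finset_sum _ fun ω _ =>
    (splittings_integrable_coord hμ ω).mul_const _

lemma splittings_integral_fbar (r : Ω → ℝ) (ρ : ℝ) (hμ : μ ∈ Splittings p) :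
    ∫ x, fbar r ρ x ∂μ = fbar r ρ p := by
  unfold fbar
  rw [integral_finset_sum _ fun ω _ => (splittings_integrable_coord hμ ω).mul_const _]
  exact Finset.sum_congr rfl fun ω _ => by
    rw [integral_mul_const, splittings_integral_coord hμ ω]

lemma splittings_invest_le (r : Ω → ℝ) {ρ : ℝ} (hρ : ρ < 0) (hμ : μ ∈ Splittings p) :
    (μ (invest r)).toReal ≤ fbar r ρ p := by
  classical
  have hpm : IsProbabilityMeasure μ := hμ.1
  rw [← measureReal_def, ← integral_indicator_one (measurableSet_invest r)]
  rw [← splittings_integral_fbar r ρ hμ]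
  refine integral_mono_ae ((integrable_const (1:ℝ)).indicator (measurableSet_invest r))
    (splittings_integrable_fbar r ρ hμ) ?_
  filter_upwards [splittings_ae hμ] with x hx
  rw [Set.indicator_apply]
  by_cases hxI : x ∈ invest r
  · rw [if_pos hxI]
    have h1 : ∀ ω, x ω * (1 - r ω / ρ) ≤ x ω * cvec r ρ ω := fun ω =>
      mul_le_mul_of_nonneg_left (le_max_right _ _) (hx.1 ω)
    have h2 : (1:ℝ) ≤ ∑ ω, x ω * (1 - r ω / ρ) := by
      have hexp : ∑ ω, x ω * (1 - r ω / ρ) = (∑ ω, x ω) - (∑ ω, x ω * r ω) / ρ := by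
        rw [Finset.sum_div, ← Finset.sum_sub_distrib]
        exact Finset.sum_congr rfl fun ω _ => by ring
      rw [hexp, hx.2]
      have : (∑ ω, x ω * r ω) / ρ ≤ 0 := div_nonpos_of_nonneg_of_nonpos hxI.2 hρ.le
      linarith
    calc (1:ℝ) ≤ ∑ ω, x ω * (1 - r ω / ρ) := h2
      _ ≤ ∑ ω, x ω * cvec r ρ ω := Finset.sum_le_sum fun ω _ => h1 ω
      _ = fbar r ρ x := rfl
  · rw [if_neg hxI]
    exact fbar_nonneg r ρ x hx.1

lemma rhat_le (r : Ω → ℝ) {ρ : ℝ} (hρ : ρ < 0) (hp : p ∈ stdSimplex ℝ Ω) :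
    rhat r p ≤ fbar r ρ p := by
  refine Real.sSup_le ?_ (fbar_nonneg r ρ p hp.1)
  rintro x ⟨μ, hμ, rfl⟩
  exact splittings_invest_le r hρ hμ

lemma dirac_mem_splittings {q : Ω → ℝ} (hq : q ∈ stdSimplex ℝ Ω) :
    Measure.dirac q ∈ Splittings q := by
  refine ⟨Measure.dirac.isProbabilityMeasure, ?_, ?_⟩
  · exact Measure.dirac_apply_of_mem hq
  · exact integral_dirac _ _

lemma splittings_nonempty (r : Ω → ℝ) {q : Ω → ℝ} (hq : q ∈ stdSimplex ℝ Ω) :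
    ((fun μ : Measure (Ω → ℝ) => (μ (invest r)).toReal) '' Splittings q).Nonempty :=
  ⟨_, Measure.dirac q, dirac_mem_splittings hq, rfl⟩

lemma splittings_bddAbove (r : Ω → ℝ) (q : Ω → ℝ) :
    BddAbove ((fun μ : Measure (Ω → ℝ) => (μ (invest r)).toReal) '' Splittings q) := by
  refine ⟨1, ?_⟩
  rintro x ⟨μ, hμ, rfl⟩
  have hpm : IsProbabilityMeasure μ := hμ.1
  have h1 : μ (invest r) ≤ 1 := prob_le_one
  exact le_trans (ENNReal.toReal_mono ENNReal.one_ne_top h1) (by norm_num)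

lemma twopoint_mem_splittings {a : ℝ} (ha0 : 0 ≤ a) (ha1 : a ≤ 1)
    {x y : Ω → ℝ} (hx : x ∈ stdSimplex ℝ Ω) (hy : y ∈ stdSimplex ℝ Ω) :
    (ENNReal.ofReal a • Measure.dirac x + ENNReal.ofReal (1-a) • Measure.dirac y)
      ∈ Splittings (a • x + (1-a) • y) := by
  set μ := ENNReal.ofReal a • Measure.dirac x + ENNReal.ofReal (1-a) • Measure.dirac y with hμdef
  have happ : ∀ s : Set (Ω → ℝ), μ s
      = ENNReal.ofReal a * Measure.dirac x s + ENNReal.ofReal (1-a) * Measure.dirac y s := by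
    intro s
    rw [hμdef, Measure.add_apply, Measure.smul_apply, Measure.smul_apply, smul_eq_mul,
      smul_eq_mul]
  have hsum : ENNReal.ofReal a + ENNReal.ofReal (1-a) = 1 := by
    rw [← ENNReal.ofReal_add ha0 (by linarith)]
    norm_num
  refine ⟨⟨?_⟩, ?_, ?_⟩
  · rw [happ]
    simp [hsum]
  · rw [happ, Measure.dirac_apply_of_mem hx, Measure.dirac_apply_of_mem hy]
    simp [hsum]
  · have hix : Integrable (fun z : Ω → ℝ => z) (ENNReal.ofReal a • Measure.dirac x) :=
      Integrable.smul_measure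
        ((integrable_congr (ae_eq_dirac (fun z : Ω → ℝ => z))).mpr (integrable_const _))
        ENNReal.ofReal_ne_top
    have hiy : Integrable (fun z : Ω → ℝ => z) (ENNReal.ofReal (1-a) • Measure.dirac y) :=
      Integrable.smul_measure
        ((integrable_congr (ae_eq_dirac (fun z : Ω → ℝ => z))).mpr (integrable_const _))
        ENNReal.ofReal_ne_top
    rw [hμdef, integral_add_measure hix hiy, integral_smul_measure, integral_smul_measure,
      integral_dirac, integral_dirac, ENNReal.toReal_ofReal ha0,
      ENNReal.toReal_ofReal (by linarith)]

lemma twopoint_integral (f : (Ω → ℝ) → ℝ) {a : ℝ} (ha0 : 0 ≤ a) (ha1 : a ≤ 1)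
    (x y : Ω → ℝ) :
    ∫ z, f z ∂(ENNReal.ofReal a • Measure.dirac x + ENNReal.ofReal (1-a) • Measure.dirac y)
      = a * f x + (1-a) * f y := by
  have hix : Integrable f (ENNReal.ofReal a • Measure.dirac x) :=
    Integrable.smul_measure
      ((integrable_congr (ae_eq_dirac f)).mpr (integrable_const _)) ENNReal.ofReal_ne_top
  have hiy : Integrable f (ENNReal.ofReal (1-a) • Measure.dirac y) :=
    Integrable.smul_measure
      ((integrable_congr (ae_eq_dirac f)).mpr (integrable_const _)) ENNReal.ofReal_ne_top
  rw [integral_add_measure hix hiy, integral_smul_measure, integral_smul_measure,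
    integral_dirac, integral_dirac, ENNReal.toReal_ofReal ha0,
    ENNReal.toReal_ofReal (by linarith), smul_eq_mul, smul_eq_mul]

end Meas
section Main
set_option linter.unusedSectionVars false
variable [Fintype Ω] [DecidableEq Ω] {K : ℕ} (r : Ω → ℝ) (e : Fin K → Ω)
  {k : ℕ} (hk1 : 1 ≤ k) (hkK : k ≤ K)
  (he_inj : Function.Injective e)
  (he_range : ∀ ω, r ω < 0 ↔ ω ∈ Set.range e)
  (he_anti : Antitone fun i => r (e i))
  (i0 : Fin K) (hi0 : (i0 : ℕ) = k - 1)

include hk1 hkK he_inj he_range he_anti hi0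

lemma obar_facts {p : Ω → ℝ} (hp : p ∈ Obar r e k) :
    (∀ ω, 0 ≤ p ω) ∧ ∑ ω, p ω = 1 ∧ 0 ≤ Lfun r e (k-1) p ∧ Lfun r e k p ≤ 0
      ∧ ∑ ω, p ω * r ω ≤ 0 := by
  obtain ⟨hps, hL1, hL2⟩ := hp
  refine ⟨hps.1, hps.2, hL1, hL2, ?_⟩
  rw [← Lfun_K_eq r e he_inj he_range]
  exact le_trans (Lfun_anti r e he_range p hps.1 hkK) hL2

lemma rho_neg : r (e i0) < 0 := (he_range (e i0)).mpr ⟨i0, rfl⟩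

lemma fbar_one_of_zero {p : Ω → ℝ} (hp : p ∈ Obar r e k) (hzero : ∑ ω, p ω * r ω = 0) :
    fbar r (r (e i0)) p = 1 := by
  obtain ⟨hp0, hp1, hL1, hL2, _⟩ := obar_facts r e hk1 hkK he_inj he_range he_anti i0 hi0 hp
  rw [fbar_eq_aI r e hk1 hkK he_inj he_range he_anti i0 hi0 p hp0 hL2 hL1]
  unfold aI
  rw [piStar_eq_self r e hk1 he_inj he_range p hp0 hL2 hkK hzero, hp1]

lemma aI_eq_fbar {p : Ω → ℝ} (hp : p ∈ Obar r e k) :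
    aI r e p = fbar r (r (e i0)) p := by
  obtain ⟨hp0, hp1, hL1, hL2, _⟩ := obar_facts r e hk1 hkK he_inj he_range he_anti i0 hi0 hp
  exact (fbar_eq_aI r e hk1 hkK he_inj he_range he_anti i0 hi0 p hp0 hL2 hL1).symm

lemma aI_lt_one_of_neg {p : Ω → ℝ} (hp : p ∈ Obar r e k)
    (hneg : ∑ ω, p ω * r ω < 0) : aI r e p < 1 := by
  obtain ⟨hp0, hp1, hL1, hL2, _⟩ := obar_facts r e hk1 hkK he_inj he_range he_anti i0 hi0 hp
  rcases lt_or_eq_of_le (aI_le_one' r e hk1 he_inj he_range p hp0 hL2 hp1) with h | h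
  · exact h
  · exfalso
    have hsub : ∑ ω, (p ω - piStar r e p ω) = 0 := by
      rw [Finset.sum_sub_distrib, hp1]
      have : ∑ ω, piStar r e p ω = aI r e p := rfl
      rw [this, h, sub_self]
    have hzero : ∀ ω ∈ Finset.univ, p ω - piStar r e p ω = 0 :=
      (Finset.sum_eq_zero_iff_of_nonneg (fun ω _ =>
        sub_nonneg.mpr (piStar_le r e hk1 he_inj he_range p hp0 hL2 ω))).mp hsub
    have hπp : piStar r e p = p := by
      funext ω
      have := hzero ω (Finset.mem_univ ω)
      linarith
    have := piStar_sum_r r e hk1 he_inj he_range p hp0 hL2 hkK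
    rw [hπp] at this
    linarith

section PosAI
variable {p : Ω → ℝ} (hp : p ∈ Obar r e k) (haI : 0 < aI r e p)
include hp haI

lemma qI_mem_simplex : qI r e p ∈ stdSimplex ℝ Ω := by
  obtain ⟨hp0, hp1, hL1, hL2, _⟩ := obar_facts r e hk1 hkK he_inj he_range he_anti i0 hi0 hp
  constructor
  · intro ω
    exact mul_nonneg (inv_nonneg.mpr haI.le)
      (piStar_nonneg r e hk1 he_inj he_range p hp0 hL2 ω)
  · unfold qI
    simp only [Pi.smul_apply, smul_eq_mul]
    rw [← Finset.mul_sum]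
    exact inv_mul_cancel₀ (ne_of_gt haI)

lemma qI_sum_r : ∑ ω, qI r e p ω * r ω = 0 := by
  obtain ⟨hp0, hp1, hL1, hL2, _⟩ := obar_facts r e hk1 hkK he_inj he_range he_anti i0 hi0 hp
  unfold qI
  simp only [Pi.smul_apply, smul_eq_mul]
  have : ∀ ω, (aI r e p)⁻¹ * piStar r e p ω * r ω
      = (aI r e p)⁻¹ * (piStar r e p ω * r ω) := fun ω => by ring
  rw [Finset.sum_congr rfl fun ω _ => this ω, ← Finset.mul_sum,
    piStar_sum_r r e hk1 he_inj he_range p hp0 hL2 hkK, mul_zero]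

lemma qI_mem_invest : qI r e p ∈ invest r :=
  ⟨qI_mem_simplex r e hk1 hkK he_inj he_range he_anti i0 hi0 hp haI,
   le_of_eq (qI_sum_r r e hk1 hkK he_inj he_range he_anti i0 hi0 hp haI).symm⟩

lemma qI_mem_Obar : qI r e p ∈ Obar r e k := by
  obtain ⟨hp0, hp1, hL1, hL2, _⟩ := obar_facts r e hk1 hkK he_inj he_range he_anti i0 hi0 hp
  refine ⟨qI_mem_simplex r e hk1 hkK he_inj he_range he_anti i0 hi0 hp haI, ?_, ?_⟩
  · unfold qI
    rw [Lfun_smul]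
    exact mul_nonneg (inv_nonneg.mpr haI.le)
      (Lfun_km1_piStar r e hk1 hkK he_inj he_range he_anti i0 hi0 p hp0 hL2)
  · unfold qI
    rw [Lfun_smul, Lfun_k_piStar r e hk1 hkK he_inj he_range he_anti i0 hi0 p hp0 hL2,
      mul_zero]

lemma qI_fbar : fbar r (r (e i0)) (qI r e p) = 1 := by
  obtain ⟨hp0, hp1, hL1, hL2, _⟩ := obar_facts r e hk1 hkK he_inj he_range he_anti i0 hi0 hp
  unfold qI
  rw [fbar_smul, fbar_piStar r e hk1 hkK he_inj he_range he_anti i0 hi0 p hp0 hL2]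
  exact inv_mul_cancel₀ (ne_of_gt haI)

end PosAI

section PosAJ
variable {p : Ω → ℝ} (hp : p ∈ Obar r e k) (haJ : aI r e p < 1)
include hp haJ

lemma qJ_mem_simplex : qJ r e p ∈ stdSimplex ℝ Ω := by
  obtain ⟨hp0, hp1, hL1, hL2, _⟩ := obar_facts r e hk1 hkK he_inj he_range he_anti i0 hi0 hp
  have hpos : (0:ℝ) < 1 - aI r e p := by linarith
  constructor
  · intro ω
    exact mul_nonneg (inv_nonneg.mpr hpos.le)
      (sub_nonneg.mpr (piStar_le r e hk1 he_inj he_range p hp0 hL2 ω))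
  · unfold qJ
    simp only [Pi.smul_apply, smul_eq_mul, Pi.sub_apply]
    rw [← Finset.mul_sum, Finset.sum_sub_distrib, hp1]
    have : ∑ ω, piStar r e p ω = aI r e p := rfl
    rw [this]
    exact inv_mul_cancel₀ (ne_of_gt hpos)

lemma qJ_mem_Obar : qJ r e p ∈ Obar r e k := by
  obtain ⟨hp0, hp1, hL1, hL2, _⟩ := obar_facts r e hk1 hkK he_inj he_range he_anti i0 hi0 hp
  have hpos : (0:ℝ) < 1 - aI r e p := by linarith
  refine ⟨qJ_mem_simplex r e hk1 hkK he_inj he_range he_anti i0 hi0 hp haJ, ?_, ?_⟩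
  · unfold qJ
    rw [Lfun_smul, Lfun_km1_sub r e hk1 hkK he_inj he_range he_anti i0 hi0 p hp0 hL2 hL1,
      mul_zero]
  · unfold qJ
    rw [Lfun_smul]
    exact mul_nonpos_of_nonneg_of_nonpos (inv_nonneg.mpr hpos.le)
      (Lfun_k_sub r e hk1 hkK he_inj he_range he_anti i0 hi0 p hp0 hL2 hL1)

lemma qJ_fbar : fbar r (r (e i0)) (qJ r e p) = 0 := by
  obtain ⟨hp0, hp1, hL1, hL2, _⟩ := obar_facts r e hk1 hkK he_inj he_range he_anti i0 hi0 hp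
  unfold qJ
  rw [fbar_smul, fbar_sub_piStar r e hk1 hkK he_inj he_range he_anti i0 hi0 p hp0 hL2 hL1,
    mul_zero]

lemma p_decomp (haI : 0 < aI r e p) :
    aI r e p • qI r e p + (1 - aI r e p) • qJ r e p = p := by
  unfold qI qJ
  rw [smul_smul, smul_smul, mul_inv_cancel₀ (ne_of_gt haI),
    mul_inv_cancel₀ (by linarith : (1:ℝ) - aI r e p ≠ 0), one_smul, one_smul]
  funext ω
  simp

end PosAJ

lemma qJ_eq_p_of_aI_zero {p : Ω → ℝ} (hp : p ∈ Obar r e k) (haI : aI r e p = 0) :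
    qJ r e p = p := by
  obtain ⟨hp0, hp1, hL1, hL2, _⟩ := obar_facts r e hk1 hkK he_inj he_range he_anti i0 hi0 hp
  have hπ : ∀ ω ∈ Finset.univ, piStar r e p ω = 0 :=
    (Finset.sum_eq_zero_iff_of_nonneg (fun ω _ =>
      piStar_nonneg r e hk1 he_inj he_range p hp0 hL2 ω)).mp haI
  unfold qJ
  rw [haI]
  funext ω
  simp [hπ ω (Finset.mem_univ ω)]

lemma rhat_eq_fbar {p : Ω → ℝ} (hp : p ∈ Obar r e k) :
    rhat r p = fbar r (r (e i0)) p := by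
  obtain ⟨hp0, hp1, hL1, hL2, hpr⟩ := obar_facts r e hk1 hkK he_inj he_range he_anti i0 hi0 hp
  have hρ := rho_neg r e hk1 hkK he_inj he_range he_anti i0 hi0
  refine le_antisymm (rhat_le r hρ hp.1) ?_
  rcases eq_or_lt_of_le hpr with hzero | hneg
  · rw [fbar_one_of_zero r e hk1 hkK he_inj he_range he_anti i0 hi0 hp hzero]
    have hmem : p ∈ invest r := ⟨hp.1, le_of_eq hzero.symm⟩
    have := le_csSup (splittings_bddAbove r p) (Set.mem_image_of_mem _
      (dirac_mem_splittings hp.1))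
    rw [Measure.dirac_apply_of_mem hmem] at this
    simpa [rhat] using this
  · rw [← aI_eq_fbar r e hk1 hkK he_inj he_range he_anti i0 hi0 hp]
    rcases eq_or_lt_of_le (aI_nonneg' r e hk1 he_inj he_range p hp0 hL2) with haI | haI
    · rw [← haI]
      have := le_csSup (splittings_bddAbove r p) (Set.mem_image_of_mem _
        (dirac_mem_splittings hp.1))
      exact le_trans ENNReal.toReal_nonneg this
    · have haJ := aI_lt_one_of_neg r e hk1 hkK he_inj he_range he_anti i0 hi0 hp hneg
      set a := aI r e p
      have hxs := qI_mem_simplex r e hk1 hkK he_inj he_range he_anti i0 hi0 hp haI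
      have hys := qJ_mem_simplex r e hk1 hkK he_inj he_range he_anti i0 hi0 hp haJ
      have hdec := p_decomp r e hk1 hkK he_inj he_range he_anti i0 hi0 hp haJ haI
      have hmem := twopoint_mem_splittings haI.le haJ.le hxs hys
      rw [hdec] at hmem
      have hval := le_csSup (splittings_bddAbove r p) (Set.mem_image_of_mem
        (fun μ : Measure (Ω → ℝ) => (μ (invest r)).toReal) hmem)
      refine le_trans ?_ hval
      set μ := ENNReal.ofReal a • Measure.dirac (qI r e p)
        + ENNReal.ofReal (1-a) • Measure.dirac (qJ r e p) with hμdef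
      have hle : ENNReal.ofReal a ≤ μ (invest r) := by
        rw [hμdef, Measure.add_apply, Measure.smul_apply, Measure.smul_apply, smul_eq_mul,
          smul_eq_mul, Measure.dirac_apply_of_mem
            (qI_mem_invest r e hk1 hkK he_inj he_range he_anti i0 hi0 hp haI)]
        simp
      have hfin : μ (invest r) ≠ ⊤ := by
        have : IsProbabilityMeasure μ := (hmem).1
        exact measure_ne_top μ _
      have := ENNReal.toReal_mono hfin hle
      rw [ENNReal.toReal_ofReal haI.le] at this
      exact this

section Value
variable (δ : ℝ) (hδ0 : 0 ≤ δ) (hδ1 : δ < 1) {m : Ω → ℝ} (hmO : m ∈ Obar r e k)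
  {lam : ℝ} (hlam0 : 0 ≤ lam) (hlam1 : lam < 1)
  {φ : (Ω → ℝ) → Ω → ℝ} (hφ : ∀ p, φ p = m + lam • (p - m))

include hδ0 hδ1 hlam0 hlam1

lemma den_pos : 0 < 1 - δ * lam := by nlinarith

lemma c_le_one : (1 - δ)/(1 - δ*lam) ≤ 1 := by
  rw [div_le_one (den_pos r e hk1 hkK he_inj he_range he_anti i0 hi0 δ hδ0 hδ1 hlam0 hlam1)]
  nlinarith

lemma c_ge : 1 - δ ≤ (1 - δ)/(1 - δ*lam) := by
  rw [le_div_iff₀ (den_pos r e hk1 hkK he_inj he_range he_anti i0 hi0 δ hδ0 hδ1 hlam0 hlam1)]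
  nlinarith [mul_nonneg (mul_nonneg (by linarith : (0:ℝ) ≤ 1-δ) hδ0) hlam0]

include hmO hφ

lemma gbar_rec_I {p : Ω → ℝ} (hp : p ∈ Obar r e k) (hzero : ∑ ω, p ω * r ω = 0) :
    gbar r (r (e i0)) δ lam m p = (1-δ) + δ * gbar r (r (e i0)) δ lam m (φ p) := by
  have hden := den_pos r e hk1 hkK he_inj he_range he_anti i0 hi0 δ hδ0 hδ1 hlam0 hlam1
  rw [gbar_phi r hφ, gbar,
    fbar_one_of_zero r e hk1 hkK he_inj he_range he_anti i0 hi0 hp hzero]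
  exact alg_id_A (ne_of_gt hden)

lemma gbar_rec_zero {p : Ω → ℝ} (hp : p ∈ Obar r e k) (haI : aI r e p = 0) :
    gbar r (r (e i0)) δ lam m p = δ * gbar r (r (e i0)) δ lam m (φ p) := by
  have hden := den_pos r e hk1 hkK he_inj he_range he_anti i0 hi0 δ hδ0 hδ1 hlam0 hlam1
  have hf : fbar r (r (e i0)) p = 0 := by
    rw [← aI_eq_fbar r e hk1 hkK he_inj he_range he_anti i0 hi0 hp, haI]
  rw [gbar_phi r hφ, gbar, hf]
  exact alg_id_0 (ne_of_gt hden)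

lemma gbar_rec_J {p : Ω → ℝ} (hp : p ∈ Obar r e k) (hneg : ∑ ω, p ω * r ω < 0)
    (haI : 0 < aI r e p) :
    gbar r (r (e i0)) δ lam m p
      = aI r e p * ((1-δ) + δ * gbar r (r (e i0)) δ lam m (φ (qI r e p)))
        + (1 - aI r e p) * (δ * gbar r (r (e i0)) δ lam m (φ (qJ r e p))) := by
  have hden := den_pos r e hk1 hkK he_inj he_range he_anti i0 hi0 δ hδ0 hδ1 hlam0 hlam1
  have haJ := aI_lt_one_of_neg r e hk1 hkK he_inj he_range he_anti i0 hi0 hp hneg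
  rw [gbar_phi r hφ, gbar_phi r hφ, gbar,
    qI_fbar r e hk1 hkK he_inj he_range he_anti i0 hi0 hp haI,
    qJ_fbar r e hk1 hkK he_inj he_range he_anti i0 hi0 hp haJ,
    ← aI_eq_fbar r e hk1 hkK he_inj he_range he_anti i0 hi0 hp]
  exact alg_id_B (ne_of_gt hden)

lemma iterate_facts {p : Ω → ℝ} (hp : p ∈ Obar r e k) (n : ℕ) :
    φ^[n] p ∈ Obar r e k ∧ fbar r (r (e i0)) (φ^[n] p)
      = fbar r (r (e i0)) m + lam^n * (fbar r (r (e i0)) p - fbar r (r (e i0)) m) := by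
  induction n with
  | zero => exact ⟨hp, by simp⟩
  | succ n ih =>
    rw [Function.iterate_succ_apply']
    constructor
    · exact phi_mem_Obar r e hφ hlam0 hlam1 hmO ih.1
    · rw [fbar_phi r hφ, ih.2, pow_succ]
      ring

lemma gbar_eq_tsum {p : Ω → ℝ} (hp : p ∈ Obar r e k) :
    (1-δ) * ∑' n : ℕ, δ^n * rhat r (φ^[n] p) = gbar r (r (e i0)) δ lam m p := by
  have hden := den_pos r e hk1 hkK he_inj he_range he_anti i0 hi0 δ hδ0 hδ1 hlam0 hlam1
  set A := fbar r (r (e i0)) m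
  set X := fbar r (r (e i0)) p - A with hX
  have hterm : ∀ n : ℕ, δ^n * rhat r (φ^[n] p) = A * δ^n + X * (δ*lam)^n := by
    intro n
    obtain ⟨hmem, hfb⟩ := iterate_facts r e hk1 hkK he_inj he_range he_anti i0 hi0 δ hδ0
      hδ1 hmO hlam0 hlam1 hφ hp n
    rw [rhat_eq_fbar r e hk1 hkK he_inj he_range he_anti i0 hi0 hmem, hfb, mul_pow]
    ring
  rw [tsum_congr hterm]
  have hs1 : Summable (fun n : ℕ => A * δ^n) :=
    (summable_geometric_of_lt_one hδ0 hδ1).mul_left A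
  have hδlam0 : 0 ≤ δ * lam := mul_nonneg hδ0 hlam0
  have hδlam1 : δ * lam < 1 := by nlinarith
  have hs2 : Summable (fun n : ℕ => X * (δ*lam)^n) :=
    (summable_geometric_of_lt_one hδlam0 hδlam1).mul_left X
  rw [Summable.tsum_add hs1 hs2, tsum_mul_left, tsum_mul_left,
    tsum_geometric_of_lt_one hδ0 hδ1, tsum_geometric_of_lt_one hδlam0 hδlam1]
  unfold gbar
  rw [← hX]
  have h1 : (1:ℝ) - δ ≠ 0 := by linarith
  have h2 : (1:ℝ) - δ*lam ≠ 0 := ne_of_gt hden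
  field_simp
  ring

omit hδ0 hδ1 hlam0 hlam1 hmO hφ in
lemma fbar_le_B {q : Ω → ℝ} (hq : q ∈ stdSimplex ℝ Ω) :
    fbar r (r (e i0)) q ≤ ∑ ω, cvec r (r (e i0)) ω :=
  Finset.sum_le_sum fun ω _ => by
    have h1 := cvec_nonneg r (r (e i0)) ω
    have h2 := simplex_coord_le_one hq ω
    nlinarith [hq.1 ω]

omit hmO hφ in
lemma c_nonneg : 0 ≤ (1 - δ)/(1 - δ*lam) :=
  div_nonneg (by linarith)
    (den_pos r e hk1 hkK he_inj he_range he_anti i0 hi0 δ hδ0 hδ1 hlam0 hlam1).le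

omit hφ in
lemma gbar_nonneg {q : Ω → ℝ} (hq : q ∈ stdSimplex ℝ Ω) :
    0 ≤ gbar r (r (e i0)) δ lam m q := by
  have hc0 := c_nonneg r e hk1 hkK he_inj he_range he_anti i0 hi0 δ hδ0 hδ1 hlam0 hlam1
  have hc1 := c_le_one r e hk1 hkK he_inj he_range he_anti i0 hi0 δ hδ0 hδ1 hlam0 hlam1
  have hA : 0 ≤ fbar r (r (e i0)) m := fbar_nonneg r _ m hmO.1.1
  have hf : 0 ≤ fbar r (r (e i0)) q := fbar_nonneg r _ q hq.1
  unfold gbar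
  nlinarith

omit hφ in
lemma gbar_ge {q : Ω → ℝ} (hq : q ∈ stdSimplex ℝ Ω) :
    (1-δ) * fbar r (r (e i0)) q ≤ gbar r (r (e i0)) δ lam m q := by
  have hc2 := c_ge r e hk1 hkK he_inj he_range he_anti i0 hi0 δ hδ0 hδ1 hlam0 hlam1
  have hc1 := c_le_one r e hk1 hkK he_inj he_range he_anti i0 hi0 δ hδ0 hδ1 hlam0 hlam1
  have hA : 0 ≤ fbar r (r (e i0)) m := fbar_nonneg r _ m hmO.1.1
  have hf : 0 ≤ fbar r (r (e i0)) q := fbar_nonneg r _ q hq.1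
  unfold gbar
  nlinarith

omit hφ in
lemma gbar_le {q : Ω → ℝ} (hq : q ∈ stdSimplex ℝ Ω) :
    gbar r (r (e i0)) δ lam m q ≤ fbar r (r (e i0)) m + ∑ ω, cvec r (r (e i0)) ω := by
  have hc0 := c_nonneg r e hk1 hkK he_inj he_range he_anti i0 hi0 δ hδ0 hδ1 hlam0 hlam1
  have hc1 := c_le_one r e hk1 hkK he_inj he_range he_anti i0 hi0 δ hδ0 hδ1 hlam0 hlam1
  have hA : 0 ≤ fbar r (r (e i0)) m := fbar_nonneg r _ m hmO.1.1
  have hf : 0 ≤ fbar r (r (e i0)) q := fbar_nonneg r _ q hq.1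
  have hB := fbar_le_B r e hk1 hkK he_inj he_range he_anti i0 hi0 hq
  have hBpos : 0 ≤ ∑ ω, cvec r (r (e i0)) ω :=
    Finset.sum_nonneg fun ω _ => cvec_nonneg r _ ω
  unfold gbar
  nlinarith

omit hφ in
lemma gbar_abs_le {q : Ω → ℝ} (hq : q ∈ stdSimplex ℝ Ω) :
    |gbar r (r (e i0)) δ lam m q| ≤ fbar r (r (e i0)) m + ∑ ω, cvec r (r (e i0)) ω := by
  rw [abs_of_nonneg (gbar_nonneg r e hk1 hkK he_inj he_range he_anti i0 hi0 δ hδ0 hδ1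
    hmO hlam0 hlam1 hq)]
  exact gbar_le r e hk1 hkK he_inj he_range he_anti i0 hi0 δ hδ0 hδ1 hmO hlam0 hlam1 hq

lemma gamma_eq_gbar (γ : (Ω → ℝ) → ℝ)
    (hγb : ∃ C, ∀ p ∈ stdSimplex ℝ Ω, |γ p| ≤ C)
    (hγI : ∀ p ∈ invest r, γ p = (1 - δ) + δ * γ (φ p))
    (hγJ : ∀ p ∈ stdSimplex ℝ Ω, ∑ ω, p ω * r ω < 0 →
      γ p = aI r e p * ((1 - δ) + δ * γ (φ (qI r e p)))
        + (1 - aI r e p) * (δ * γ (φ (qJ r e p)))) :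
    ∀ p ∈ Obar r e k, γ p = gbar r (r (e i0)) δ lam m p := by
  obtain ⟨C, hC⟩ := hγb
  set g := gbar r (r (e i0)) δ lam m with hg
  set S := (fun p => |γ p - g p|) '' Obar r e k with hS
  have hSne : S.Nonempty := ⟨_, m, hmO, rfl⟩
  have hSbdd : BddAbove S := by
    refine ⟨C + (fbar r (r (e i0)) m + ∑ ω, cvec r (r (e i0)) ω), ?_⟩
    rintro x ⟨p, hp, rfl⟩
    refine le_trans (abs_sub (γ p) (g p)) ?_
    exact add_le_add (hC p hp.1) (gbar_abs_le r e hk1 hkK he_inj he_range he_anti i0 hi0 δ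
      hδ0 hδ1 hmO hlam0 hlam1 hp.1)
  set M := sSup S with hM
  have hmem' : ∀ q ∈ Obar r e k, |γ q - g q| ≤ M := fun q hq =>
    le_csSup hSbdd ⟨q, hq, rfl⟩
  have hM0 : 0 ≤ M := le_trans (abs_nonneg _) (hmem' m hmO)
  have hφD : ∀ q ∈ Obar r e k, φ q ∈ Obar r e k := fun q hq =>
    phi_mem_Obar r e hφ hlam0 hlam1 hmO hq
  have key : ∀ p ∈ Obar r e k, |γ p - g p| ≤ δ * M := by
    intro p hp
    obtain ⟨hp0, hp1, hL1, hL2, hpr⟩ :=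
      obar_facts r e hk1 hkK he_inj he_range he_anti i0 hi0 hp
    rcases eq_or_lt_of_le hpr with hzero | hneg
    · have h1 : γ p = (1-δ) + δ * γ (φ p) := hγI p ⟨hp.1, le_of_eq hzero.symm⟩
      have h2 : g p = (1-δ) + δ * g (φ p) :=
        gbar_rec_I r e hk1 hkK he_inj he_range he_anti i0 hi0 δ hδ0 hδ1 hmO hlam0 hlam1 hφ
          hp hzero
      have h3 : γ p - g p = δ * (γ (φ p) - g (φ p)) := by rw [h1, h2]; ring
      rw [h3, abs_mul, abs_of_nonneg hδ0]
      exact mul_le_mul_of_nonneg_left (hmem' _ (hφD p hp)) hδ0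
    · rcases eq_or_lt_of_le (aI_nonneg' r e hk1 he_inj he_range p hp0 hL2) with haI | haI
      · have h1 : γ p = δ * γ (φ p) := by
          have := hγJ p hp.1 hneg
          rw [← haI, qJ_eq_p_of_aI_zero r e hk1 hkK he_inj he_range he_anti i0 hi0 hp
            haI.symm] at this
          rw [this]
          ring
        have h2 : g p = δ * g (φ p) :=
          gbar_rec_zero r e hk1 hkK he_inj he_range he_anti i0 hi0 δ hδ0 hδ1 hmO hlam0
            hlam1 hφ hp haI.symm
        have h3 : γ p - g p = δ * (γ (φ p) - g (φ p)) := by rw [h1, h2]; ring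
        rw [h3, abs_mul, abs_of_nonneg hδ0]
        exact mul_le_mul_of_nonneg_left (hmem' _ (hφD p hp)) hδ0
      · have haJ := aI_lt_one_of_neg r e hk1 hkK he_inj he_range he_anti i0 hi0 hp hneg
        have h1 := hγJ p hp.1 hneg
        have h2 : g p
            = aI r e p * ((1-δ) + δ * g (φ (qI r e p)))
              + (1 - aI r e p) * (δ * g (φ (qJ r e p))) :=
          gbar_rec_J r e hk1 hkK he_inj he_range he_anti i0 hi0 δ hδ0 hδ1 hmO
            hlam0 hlam1 hφ hp hneg haI
        have hqI : φ (qI r e p) ∈ Obar r e k :=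
          hφD _ (qI_mem_Obar r e hk1 hkK he_inj he_range he_anti i0 hi0 hp haI)
        have hqJ : φ (qJ r e p) ∈ Obar r e k :=
          hφD _ (qJ_mem_Obar r e hk1 hkK he_inj he_range he_anti i0 hi0 hp haJ)
        have h3 : γ p - g p
            = aI r e p * (δ * (γ (φ (qI r e p)) - g (φ (qI r e p))))
              + (1 - aI r e p) * (δ * (γ (φ (qJ r e p)) - g (φ (qJ r e p)))) := by
          rw [h1, h2]
          ring
        calc |γ p - g p|
            ≤ |aI r e p * (δ * (γ (φ (qI r e p)) - g (φ (qI r e p))))|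
              + |(1 - aI r e p) * (δ * (γ (φ (qJ r e p)) - g (φ (qJ r e p))))| := by
              rw [h3]; exact abs_add_le _ _
          _ ≤ aI r e p * (δ * M) + (1 - aI r e p) * (δ * M) := by
              rw [abs_mul, abs_mul, abs_mul, abs_mul, abs_of_nonneg haI.le,
                abs_of_nonneg (by linarith : (0:ℝ) ≤ 1 - aI r e p),
                abs_of_nonneg hδ0]
              exact add_le_add
                (mul_le_mul_of_nonneg_left
                  (mul_le_mul_of_nonneg_left (hmem' _ hqI) hδ0) haI.le)
                (mul_le_mul_of_nonneg_left
                  (mul_le_mul_of_nonneg_left (hmem' _ hqJ) hδ0) (by linarith))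
          _ = δ * M := by ring
  have hM' : M ≤ δ * M := by
    rw [hM]
    refine Real.sSup_le ?_ (mul_nonneg hδ0 hM0)
    rintro x ⟨p, hp, rfl⟩
    exact key p hp
  have hMzero : M = 0 := by nlinarith
  intro p hp
  have := hmem' p hp
  rw [hMzero] at this
  have habs : |γ p - g p| = 0 := le_antisymm this (abs_nonneg _)
  have := abs_eq_zero.mp habs
  linarith [this]

lemma dpp_bddAbove (V : (Ω → ℝ) → ℝ) {C : ℝ} (hC : ∀ p ∈ stdSimplex ℝ Ω, |V p| ≤ C)
    (q : Ω → ℝ) : BddAbove (dppPayoff r δ φ V '' Splittings q) := by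
  refine ⟨(1-δ) * 1 + δ * max C 0, ?_⟩
  rintro x ⟨μ, hμ, rfl⟩
  have hpm : IsProbabilityMeasure μ := hμ.1
  unfold dppPayoff
  have hres : μ.restrict (stdSimplex ℝ Ω) = μ :=
    Measure.restrict_eq_self_of_ae_mem (splittings_ae hμ)
  have h1 : (μ (invest r)).toReal ≤ 1 :=
    le_trans (ENNReal.toReal_mono ENNReal.one_ne_top prob_le_one) (by norm_num)
  have h2 : ∫ x in stdSimplex ℝ Ω, V (φ x) ∂μ ≤ max C 0 := by
    rw [hres]
    by_cases hInt : Integrable (fun x : Ω → ℝ => V (φ x)) μ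
    · have hb : ∀ᵐ x ∂μ, V (φ x) ≤ max C 0 := by
        filter_upwards [splittings_ae hμ] with x hx
        have hφx : φ x ∈ stdSimplex ℝ Ω := phi_mem_simplex hφ hlam0 hlam1 hmO.1 hx
        exact le_trans (le_trans (le_abs_self _) (hC _ hφx)) (le_max_left _ _)
      calc ∫ x, V (φ x) ∂μ ≤ ∫ _, max C 0 ∂μ :=
            integral_mono_ae hInt (integrable_const _) hb
        _ = max C 0 := by simp
    · rw [integral_undef hInt]
      exact le_max_right _ _
  have h3 : (0:ℝ) ≤ 1 - δ := by linarith
  nlinarith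

lemma V_le_gbar (V : (Ω → ℝ) → ℝ) (hVb : ∃ C, ∀ p ∈ stdSimplex ℝ Ω, |V p| ≤ C)
    (hV : SatisfiesDPP r δ φ V) :
    ∀ q ∈ stdSimplex ℝ Ω, V q ≤ gbar r (r (e i0)) δ lam m q := by
  obtain ⟨C, hC⟩ := hVb
  have hρ := rho_neg r e hk1 hkK he_inj he_range he_anti i0 hi0
  have hden := den_pos r e hk1 hkK he_inj he_range he_anti i0 hi0 δ hδ0 hδ1 hlam0 hlam1
  have hc0 := c_nonneg r e hk1 hkK he_inj he_range he_anti i0 hi0 δ hδ0 hδ1 hlam0 hlam1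
  have hc1 := c_le_one r e hk1 hkK he_inj he_range he_anti i0 hi0 δ hδ0 hδ1 hlam0 hlam1
  have hA : 0 ≤ fbar r (r (e i0)) m := fbar_nonneg r _ m hmO.1.1
  set g := gbar r (r (e i0)) δ lam m with hg
  set A := fbar r (r (e i0)) m with hAdef
  set c := (1 - δ)/(1 - δ*lam) with hcdef
  set T := (fun q => V q - g q) '' (stdSimplex ℝ Ω) with hT
  have hTne : T.Nonempty := ⟨_, m, hmO.1, rfl⟩
  have hTbdd : BddAbove T := by
    refine ⟨C, ?_⟩
    rintro x ⟨q, hq, rfl⟩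
    have h1 : 0 ≤ g q := gbar_nonneg r e hk1 hkK he_inj he_range he_anti i0 hi0 δ hδ0 hδ1
      hmO hlam0 hlam1 hq
    have h2 := le_trans (le_abs_self _) (hC q hq)
    show V q - g q ≤ C
    linarith
  set M1 := max 0 (sSup T) with hM1
  have hM10 : 0 ≤ M1 := le_max_left _ _
  have hub : ∀ q ∈ stdSimplex ℝ Ω, V q ≤ g q + M1 := by
    intro q hq
    have := le_csSup hTbdd (Set.mem_image_of_mem _ hq)
    have h2 : sSup T ≤ M1 := le_max_right _ _
    simp only [hT] at this
    linarith [this]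
  have key : ∀ q ∈ stdSimplex ℝ Ω, V q ≤ g q + δ * M1 := by
    intro q hq
    rw [hV q hq]
    have hgq : 0 ≤ g q := gbar_nonneg r e hk1 hkK he_inj he_range he_anti i0 hi0 δ hδ0 hδ1
      hmO hlam0 hlam1 hq
    refine Real.sSup_le ?_ (by positivity)
    rintro x ⟨μ, hμ, rfl⟩
    unfold dppPayoff
    have hres : μ.restrict (stdSimplex ℝ Ω) = μ :=
      Measure.restrict_eq_self_of_ae_mem (splittings_ae hμ)
    have hpm : IsProbabilityMeasure μ := hμ.1
    have hrep : ∀ x : Ω → ℝ, g (φ x) = (A - c*lam*A) + (c*lam) * fbar r (r (e i0)) x := by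
      intro x
      rw [hg, gbar_phi r hφ, ← hAdef, ← hcdef]
      ring
    have hgint : Integrable (fun x : Ω → ℝ => g (φ x)) μ := by
      rw [funext hrep]
      exact (integrable_const _).add ((splittings_integrable_fbar r _ hμ).const_mul _)
    have hGI : ∫ x, g (φ x) ∂μ = A + c * ((A + lam * (fbar r (r (e i0)) q - A)) - A) := by
      rw [funext hrep, integral_add (integrable_const _)
        ((splittings_integrable_fbar r _ hμ).const_mul _), integral_const,
        integral_const_mul, splittings_integral_fbar r _ hμ]
      simp only [probReal_univ, measure_univ, ENNReal.toReal_one, one_smul, smul_eq_mul]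
      ring
    have hIle : ∫ x in stdSimplex ℝ Ω, V (φ x) ∂μ ≤ (∫ x, g (φ x) ∂μ) + M1 := by
      rw [hres]
      by_cases hInt : Integrable (fun x : Ω → ℝ => V (φ x)) μ
      · have hb : (fun x : Ω → ℝ => V (φ x)) ≤ᵐ[μ] fun x => g (φ x) + M1 := by
          filter_upwards [splittings_ae hμ] with x hx
          exact hub _ (phi_mem_simplex hφ hlam0 hlam1 hmO.1 hx)
        calc ∫ x, V (φ x) ∂μ ≤ ∫ x, (g (φ x) + M1) ∂μ :=
              integral_mono_ae hInt (hgint.add (integrable_const _)) hb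
          _ = (∫ x, g (φ x) ∂μ) + M1 := by
              rw [integral_add hgint (integrable_const _), integral_const]
              simp
      · rw [integral_undef hInt, hGI]
        have hfq : 0 ≤ fbar r (r (e i0)) q := fbar_nonneg r _ q hq.1
        have hcl : c * lam ≤ 1 := by nlinarith
        nlinarith [mul_nonneg (mul_nonneg hc0 hlam0) hfq,
          mul_nonneg (sub_nonneg.mpr hcl) hA]
    have hmu : (μ (invest r)).toReal ≤ fbar r (r (e i0)) q := splittings_invest_le r hρ hμ
    have halg : (1-δ) * fbar r (r (e i0)) q
        + δ * ((A + c * ((A + lam * (fbar r (r (e i0)) q - A)) - A)) + M1)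
        = g q + δ * M1 := by
      rw [hg, gbar, ← hAdef, ← hcdef, hcdef, mul_add]
      have := alg_id_sup (δ := δ) (lam := lam) (A := A) (x := fbar r (r (e i0)) q)
        (ne_of_gt hden)
      rw [← hcdef] at this
      linarith [this]
    have h1δ : (0:ℝ) ≤ 1 - δ := by linarith
    nlinarith [mul_le_mul_of_nonneg_left hIle hδ0,
      mul_le_mul_of_nonneg_left hmu h1δ]
  have hsup : sSup T ≤ δ * M1 := by
    refine Real.sSup_le ?_ (by positivity)
    rintro x ⟨q, hq, rfl⟩
    have := key q hq
    simp only
    linarith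
  have hM1le : M1 ≤ δ * M1 := by
    rw [hM1]
    exact max_le (by positivity) hsup
  have hM1z : M1 = 0 := by nlinarith
  intro q hq
  have h1 : V q - g q ≤ sSup T := le_csSup hTbdd (Set.mem_image_of_mem _ hq)
  have h2 : sSup T ≤ M1 := le_max_right _ _
  rw [hM1z] at h2
  linarith

lemma V_ge_gbar (V : (Ω → ℝ) → ℝ) (hVb : ∃ C, ∀ p ∈ stdSimplex ℝ Ω, |V p| ≤ C)
    (hV : SatisfiesDPP r δ φ V) :
    ∀ p ∈ Obar r e k, gbar r (r (e i0)) δ lam m p ≤ V p := by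
  classical
  obtain ⟨C, hC⟩ := hVb
  set g := gbar r (r (e i0)) δ lam m with hg
  set T := (fun p => V p - g p) '' (Obar r e k) with hT
  have hTne : T.Nonempty := ⟨_, m, hmO, rfl⟩
  have hTbdd : BddBelow T := by
    refine ⟨-C - (fbar r (r (e i0)) m + ∑ ω, cvec r (r (e i0)) ω), ?_⟩
    rintro x ⟨p, hp, rfl⟩
    have h1 := gbar_abs_le r e hk1 hkK he_inj he_range he_anti i0 hi0 δ hδ0 hδ1 hmO hlam0
      hlam1 hp.1
    have h2 := (abs_le.mp (hC p hp.1)).1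
    have h3 := (abs_le.mp h1).2
    show -C - (fbar r (r (e i0)) m + ∑ ω, cvec r (r (e i0)) ω) ≤ V p - g p
    linarith
  set M2 := sInf T with hM2
  have hM2le : ∀ p ∈ Obar r e k, M2 ≤ V p - g p := fun p hp =>
    csInf_le hTbdd ⟨p, hp, rfl⟩
  have hφD : ∀ q ∈ Obar r e k, φ q ∈ Obar r e k := fun q hq =>
    phi_mem_Obar r e hφ hlam0 hlam1 hmO hq
  have key : ∀ p ∈ Obar r e k, g p + δ * M2 ≤ V p := by
    intro p hp
    obtain ⟨hp0, hp1, hL1, hL2, hpr⟩ :=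
      obar_facts r e hk1 hkK he_inj he_range he_anti i0 hi0 hp
    have hVge : ∀ μ ∈ Splittings p, dppPayoff r δ φ V μ ≤ V p := by
      intro μ hμ
      rw [hV p hp.1]
      exact le_csSup (dpp_bddAbove r e hk1 hkK he_inj he_range he_anti i0 hi0 δ hδ0 hδ1
        hmO hlam0 hlam1 hφ V hC p) (Set.mem_image_of_mem _ hμ)
    rcases eq_or_lt_of_le hpr with hzero | hneg
    · -- p ∈ invest, use dirac p
      have hμ := dirac_mem_splittings hp.1
      have hval := hVge _ hμ
      unfold dppPayoff at hval
      rw [Measure.dirac_apply_of_mem (show p ∈ invest r from ⟨hp.1, le_of_eq hzero.symm⟩),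
        setIntegral_dirac (fun x => V (φ x)) p (stdSimplex ℝ Ω), if_pos hp.1] at hval
      simp only [ENNReal.toReal_one, mul_one] at hval
      have hrec : g p = (1-δ) + δ * g (φ p) :=
        gbar_rec_I r e hk1 hkK he_inj he_range he_anti i0 hi0 δ hδ0 hδ1 hmO hlam0 hlam1 hφ
          hp hzero
      have hstep : g (φ p) + M2 ≤ V (φ p) := by
        have := hM2le _ (hφD p hp)
        linarith
      have := mul_le_mul_of_nonneg_left hstep hδ0
      rw [hrec]
      linarith
    · rcases eq_or_lt_of_le (aI_nonneg' r e hk1 he_inj he_range p hp0 hL2) with haI | haI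
      · -- aI = 0, use dirac p
        have hμ := dirac_mem_splittings hp.1
        have hval := hVge _ hμ
        unfold dppPayoff at hval
        have hnotI : p ∉ invest r := fun h => absurd h.2 (not_le.mpr hneg)
        rw [Measure.dirac_apply' p (measurableSet_invest r),
          Set.indicator_of_notMem hnotI,
          setIntegral_dirac (fun x => V (φ x)) p (stdSimplex ℝ Ω), if_pos hp.1] at hval
        simp only [ENNReal.toReal_zero, mul_zero] at hval
        have hrec : g p = δ * g (φ p) :=
          gbar_rec_zero r e hk1 hkK he_inj he_range he_anti i0 hi0 δ hδ0 hδ1 hmO hlam0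
            hlam1 hφ hp haI.symm
        have hstep : g (φ p) + M2 ≤ V (φ p) := by
          have := hM2le _ (hφD p hp)
          linarith
        have := mul_le_mul_of_nonneg_left hstep hδ0
        rw [hrec]
        linarith
      · -- aI > 0, use the greedy two-point splitting
        have haJ := aI_lt_one_of_neg r e hk1 hkK he_inj he_range he_anti i0 hi0 hp hneg
        set a := aI r e p with ha
        have hxs := qI_mem_simplex r e hk1 hkK he_inj he_range he_anti i0 hi0 hp haI
        have hys := qJ_mem_simplex r e hk1 hkK he_inj he_range he_anti i0 hi0 hp haJ
        have hdec := p_decomp r e hk1 hkK he_inj he_range he_anti i0 hi0 hp haJ haI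
        have hmem := twopoint_mem_splittings haI.le haJ.le hxs hys
        rw [hdec] at hmem
        have hval := hVge _ hmem
        set μ := ENNReal.ofReal a • Measure.dirac (qI r e p)
          + ENNReal.ofReal (1-a) • Measure.dirac (qJ r e p) with hμdef
        unfold dppPayoff at hval
        have hres : μ.restrict (stdSimplex ℝ Ω) = μ :=
          Measure.restrict_eq_self_of_ae_mem (splittings_ae hmem)
        rw [hres, twopoint_integral (fun x => V (φ x)) haI.le haJ.le] at hval
        have hIle : a ≤ (μ (invest r)).toReal := by
          have hle : ENNReal.ofReal a ≤ μ (invest r) := by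
            rw [hμdef, Measure.add_apply, Measure.smul_apply, Measure.smul_apply,
              smul_eq_mul, smul_eq_mul, Measure.dirac_apply_of_mem
                (qI_mem_invest r e hk1 hkK he_inj he_range he_anti i0 hi0 hp haI)]
            simp
          have hfin : μ (invest r) ≠ ⊤ := by
            have : IsProbabilityMeasure μ := hmem.1
            exact measure_ne_top μ _
          have := ENNReal.toReal_mono hfin hle
          rwa [ENNReal.toReal_ofReal haI.le] at this
        have hrec : g p = a * ((1-δ) + δ * g (φ (qI r e p)))
            + (1 - a) * (δ * g (φ (qJ r e p))) :=
          gbar_rec_J r e hk1 hkK he_inj he_range he_anti i0 hi0 δ hδ0 hδ1 hmO hlam0 hlam1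
            hφ hp hneg haI
        have hstep1 : g (φ (qI r e p)) + M2 ≤ V (φ (qI r e p)) :=
          le_of_sub_nonneg (by
            have := hM2le _ (hφD _ (qI_mem_Obar r e hk1 hkK he_inj he_range he_anti i0 hi0
              hp haI))
            linarith)
        have hstep2 : g (φ (qJ r e p)) + M2 ≤ V (φ (qJ r e p)) :=
          le_of_sub_nonneg (by
            have := hM2le _ (hφD _ (qJ_mem_Obar r e hk1 hkK he_inj he_range he_anti i0 hi0
              hp haJ))
            linarith)
        have h1δ : (0:ℝ) ≤ 1 - δ := by linarith
        have h1a : (0:ℝ) ≤ 1 - a := by linarith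
        rw [hrec]
        nlinarith [mul_le_mul_of_nonneg_left hIle h1δ,
          mul_le_mul_of_nonneg_left hstep1 (mul_nonneg hδ0 haI.le),
          mul_le_mul_of_nonneg_left hstep2 (mul_nonneg hδ0 h1a)]
  have hM2ge : δ * M2 ≤ M2 := by
    rw [hM2]
    refine le_csInf hTne ?_
    rintro x ⟨p, hp, rfl⟩
    have := key p hp
    show δ * M2 ≤ V p - g p
    rw [hM2]
    linarith [key p hp]
  have hM20 : 0 ≤ M2 := by nlinarith
  intro p hp
  have := hM2le p hp
  linarith

end Value
end Main


/-- let `φ` be the homothety with center `m` and ratio `λ ∈ [0,1)` and suppose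
`m ∈ Ō(k)`. Then on `Ō(k)` the greedy payoff achieves the first-best upper bound
`γ* = (1−δ)·Σ_n δ^n r̂(φ^{(n)}(·))`; consequently every bounded solution `V` of the dynamic
programming equation coincides with `γ` on `Ō(k)`: the greedy strategy is optimal there. -/
theorem greedy_optimal_on_Obar [Fintype Ω] [DecidableEq Ω] [Nonempty Ω] {K : ℕ}
    (r : Ω → ℝ) (e : Fin K → Ω)
    (hK : 0 < K) (hplus : ∃ ω, 0 ≤ r ω)
    (he_inj : Function.Injective e)
    (he_range : ∀ ω, r ω < 0 ↔ ω ∈ Set.range e)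
    (he_anti : Antitone fun i => r (e i))
    (δ : ℝ) (hδ : δ ∈ Ico (0 : ℝ) 1)
    (m : Ω → ℝ) (hm : m ∈ stdSimplex ℝ Ω)
    (lam : ℝ) (hlam : lam ∈ Ico (0 : ℝ) 1)
    (φ : (Ω → ℝ) → Ω → ℝ) (hφ : ∀ p, φ p = m + lam • (p - m))
    (k : ℕ) (hk1 : 1 ≤ k) (hkK : k ≤ K) (hmO : m ∈ Obar r e k)
    (γ : (Ω → ℝ) → ℝ)
    (hγb : ∃ C, ∀ p ∈ stdSimplex ℝ Ω, |γ p| ≤ C)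
    (hγI : ∀ p ∈ invest r, γ p = (1 - δ) + δ * γ (φ p))
    (hγJ : ∀ p ∈ stdSimplex ℝ Ω, ∑ ω, p ω * r ω < 0 →
      γ p = aI r e p * ((1 - δ) + δ * γ (φ (qI r e p)))
        + (1 - aI r e p) * (δ * γ (φ (qJ r e p)))) :
    (∀ p ∈ Obar r e k, γ p = (1 - δ) * ∑' n : ℕ, δ ^ n * rhat r (φ^[n] p)) ∧
    (∀ V : (Ω → ℝ) → ℝ, (∃ C, ∀ p ∈ stdSimplex ℝ Ω, |V p| ≤ C) →
      SatisfiesDPP r δ φ V → ∀ p ∈ Obar r e k, V p = γ p) := by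
  obtain ⟨hδ0, hδ1⟩ := hδ
  obtain ⟨hlam0, hlam1⟩ := hlam
  set i0 : Fin K := ⟨k - 1, by omega⟩ with hi0def
  have hi0 : (i0 : ℕ) = k - 1 := rfl
  have hγg := gamma_eq_gbar r e hk1 hkK he_inj he_range he_anti i0 hi0 δ hδ0 hδ1 hmO
    hlam0 hlam1 hφ γ hγb hγI hγJ
  constructor
  · intro p hp
    rw [hγg p hp, ← gbar_eq_tsum r e hk1 hkK he_inj he_range he_anti i0 hi0 δ hδ0 hδ1 hmO
      hlam0 hlam1 hφ hp]
  · intro V hVb hV p hp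
    rw [hγg p hp]
    exact le_antisymm
      (V_le_gbar r e hk1 hkK he_inj he_range he_anti i0 hi0 δ hδ0 hδ1 hmO hlam0 hlam1 hφ
        V hVb hV p hp.1)
      (V_ge_gbar r e hk1 hkK he_inj he_range he_anti i0 hi0 δ hδ0 hδ1 hmO hlam0 hlam1 hφ
        V hVb hV p hp)

end
end

section
/- With three states, the greedy strategy need not be optimal for all initial distributions, even when φ is a homothety. Concretely: let Ω = {1,2,3}, let δ ∈ (0,1) and ε > 0 satisfy 8ε < δ(1−δ), let r(1) = 1, r(2) = −ε/(1−ε), r(3) = −1, let m ∈ Δ(Ω) be the Dirac mass on state 2, let φ(p) = m + (1/2)·(p − m), and let p₁ := (2ε, 0, 1−2ε). Then the greedy payoff satisfies γ(p₁) ≤ 4ε, while every bounded function V satisfying the dynamic programming equation satisfies V(p₁) ≥ δ(1−δ)/2; in particular V(p₁) > γ(p₁). -/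
open MeasureTheory Set

noncomputable section

variable {Ω : Type*}

set_option maxHeartbeats 2000000 in
/-- with three states the greedy strategy need not be optimal, even when `φ`
is a homothety. With `r = (1, −ε/(1−ε), −1)`, invariant distribution the Dirac mass on
state 2, ratio `1/2`, and initial belief `p₁ = (2ε, 0, 1−2ε)`, if `8ε < δ(1−δ)` then the
greedy payoff satisfies `γ(p₁) ≤ 4ε` while every bounded solution `V` of the dynamic
programming equation satisfies `V(p₁) ≥ δ(1−δ)/2 > γ(p₁)`. -/
theorem greedy_not_optimal
    (ε δ : ℝ) (hε : 0 < ε) (hδ : δ ∈ Set.Ioo (0 : ℝ) 1) (hcounter : 8 * ε < δ * (1 - δ))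
    (r : Fin 3 → ℝ) (hr : r = ![1, -(ε / (1 - ε)), -1])
    (e : Fin 2 → Fin 3) (he : e = ![1, 2])
    (m : Fin 3 → ℝ) (hm : m = ![0, 1, 0])
    (φ : (Fin 3 → ℝ) → Fin 3 → ℝ) (hφ : ∀ p, φ p = m + (1 / 2 : ℝ) • (p - m))
    (p₁ : Fin 3 → ℝ) (hp₁ : p₁ = ![2 * ε, 0, 1 - 2 * ε])
    (γ : (Fin 3 → ℝ) → ℝ)
    (hγb : ∃ C, ∀ p ∈ stdSimplex ℝ (Fin 3), |γ p| ≤ C)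
    (hγI : ∀ p ∈ invest r, γ p = (1 - δ) + δ * γ (φ p))
    (hγJ : ∀ p ∈ stdSimplex ℝ (Fin 3), ∑ ω, p ω * r ω < 0 →
      γ p = aI r e p * ((1 - δ) + δ * γ (φ (qI r e p)))
        + (1 - aI r e p) * (δ * γ (φ (qJ r e p)))) :
    γ p₁ ≤ 4 * ε ∧
    ∀ V : (Fin 3 → ℝ) → ℝ, (∃ C, ∀ p ∈ stdSimplex ℝ (Fin 3), |V p| ≤ C) →
      SatisfiesDPP r δ φ V → δ * (1 - δ) / 2 ≤ V p₁ ∧ γ p₁ < V p₁ := by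
  classical
  obtain ⟨hδ0, hδ1⟩ := hδ
  obtain ⟨C, hC⟩ := hγb
  subst hr he hm hp₁
  -- numeric facts
  have hquarter : δ * (1 - δ) ≤ 1/4 := by nlinarith [sq_nonneg (δ - 1/2)]
  have hε32 : ε < 1/32 := by nlinarith
  have h1ε : (0:ℝ) < 1 - ε := by linarith
  have hcpos : 0 < ε / (1 - ε) := div_pos hε h1ε
  have hcn : ¬ ε/(1-ε) ≤ 0 := not_le.mpr hcpos
  have hnc : ¬ (0:ℝ) ≤ -(ε / (1 - ε)) := by linarith
  have h10 : ¬ (1:ℝ) ≤ 0 := by norm_num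
  have hclt : ε / (1 - ε) < 1/4 := by rw [div_lt_iff₀ h1ε]; nlinarith
  -- Lfun evaluations
  have hL0 : ∀ p : Fin 3 → ℝ, Lfun ![1, -(ε/(1-ε)), -1] ![1,2] 0 p = p 0 := by
    intro p
    simp [Lfun, Finset.sum_filter, Fin.sum_univ_three, Fin.sum_univ_two, hnc]
  have hL1 : ∀ p : Fin 3 → ℝ, Lfun ![1, -(ε/(1-ε)), -1] ![1,2] 1 p
      = p 0 - p 1 * (ε/(1-ε)) := by
    intro p
    simp only [Lfun, Finset.sum_filter, Fin.sum_univ_three, Fin.sum_univ_two]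
    norm_num [hnc, Matrix.cons_val_two, Matrix.vecHead, Matrix.vecTail]
    ring
  have hL2 : ∀ p : Fin 3 → ℝ, ∀ k, 2 ≤ k → Lfun ![1, -(ε/(1-ε)), -1] ![1,2] k p
      = p 0 - p 1 * (ε/(1-ε)) - p 2 := by
    intro p k hk
    have h1k : 1 ≤ k := by omega
    simp only [Lfun, Finset.sum_filter, Fin.sum_univ_three, Fin.sum_univ_two]
    norm_num [hnc, hk, h1k, Matrix.cons_val_two, Matrix.vecHead, Matrix.vecTail]
    ring
  have hsum3 : ∀ p : Fin 3 → ℝ, (∑ ω, p ω * (![1, -(ε/(1-ε)), -1]) ω)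
      = p 0 - p 1 * (ε/(1-ε)) - p 2 := by
    intro p; simp [Fin.sum_univ_three]; ring
  -- kstar
  have hksA : ∀ p : Fin 3 → ℝ, p 0 - p 1 * (ε/(1-ε)) ≤ 0 →
      kstar ![1, -(ε/(1-ε)), -1] ![1,2] p = 1 := by
    intro p hA
    have h1 : 1 ∈ {k : ℕ | 1 ≤ k ∧ Lfun ![1, -(ε/(1-ε)), -1] ![1,2] k p ≤ 0} :=
      ⟨le_refl 1, by rw [hL1]; exact hA⟩
    have hle := Nat.sInf_le h1
    have hmem := Nat.sInf_mem (⟨1, h1⟩ : Set.Nonempty _)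
    have := hmem.1
    unfold kstar
    omega
  have hksB : ∀ p : Fin 3 → ℝ, 0 < p 0 - p 1 * (ε/(1-ε)) →
      p 0 - p 1 * (ε/(1-ε)) - p 2 < 0 →
      kstar ![1, -(ε/(1-ε)), -1] ![1,2] p = 2 := by
    intro p hB hneg
    have h2 : 2 ∈ {k : ℕ | 1 ≤ k ∧ Lfun ![1, -(ε/(1-ε)), -1] ![1,2] k p ≤ 0} :=
      ⟨by norm_num, by rw [hL2 p 2 (le_refl 2)]; linarith⟩
    have hle := Nat.sInf_le h2
    have hmem := Nat.sInf_mem (⟨2, h2⟩ : Set.Nonempty _)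
    have h1m := hmem.1
    have hne1 : sInf {k : ℕ | 1 ≤ k ∧ Lfun ![1, -(ε/(1-ε)), -1] ![1,2] k p ≤ 0} ≠ 1 := by
      intro h
      rw [h] at hmem
      have := hmem.2
      rw [hL1] at this
      linarith
    unfold kstar
    omega
  -- piStar
  have hpiA : ∀ p : Fin 3 → ℝ, kstar ![1, -(ε/(1-ε)), -1] ![1,2] p = 1 →
      piStar ![1, -(ε/(1-ε)), -1] ![1,2] p = ![p 0, p 0 * ((1-ε)/ε), 0] := by
    intro p hks
    funext ω
    fin_cases ω <;>
      simp [piStar, hks, hL0, Fin.sum_univ_two, Pi.single_apply, hcn, h10] <;>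
      field_simp <;> ring
  have hpiB : ∀ p : Fin 3 → ℝ, kstar ![1, -(ε/(1-ε)), -1] ![1,2] p = 2 →
      piStar ![1, -(ε/(1-ε)), -1] ![1,2] p = ![p 0, p 1, p 0 - p 1 * (ε/(1-ε))] := by
    intro p hks
    funext ω
    fin_cases ω <;>
      simp [piStar, hks, hL1, Fin.sum_univ_two, Pi.single_apply, hcn, h10] <;>
      ring
  -- simplex helpers
  have hmem_simplex : ∀ q : Fin 3 → ℝ, (∀ x, 0 ≤ q x) → q 0 + q 1 + q 2 = 1 →
      q ∈ stdSimplex ℝ (Fin 3) := by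
    intro q h1 h2
    exact ⟨h1, by rw [Fin.sum_univ_three]; exact h2⟩
  have hsimplex_sum : ∀ q : Fin 3 → ℝ, q ∈ stdSimplex ℝ (Fin 3) → q 0 + q 1 + q 2 = 1 := by
    intro q hq
    rw [← Fin.sum_univ_three]
    exact hq.2
  -- key structural lemma about the greedy splitting
  have key : ∀ p : Fin 3 → ℝ, p ∈ stdSimplex ℝ (Fin 3) →
      (∑ ω, p ω * (![1, -(ε/(1-ε)), -1]) ω) < 0 →
      (0 ≤ aI ![1, -(ε/(1-ε)), -1] ![1,2] p ∧ aI ![1, -(ε/(1-ε)), -1] ![1,2] p ≤ 1)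
      ∧ (0 < aI ![1, -(ε/(1-ε)), -1] ![1,2] p →
          qI ![1, -(ε/(1-ε)), -1] ![1,2] p ∈ stdSimplex ℝ (Fin 3))
      ∧ (aI ![1, -(ε/(1-ε)), -1] ![1,2] p < 1 →
          qJ ![1, -(ε/(1-ε)), -1] ![1,2] p ∈ stdSimplex ℝ (Fin 3)) := by
    intro p hp hneg
    have hp0 := hp.1
    have hp1 := hsimplex_sum p hp
    rw [hsum3] at hneg
    obtain ⟨π, hπeq, hπ0, hπle⟩ : ∃ π : Fin 3 → ℝ,
        piStar ![1, -(ε/(1-ε)), -1] ![1,2] p = π ∧ (∀ x, 0 ≤ π x) ∧ (∀ x, π x ≤ p x) := by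
      rcases le_or_gt (p 0 - p 1 * (ε/(1-ε))) 0 with hA | hB
      · refine ⟨_, hpiA p (hksA p hA), fun x => ?_, fun x => ?_⟩
        · fin_cases x
          · exact hp0 0
          · show (0:ℝ) ≤ p 0 * ((1-ε)/ε)
            have := hp0 0
            have h1 : (0:ℝ) ≤ (1-ε)/ε := by positivity
            exact mul_nonneg this h1
          · show (0:ℝ) ≤ 0
            exact le_refl _
        · fin_cases x
          · show p 0 ≤ p 0
            exact le_refl _
          · show p 0 * ((1-ε)/ε) ≤ p 1
            have hA' := mul_le_mul_of_nonneg_right hA h1ε.le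
            have hdm : ε / (1-ε) * (1-ε) = ε := div_mul_cancel₀ ε h1ε.ne'
            have h2 : p 0 * ((1-ε)/ε) = (p 0 * (1-ε))/ε := by ring
            rw [h2, div_le_iff₀ hε]
            nlinarith [hA', hdm]
          · show (0:ℝ) ≤ p 2
            exact hp0 2
      · refine ⟨_, hpiB p (hksB p hB hneg), fun x => ?_, fun x => ?_⟩
        · fin_cases x
          · exact hp0 0
          · exact hp0 1
          · show (0:ℝ) ≤ p 0 - p 1 * (ε/(1-ε))
            exact hB.le
        · fin_cases x
          · show p 0 ≤ p 0
            exact le_refl _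
          · show p 1 ≤ p 1
            exact le_refl _
          · show p 0 - p 1 * (ε/(1-ε)) ≤ p 2
            linarith
    have haI_eq : aI ![1, -(ε/(1-ε)), -1] ![1,2] p = π 0 + π 1 + π 2 := by
      simp [aI, hπeq, Fin.sum_univ_three]
    have hπ00 := hπ0 0; have hπ01 := hπ0 1; have hπ02 := hπ0 2
    have hπl0 := hπle 0; have hπl1 := hπle 1; have hπl2 := hπle 2
    refine ⟨⟨by rw [haI_eq]; linarith, by rw [haI_eq]; linarith⟩, ?_, ?_⟩
    · intro ha
      refine hmem_simplex _ (fun x => ?_) ?_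
      · have : qI ![1, -(ε/(1-ε)), -1] ![1,2] p x
            = (aI ![1, -(ε/(1-ε)), -1] ![1,2] p)⁻¹ * π x := by
          simp [qI, hπeq]
        rw [this]
        exact mul_nonneg (inv_nonneg.mpr ha.le) (hπ0 x)
      · have hval : ∀ x, qI ![1, -(ε/(1-ε)), -1] ![1,2] p x
            = (aI ![1, -(ε/(1-ε)), -1] ![1,2] p)⁻¹ * π x := by
          intro x; simp [qI, hπeq]
        rw [hval 0, hval 1, hval 2]
        have h := inv_mul_cancel₀ (ne_of_gt ha)
        rw [haI_eq] at h ⊢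
        linear_combination h
    · intro ha
      refine hmem_simplex _ (fun x => ?_) ?_
      · have : qJ ![1, -(ε/(1-ε)), -1] ![1,2] p x
            = (1 - aI ![1, -(ε/(1-ε)), -1] ![1,2] p)⁻¹ * (p x - π x) := by
          simp [qJ, hπeq]
        rw [this]
        exact mul_nonneg (inv_nonneg.mpr (by linarith)) (by linarith [hπle x])
      · have hval : ∀ x, qJ ![1, -(ε/(1-ε)), -1] ![1,2] p x
            = (1 - aI ![1, -(ε/(1-ε)), -1] ![1,2] p)⁻¹ * (p x - π x) := by
          intro x; simp [qJ, hπeq]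
        rw [hval 0, hval 1, hval 2]
        have h := inv_mul_cancel₀ (a := 1 - aI ![1, -(ε/(1-ε)), -1] ![1,2] p)
          (by intro h0; rw [sub_eq_zero] at h0; rw [← h0] at ha; exact lt_irrefl _ ha)
        rw [haI_eq] at h ⊢
        linear_combination h + (1 - (π 0 + π 1 + π 2))⁻¹ * hp1
  -- degenerate splitting when p 0 = 0
  have key0 : ∀ p : Fin 3 → ℝ, p ∈ stdSimplex ℝ (Fin 3) → p 0 = 0 →
      aI ![1, -(ε/(1-ε)), -1] ![1,2] p = 0 ∧ qJ ![1, -(ε/(1-ε)), -1] ![1,2] p = p := by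
    intro p hp h0
    have hA : p 0 - p 1 * (ε/(1-ε)) ≤ 0 := by
      rw [h0]
      have := mul_nonneg (hp.1 1) hcpos.le
      linarith
    have hpi := hpiA p (hksA p hA)
    have hpi0 : piStar ![1, -(ε/(1-ε)), -1] ![1,2] p = 0 := by
      rw [hpi]
      funext x
      fin_cases x <;> simp [h0]
    have haI0 : aI ![1, -(ε/(1-ε)), -1] ![1,2] p = 0 := by
      simp [aI, hpi0]
    refine ⟨haI0, ?_⟩
    rw [qJ, haI0, hpi0]
    simp
  -- φ maps the simplex to itself
  have hφmaps : ∀ p ∈ stdSimplex ℝ (Fin 3), φ p ∈ stdSimplex ℝ (Fin 3) := by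
    intro p hp
    rw [hφ]
    refine hmem_simplex _ (fun x => ?_) ?_
    · have h1 := hp.1 x
      have hmx : (0:ℝ) ≤ ![0,1,0] x := by fin_cases x <;> norm_num
      simp only [Pi.add_apply, Pi.smul_apply, Pi.sub_apply, smul_eq_mul]
      linarith
    · have h2 := hsimplex_sum p hp
      simp only [Pi.add_apply, Pi.smul_apply, Pi.sub_apply, smul_eq_mul]
      norm_num [Matrix.cons_val_two, Matrix.vecHead, Matrix.vecTail]
      linarith
  have hsimplex_ne : (stdSimplex ℝ (Fin 3)).Nonempty :=
    ⟨![0,1,0], hmem_simplex _ (fun x => by fin_cases x <;> norm_num) (by norm_num [Matrix.cons_val_two, Matrix.vecHead, Matrix.vecTail])⟩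
  -- sup of γ over the simplex is at most 1
  have hMbdd : BddAbove (γ '' stdSimplex ℝ (Fin 3)) :=
    ⟨C, by rintro y ⟨p, hp, rfl⟩; exact le_trans (le_abs_self _) (hC p hp)⟩
  have hne_img : (γ '' stdSimplex ℝ (Fin 3)).Nonempty := hsimplex_ne.image γ
  set M := sSup (γ '' stdSimplex ℝ (Fin 3)) with hM
  have hγleM : ∀ p ∈ stdSimplex ℝ (Fin 3), γ p ≤ M := fun p hp => le_csSup hMbdd ⟨p, hp, rfl⟩
  have hstep : ∀ p ∈ stdSimplex ℝ (Fin 3), γ p ≤ (1-δ) + δ * M := by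
    intro p hp
    rcases le_or_gt 0 (∑ ω, p ω * (![1, -(ε/(1-ε)), -1]) ω) with hI | hJ
    · rw [hγI p ⟨hp, hI⟩]
      have := hγleM _ (hφmaps p hp)
      nlinarith
    · rw [hγJ p hp hJ]
      obtain ⟨⟨ha0, ha1⟩, hqI, hqJ'⟩ := key p hp hJ
      have t1 : aI ![1, -(ε/(1-ε)), -1] ![1,2] p
            * ((1-δ) + δ * γ (φ (qI ![1, -(ε/(1-ε)), -1] ![1,2] p)))
          ≤ aI ![1, -(ε/(1-ε)), -1] ![1,2] p * ((1-δ) + δ * M) := by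
        rcases eq_or_lt_of_le ha0 with h | h
        · rw [← h]; simp
        · refine mul_le_mul_of_nonneg_left ?_ ha0
          have := hγleM _ (hφmaps _ (hqI h))
          nlinarith
      have t2 : (1 - aI ![1, -(ε/(1-ε)), -1] ![1,2] p)
            * (δ * γ (φ (qJ ![1, -(ε/(1-ε)), -1] ![1,2] p)))
          ≤ (1 - aI ![1, -(ε/(1-ε)), -1] ![1,2] p) * (δ * M) := by
        rcases eq_or_lt_of_le ha1 with h | h
        · rw [h]; simp
        · refine mul_le_mul_of_nonneg_left ?_ (by linarith)
          have := hγleM _ (hφmaps _ (hqJ' h))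
          nlinarith
      nlinarith [t1, t2]
  have hM1 : M ≤ 1 := by
    have hMle : M ≤ (1-δ) + δ * M :=
      csSup_le hne_img (by rintro y ⟨p, hp, rfl⟩; exact hstep p hp)
    nlinarith
  -- γ vanishes on the face p 0 = 0
  have hzero : ∀ p ∈ stdSimplex ℝ (Fin 3), p 0 = 0 → γ p = 0 := by
    have hS0ne : (∃ p : Fin 3 → ℝ, p ∈ stdSimplex ℝ (Fin 3) ∧ p 0 = 0) :=
      ⟨![0,1,0], hmem_simplex _ (fun x => by fin_cases x <;> norm_num) (by norm_num [Matrix.cons_val_two, Matrix.vecHead, Matrix.vecTail]),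
        by norm_num⟩
    set S0 : Set (Fin 3 → ℝ) := {p | p ∈ stdSimplex ℝ (Fin 3) ∧ p 0 = 0} with hS0def
    have hS0ne' : S0.Nonempty := by
      obtain ⟨p, h1, h2⟩ := hS0ne; exact ⟨p, h1, h2⟩
    have hD_bdd : BddAbove ((fun p => |γ p|) '' S0) :=
      ⟨C, by rintro y ⟨p, hp, rfl⟩; exact hC p hp.1⟩
    set D := sSup ((fun p => |γ p|) '' S0) with hD
    have hφS0 : ∀ p ∈ S0, φ p ∈ S0 := by
      intro p hp
      refine ⟨hφmaps p hp.1, ?_⟩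
      rw [hφ]
      simp only [Pi.add_apply, Pi.smul_apply, Pi.sub_apply, smul_eq_mul]
      rw [hp.2]
      norm_num
    have hrec : ∀ p ∈ S0, γ p = δ * γ (φ p) := by
      intro p hp
      obtain ⟨hps, h0⟩ := hp
      have hp12 : p 1 + p 2 = 1 := by
        have := hsimplex_sum p hps
        linarith
      have hpneg : (∑ ω, p ω * (![1, -(ε/(1-ε)), -1]) ω) < 0 := by
        rw [hsum3, h0]
        have h1 := hps.1 1
        have h2 := hps.1 2
        have e1 : p 1 * (ε/(1-ε)) = (1 - p 2) * (ε/(1-ε)) := by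
          rw [show p 1 = 1 - p 2 by linarith]
        have e2 : (0:ℝ) ≤ p 2 * (1 - ε/(1-ε)) := mul_nonneg h2 (by linarith)
        nlinarith [e1, e2, hcpos]
      obtain ⟨haI0, hqJ0⟩ := key0 p hps h0
      rw [hγJ p hps hpneg, haI0, hqJ0]
      ring
    have hDle : D ≤ δ * D := by
      apply csSup_le (hS0ne'.image _)
      rintro y ⟨p, hp, rfl⟩
      show |γ p| ≤ δ * D
      rw [hrec p hp, abs_mul, abs_of_nonneg hδ0.le]
      exact mul_le_mul_of_nonneg_left (le_csSup hD_bdd ⟨φ p, hφS0 p hp, rfl⟩) hδ0.le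
    have hD0 : D ≤ 0 := by nlinarith
    intro p hps h0
    have h1 : |γ p| ≤ D := le_csSup hD_bdd ⟨p, ⟨hps, h0⟩, rfl⟩
    have h2 := abs_nonneg (γ p)
    exact abs_eq_zero.mp (le_antisymm (by linarith) h2)
  -- the starting point p₁
  have hp₁mem : ![2*ε, 0, 1-2*ε] ∈ stdSimplex ℝ (Fin 3) := by
    refine hmem_simplex _ (fun x => ?_) ?_
    · fin_cases x <;> norm_num <;> linarith
    · norm_num [Matrix.cons_val_two, Matrix.vecHead, Matrix.vecTail]
  have hp₁neg : (∑ ω, (![2*ε, 0, 1-2*ε] : Fin 3 → ℝ) ω * (![1, -(ε/(1-ε)), -1]) ω) < 0 := by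
    rw [hsum3]
    norm_num [Matrix.cons_val_two, Matrix.vecHead, Matrix.vecTail]
    linarith
  have hB1 : 0 < (![2*ε, 0, 1-2*ε] : Fin 3 → ℝ) 0
      - (![2*ε, 0, 1-2*ε] : Fin 3 → ℝ) 1 * (ε/(1-ε)) := by
    norm_num; linarith
  have hB2 : (![2*ε, 0, 1-2*ε] : Fin 3 → ℝ) 0
      - (![2*ε, 0, 1-2*ε] : Fin 3 → ℝ) 1 * (ε/(1-ε))
      - (![2*ε, 0, 1-2*ε] : Fin 3 → ℝ) 2 < 0 := by
    norm_num [Matrix.cons_val_two, Matrix.vecHead, Matrix.vecTail]; linarith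
  have hpi1 := hpiB _ (hksB _ hB1 hB2)
  have haI1 : aI ![1, -(ε/(1-ε)), -1] ![1,2] ![2*ε, 0, 1-2*ε] = 4*ε := by
    simp [aI, hpi1, Fin.sum_univ_three]
    ring
  have hqI1 : qI ![1, -(ε/(1-ε)), -1] ![1,2] ![2*ε, 0, 1-2*ε] = ![1/2, 0, 1/2] := by
    funext x
    rw [qI, haI1, hpi1]
    fin_cases x <;> simp <;> field_simp <;> ring
  have hqJ1 : qJ ![1, -(ε/(1-ε)), -1] ![1,2] ![2*ε, 0, 1-2*ε] = ![0, 0, 1] := by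
    have h4 : (1:ℝ) - 4*ε ≠ 0 := by intro h; nlinarith
    funext x
    rw [qJ, haI1, hpi1]
    fin_cases x <;> simp <;> field_simp <;> ring
  have hφqI : φ ![(1:ℝ)/2, 0, 1/2] = ![1/4, 1/2, 1/4] := by
    rw [hφ]
    funext x
    fin_cases x <;> simp <;> norm_num
  have hφqJ : φ ![(0:ℝ), 0, 1] = ![0, 1/2, 1/2] := by
    rw [hφ]
    funext x
    fin_cases x <;> simp <;> norm_num
  have hmemI : (![(1:ℝ)/4, 1/2, 1/4] : Fin 3 → ℝ) ∈ stdSimplex ℝ (Fin 3) := by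
    refine hmem_simplex _ (fun x => ?_) ?_ <;> first | (fin_cases x <;> norm_num) | norm_num [Matrix.cons_val_two, Matrix.vecHead, Matrix.vecTail]
  have hmemJ : (![(0:ℝ), 1/2, 1/2] : Fin 3 → ℝ) ∈ stdSimplex ℝ (Fin 3) := by
    refine hmem_simplex _ (fun x => ?_) ?_ <;> first | (fin_cases x <;> norm_num) | norm_num [Matrix.cons_val_two, Matrix.vecHead, Matrix.vecTail]
  have hγqJ : γ (φ (qJ ![1, -(ε/(1-ε)), -1] ![1,2] ![2*ε, 0, 1-2*ε])) = 0 := by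
    rw [hqJ1, hφqJ]
    exact hzero _ hmemJ (by norm_num)
  have hγqI_le : γ (φ (qI ![1, -(ε/(1-ε)), -1] ![1,2] ![2*ε, 0, 1-2*ε])) ≤ 1 := by
    rw [hqI1, hφqI]
    exact le_trans (hγleM _ hmemI) hM1
  have hγp₁ : γ ![2*ε, 0, 1-2*ε] ≤ 4*ε := by
    rw [hγJ _ hp₁mem hp₁neg, haI1, hγqJ]
    have hh : δ * γ (φ (qI ![1, -(ε/(1-ε)), -1] ![1,2] ![2*ε, 0, 1-2*ε])) ≤ δ * 1 :=
      mul_le_mul_of_nonneg_left hγqI_le hδ0.le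
    nlinarith [mul_le_mul_of_nonneg_left hh (show (0:ℝ) ≤ 4*ε by linarith)]
  refine ⟨hγp₁, ?_⟩
  intro V hVb hDPP
  obtain ⟨CV, hCV⟩ := hVb
  have measS : MeasurableSet (stdSimplex ℝ (Fin 3)) := (isClosed_stdSimplex ℝ (Fin 3)).measurableSet
  have hsumCont : Continuous fun p : Fin 3 → ℝ => ∑ ω, p ω * (![1, -(ε/(1-ε)), -1]) ω :=
    continuous_finset_sum _ fun i _ => (continuous_apply i).mul continuous_const
  have measI : MeasurableSet (invest ![1, -(ε/(1-ε)), -1]) := by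
    have heq : invest ![1, -(ε/(1-ε)), -1]
        = stdSimplex ℝ (Fin 3) ∩ (fun p : Fin 3 → ℝ => ∑ ω, p ω * (![1, -(ε/(1-ε)), -1]) ω) ⁻¹' (Set.Ici 0) := by
      ext p
      simp [invest, Set.mem_setOf_eq, Set.mem_Ici, Set.mem_inter_iff]
    rw [heq]
    exact measS.inter ((isClosed_Ici.preimage hsumCont).measurableSet)
  have hintD : ∀ (f : (Fin 3 → ℝ) → ℝ) (a : Fin 3 → ℝ), Integrable f (Measure.dirac a) :=
    fun f a => (integrable_const (f a)).congr (ae_eq_dirac f).symm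
  have hintD' : ∀ (f : (Fin 3 → ℝ) → (Fin 3 → ℝ)) (a : Fin 3 → ℝ),
      Integrable f (Measure.dirac a) :=
    fun f a => (integrable_const (f a)).congr (ae_eq_dirac f).symm
  set CV' := max CV 0 with hCV'
  have hCV'0 : 0 ≤ CV' := le_max_right _ _
  -- payoffs are uniformly bounded above
  have hBdd : ∀ p : Fin 3 → ℝ,
      BddAbove (dppPayoff ![1, -(ε/(1-ε)), -1] δ φ V '' Splittings p) := by
    intro p
    refine ⟨(1-δ) + δ * CV', ?_⟩
    rintro y ⟨μ, hμ, rfl⟩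
    obtain ⟨hprob, hμS, hbar⟩ := hμ
    haveI := hprob
    have h1 : (μ (invest ![1, -(ε/(1-ε)), -1])).toReal ≤ 1 := by
      have h := prob_le_one (μ := μ) (s := invest ![1, -(ε/(1-ε)), -1])
      simpa using ENNReal.toReal_mono ENNReal.one_ne_top h
    have h2 : |∫ q in stdSimplex ℝ (Fin 3), V (φ q) ∂μ| ≤ CV' := by
      have hb : ∀ᵐ q ∂(μ.restrict (stdSimplex ℝ (Fin 3))), ‖V (φ q)‖ ≤ CV' :=
        (ae_restrict_mem measS).mono fun q hq => by
          rw [Real.norm_eq_abs]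
          exact le_trans (hCV _ (hφmaps q hq)) (le_max_left _ _)
      have hnorm := norm_integral_le_of_norm_le_const hb
      rw [Real.norm_eq_abs] at hnorm
      refine le_trans hnorm ?_
      have hres : ((μ.restrict (stdSimplex ℝ (Fin 3))) Set.univ).toReal ≤ 1 := by
        rw [Measure.restrict_apply_univ]
        have h := prob_le_one (μ := μ) (s := stdSimplex ℝ (Fin 3))
        simpa using ENNReal.toReal_mono ENNReal.one_ne_top h
      exact mul_le_of_le_one_right hCV'0 hres
    have habs := abs_le.mp h2
    have h0 : 0 ≤ (μ (invest ![1, -(ε/(1-ε)), -1])).toReal := ENNReal.toReal_nonneg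
    unfold dppPayoff
    nlinarith [habs.2]
  -- the Dirac splitting gives V p ≥ δ V (φ p)
  have hdirac : ∀ p ∈ stdSimplex ℝ (Fin 3), δ * V (φ p) ≤ V p := by
    intro p hp
    have hμ : Measure.dirac p ∈ Splittings p :=
      ⟨Measure.dirac.isProbabilityMeasure, Measure.dirac_apply_of_mem hp,
        integral_dirac _ _⟩
    have hle : dppPayoff ![1, -(ε/(1-ε)), -1] δ φ V (Measure.dirac p) ≤ V p := by
      rw [hDPP p hp]
      exact le_csSup (hBdd p) ⟨_, hμ, rfl⟩
    refine le_trans ?_ hle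
    unfold dppPayoff
    rw [setIntegral_dirac (fun q => V (φ q)) p (stdSimplex ℝ (Fin 3)), if_pos hp]
    have h0 : 0 ≤ (Measure.dirac p (invest ![1, -(ε/(1-ε)), -1])).toReal := ENNReal.toReal_nonneg
    nlinarith
  -- V is nonnegative on the simplex
  have hV0 : ∀ p ∈ stdSimplex ℝ (Fin 3), 0 ≤ V p := by
    have hbdd : BddBelow (V '' stdSimplex ℝ (Fin 3)) :=
      ⟨-CV, by rintro y ⟨p, hp, rfl⟩; have := abs_le.mp (hCV p hp); linarith [this.1]⟩
    set D := sInf (V '' stdSimplex ℝ (Fin 3)) with hD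
    have hDle : δ * D ≤ D := by
      apply le_csInf (hsimplex_ne.image V)
      rintro y ⟨p, hp, rfl⟩
      have h1 : D ≤ V (φ p) := csInf_le hbdd ⟨φ p, hφmaps p hp, rfl⟩
      have h2 := hdirac p hp
      nlinarith
    have hD0 : 0 ≤ D := by nlinarith
    intro p hp
    exact le_trans hD0 (csInf_le hbdd ⟨p, hp, rfl⟩)
  -- the two-point splitting at φ p₁
  have humem : (![2*ε, 1-2*ε, 0] : Fin 3 → ℝ) ∈ stdSimplex ℝ (Fin 3) := by
    refine hmem_simplex _ (fun x => ?_) ?_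
    · fin_cases x <;> norm_num <;> linarith
    · norm_num [Matrix.cons_val_two, Matrix.vecHead, Matrix.vecTail]
  have hvmem : (![0, 2*ε, 1-2*ε] : Fin 3 → ℝ) ∈ stdSimplex ℝ (Fin 3) := by
    refine hmem_simplex _ (fun x => ?_) ?_
    · fin_cases x <;> norm_num <;> linarith
    · norm_num [Matrix.cons_val_two, Matrix.vecHead, Matrix.vecTail]
  have huI : (![2*ε, 1-2*ε, 0] : Fin 3 → ℝ) ∈ invest ![1, -(ε/(1-ε)), -1] := by
    refine ⟨humem, ?_⟩
    rw [hsum3]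
    norm_num [Matrix.cons_val_two, Matrix.vecHead, Matrix.vecTail]
    have he1 : (1-2*ε)*(ε/(1-ε)) = ((1-2*ε)*ε)/(1-ε) := by ring
    rw [he1, div_le_iff₀ h1ε]
    nlinarith
  have hvnotI : (![0, 2*ε, 1-2*ε] : Fin 3 → ℝ) ∉ invest ![1, -(ε/(1-ε)), -1] := by
    intro h
    have h2 := h.2
    rw [hsum3] at h2
    norm_num [Matrix.cons_val_two, Matrix.vecHead, Matrix.vecTail] at h2
    nlinarith [mul_pos (mul_pos (by linarith : (0:ℝ) < 2) hε) hcpos]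
  set μ2 : Measure (Fin 3 → ℝ) :=
    (2⁻¹ : ENNReal) • Measure.dirac ![2*ε, 1-2*ε, 0] + (2⁻¹ : ENNReal) • Measure.dirac ![0, 2*ε, 1-2*ε]
    with hμ2def
  have hμ2mem : μ2 ∈ Splittings (φ ![2*ε, 0, 1-2*ε]) := by
    refine ⟨⟨?_⟩, ?_, ?_⟩
    · simp [hμ2def, ENNReal.inv_two_add_inv_two]
    · simp [hμ2def, Measure.dirac_apply_of_mem humem, Measure.dirac_apply_of_mem hvmem,
        ENNReal.inv_two_add_inv_two]
    · rw [hμ2def]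
      rw [integral_add_measure (((hintD' (fun q => q) _)).smul_measure (by norm_num))
        (((hintD' (fun q => q) _)).smul_measure (by norm_num)),
        integral_smul_measure, integral_smul_measure, integral_dirac, integral_dirac]
      rw [hφ]
      funext x
      simp only [Pi.add_apply, Pi.smul_apply, Pi.sub_apply, smul_eq_mul]
      fin_cases x <;> norm_num [ENNReal.toReal_inv] <;> ring
  have hVx : (1-δ)/2 ≤ V (φ ![2*ε, 0, 1-2*ε]) := by
    have hle : dppPayoff ![1, -(ε/(1-ε)), -1] δ φ V μ2 ≤ V (φ ![2*ε, 0, 1-2*ε]) := by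
      rw [hDPP _ (hφmaps _ hp₁mem)]
      exact le_csSup (hBdd _) ⟨μ2, hμ2mem, rfl⟩
    refine le_trans ?_ hle
    unfold dppPayoff
    have hmeasI_val : μ2 (invest ![1, -(ε/(1-ε)), -1]) = 2⁻¹ := by
      rw [hμ2def, Measure.add_apply, Measure.smul_apply, Measure.smul_apply,
        Measure.dirac_apply_of_mem huI, Measure.dirac_apply' _ measI,
        Set.indicator_of_notMem hvnotI]
      simp
    have hIntVal : ∫ q in stdSimplex ℝ (Fin 3), V (φ q) ∂μ2
        = 2⁻¹ * V (φ ![2*ε, 1-2*ε, 0]) + 2⁻¹ * V (φ ![0, 2*ε, 1-2*ε]) := by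
      rw [hμ2def, Measure.restrict_add, Measure.restrict_smul, Measure.restrict_smul,
        MeasureTheory.restrict_dirac' measS, MeasureTheory.restrict_dirac' measS,
        if_pos humem, if_pos hvmem]
      rw [integral_add_measure (((hintD (fun q => V (φ q)) _)).smul_measure (by norm_num))
        (((hintD (fun q => V (φ q)) _)).smul_measure (by norm_num)),
        integral_smul_measure, integral_smul_measure, integral_dirac, integral_dirac]
      norm_num [ENNReal.toReal_inv]
    rw [hmeasI_val, hIntVal]
    have h1 := hV0 _ (hφmaps _ humem)
    have h2 := hV0 _ (hφmaps _ hvmem)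
    have htr : ((2:ENNReal)⁻¹).toReal = 2⁻¹ := by simp
    rw [htr]
    nlinarith
  have hVp₁ : δ * (1 - δ) / 2 ≤ V ![2*ε, 0, 1-2*ε] := by
    have h := hdirac _ hp₁mem
    nlinarith [hVx, hδ0]
  exact ⟨hVp₁, by nlinarith [hγp₁, hVp₁]⟩

end
end
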